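/- arXiv:1307.6809 — 10 statements merged into one kernel-verified Lean document; each statement's English description precedes it below -/
import Mathlib

section
/- Let (f, μ) be a Δ-feasible pair for some Δ > 0. Define f̃ by setting f̃_{ij} = 0 on every non-tight arc (arcs with γ^μ_{ij} < 1) and f̃_{ij} = f_{ij} otherwise. Then f̃ is a feasible generalized flow, μ is a conservative labeling for f̃, and the total relabeled surplus satisfies Ex^μ(f̃) ≤ Ex^μ(f) + |F^μ| Δ, where F^μ is the set of non-tight arcs. -/
/-- Excess of node `i` for flow `f` with gains `γ` and demands `b`. -/
def excess {V : Type*} [Fintype V] [DecidableEq V] (E : Finset (V × V))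
    (γ : V × V → ℝ) (b : V → ℝ) (f : V × V → ℝ) (i : V) : ℝ :=
  (∑ a ∈ E.filter (fun a => a.2 = i), γ a * f a)
    - (∑ a ∈ E.filter (fun a => a.1 = i), f a) - b i

/-- Flow entering `i` on non-tight arcs (arcs `a ∈ E` with `γ a * μ a.1 < μ a.2`,
i.e. relabeled gain `< 1`). -/
noncomputable def reserve {V : Type*} [Fintype V] [DecidableEq V] (E : Finset (V × V))
    (γ : V × V → ℝ) (μ : V → ℝ) (f : V × V → ℝ) (i : V) : ℝ :=
  ∑ a ∈ E.filter (fun a => a.2 = i ∧ γ a * μ a.1 < μ a.2), γ a * f a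

/-- from a Δ-feasible pair (f,μ), zeroing the flow on all non-tight
arcs yields a feasible generalized flow f̃ for which μ is conservative, and
Ex^μ(f̃) ≤ Ex^μ(f) + |F^μ|·Δ. -/
theorem zero_nontight_conservative {V : Type*} [Fintype V] [DecidableEq V]
    (E : Finset (V × V)) (γ : V × V → ℝ) (b : V → ℝ) (t : V)
    (f : V × V → ℝ) (μ : V → ℝ) (Δ : ℝ) (hΔ : 0 < Δ)
    (hγ : ∀ a ∈ E, 0 < γ a)
    (hf0 : ∀ a, 0 ≤ f a) (hfE : ∀ a ∉ E, f a = 0)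
    -- Δ-feasibility of (f, μ):
    (hμt : μ t = 1) (hμpos : ∀ i, i ≠ t → 0 < μ i)
    (hdual : ∀ a ∈ E, γ a * μ a.1 ≤ μ a.2)
    (hfat : ∀ a ∈ E, Δ < f a / μ a.1 → μ a.2 ≤ γ a * μ a.1)
    (hres : ∀ i, i ≠ t → reserve E γ μ f i ≤ excess E γ b f i)
    -- the truncated flow f̃
    (ft : V × V → ℝ)
    (hft : ∀ a, ft a = if γ a * μ a.1 < μ a.2 then 0 else f a) :
    (∀ i, i ≠ t → 0 ≤ excess E γ b ft i) ∧
    (∀ a ∈ E, γ a * μ a.1 ≤ μ a.2 ∧ (0 < ft a → γ a * μ a.1 = μ a.2)) ∧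
    (∑ i ∈ Finset.univ.erase t, excess E γ b ft i / μ i)
      ≤ (∑ i ∈ Finset.univ.erase t, excess E γ b f i / μ i)
        + ((E.filter (fun a => γ a * μ a.1 < μ a.2)).card : ℝ) * Δ := by

  classical
  have hμ : ∀ i, 0 < μ i := by
    intro i
    by_cases h : i = t
    · rw [h, hμt]; norm_num
    · exact hμpos i h
  have hres0 : ∀ i, 0 ≤ reserve E γ μ f i := by
    intro i
    refine Finset.sum_nonneg fun a ha => ?_
    exact mul_nonneg (hγ a (Finset.mem_filter.mp ha).1).le (hf0 a)
  have hkey : ∀ i, excess E γ b ft i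
      = excess E γ b f i - reserve E γ μ f i
        + ∑ a ∈ (E.filter (fun a => γ a * μ a.1 < μ a.2)).filter (fun a => a.1 = i), f a := by
    intro i
    have h1 : ∑ a ∈ E.filter (fun a => a.2 = i), γ a * ft a
        = (∑ a ∈ E.filter (fun a => a.2 = i), γ a * f a) - reserve E γ μ f i := by
      have hc : ∀ a ∈ E.filter (fun a => a.2 = i),
          γ a * ft a = γ a * f a - (if γ a * μ a.1 < μ a.2 then γ a * f a else 0) := by
        intro a _
        rw [hft a]; split <;> simp
      rw [Finset.sum_congr rfl hc, Finset.sum_sub_distrib]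
      congr 1
      rw [reserve, ← Finset.sum_filter, Finset.filter_filter]
    have h2 : ∑ a ∈ E.filter (fun a => a.1 = i), ft a
        = (∑ a ∈ E.filter (fun a => a.1 = i), f a)
          - ∑ a ∈ (E.filter (fun a => γ a * μ a.1 < μ a.2)).filter (fun a => a.1 = i), f a := by
      have hc : ∀ a ∈ E.filter (fun a => a.1 = i),
          ft a = f a - (if γ a * μ a.1 < μ a.2 then f a else 0) := by
        intro a _
        rw [hft a]; split <;> simp
      rw [Finset.sum_congr rfl hc, Finset.sum_sub_distrib]
      congr 1
      rw [← Finset.sum_filter, Finset.filter_filter, Finset.filter_filter]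
      apply Finset.sum_congr _ (fun _ _ => rfl)
      ext a
      simp [and_comm]
    unfold excess
    rw [h1, h2]
    ring
  refine ⟨?_, ?_, ?_⟩
  · intro i hi
    have h1 := hres i hi
    have h2 : 0 ≤ ∑ a ∈ (E.filter (fun a => γ a * μ a.1 < μ a.2)).filter (fun a => a.1 = i), f a :=
      Finset.sum_nonneg fun a _ => hf0 a
    rw [hkey i]
    linarith
  · intro a ha
    refine ⟨hdual a ha, fun hpos => ?_⟩
    by_contra hne
    have hlt : γ a * μ a.1 < μ a.2 := lt_of_le_of_ne (hdual a ha) hne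
    rw [hft a, if_pos hlt] at hpos
    exact lt_irrefl 0 hpos
  · set F := E.filter (fun a => γ a * μ a.1 < μ a.2) with hF
    have step1 : ∀ i ∈ Finset.univ.erase t,
        excess E γ b ft i / μ i ≤ excess E γ b f i / μ i
          + (∑ a ∈ F.filter (fun a => a.1 = i), f a) / μ i := by
      intro i _
      rw [hkey i, ← add_div]
      exact div_le_div_of_nonneg_right (by linarith [hres0 i]) (hμ i).le
    have step2 : ∀ i, (∑ a ∈ F.filter (fun a => a.1 = i), f a) / μ i
        = ∑ a ∈ F.filter (fun a => a.1 = i), f a / μ a.1 := by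
      intro i
      rw [Finset.sum_div]
      exact Finset.sum_congr rfl fun a ha => by rw [(Finset.mem_filter.mp ha).2]
    have hnn : ∀ i ∈ Finset.univ, 0 ≤ (∑ a ∈ F.filter (fun a => a.1 = i), f a) / μ i := by
      intro i _
      exact div_nonneg (Finset.sum_nonneg fun a _ => hf0 a) (hμ i).le
    calc ∑ i ∈ Finset.univ.erase t, excess E γ b ft i / μ i
        ≤ ∑ i ∈ Finset.univ.erase t, (excess E γ b f i / μ i
            + (∑ a ∈ F.filter (fun a => a.1 = i), f a) / μ i) := Finset.sum_le_sum step1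
      _ = (∑ i ∈ Finset.univ.erase t, excess E γ b f i / μ i)
          + ∑ i ∈ Finset.univ.erase t, (∑ a ∈ F.filter (fun a => a.1 = i), f a) / μ i :=
            Finset.sum_add_distrib
      _ ≤ (∑ i ∈ Finset.univ.erase t, excess E γ b f i / μ i)
          + ∑ i ∈ Finset.univ, (∑ a ∈ F.filter (fun a => a.1 = i), f a) / μ i := by
            exact add_le_add (le_refl _) (Finset.sum_le_sum_of_subset_of_nonneg
              (Finset.erase_subset _ _) (fun i hi _ => hnn i hi))
      _ = (∑ i ∈ Finset.univ.erase t, excess E γ b f i / μ i)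
          + ∑ a ∈ F, f a / μ a.1 := by
            congr 1
            rw [Finset.sum_congr rfl fun i _ => step2 i]
            exact Finset.sum_fiberwise F (fun a => a.1) (fun a => f a / μ a.1)
      _ ≤ (∑ i ∈ Finset.univ.erase t, excess E γ b f i / μ i) + (F.card : ℝ) * Δ := by
            gcongr
            calc ∑ a ∈ F, f a / μ a.1 ≤ ∑ _a ∈ F, Δ := by
                  apply Finset.sum_le_sum
                  intro a ha
                  obtain ⟨haE, hlt⟩ := Finset.mem_filter.mp ha
                  by_contra h
                  exact absurd (hfat a haE (lt_of_not_ge h)) (not_le.mpr hlt)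
              _ = (F.card : ℝ) * Δ := by rw [Finset.sum_const, nsmul_eq_mul]
end

section
/- Consider a feasible instance of the uncapacitated generalized flow maximization problem. The objective is bounded if and only if there is no directed cycle C ⊆ E with ∏_{e∈C} γ_e > 1 together with a directed path P ⊆ E from a node of C to the sink t. -/
set_option linter.unusedSectionVars false

namespace GenFlow

variable {V : Type*}

/-- consecutive edges of a vertex list -/
def edges : List V → List (V × V)
  | [] => []
  | [_] => []
  | a :: b :: l => (a, b) :: edges (b :: l)

@[simp] lemma edges_nil : edges ([] : List V) = [] := rfl
@[simp] lemma edges_single (a : V) : edges [a] = [] := rfl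
@[simp] lemma edges_cons_cons (a b : V) (l : List V) :
    edges (a :: b :: l) = (a, b) :: edges (b :: l) := rfl

lemma edges_eq_zip : ∀ l : List V, edges l = l.zip l.tail
  | [] => rfl
  | [_] => rfl
  | a :: b :: l => by rw [edges_cons_cons, edges_eq_zip (b :: l)]; rfl

lemma zip_append_last : ∀ (l : List V) (a c : V),
    (a :: l).zip (l ++ [c]) = edges (a :: (l ++ [c]))
  | [], a, c => rfl
  | b :: l, a, c => by
    simp only [List.cons_append, List.zip_cons_cons, edges_cons_cons]
    rw [zip_append_last l b c]

lemma zip_rotate_eq_edges (a : V) (l : List V) :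
    (a :: l).zip ((a :: l).rotate 1) = edges (a :: (l ++ [a])) := by
  rw [show (1:ℕ) = 0 + 1 from rfl, List.rotate_cons_succ, List.rotate_zero,
    zip_append_last]

lemma edges_append_cons (v : V) : ∀ (p q : List V),
    edges (p ++ v :: q) = edges (p ++ [v]) ++ edges (v :: q)
  | [], q => rfl
  | [a], q => rfl
  | a :: b :: p, q => by
    have := edges_append_cons v (b :: p) q
    simp only [List.cons_append, edges_cons_cons] at this ⊢
    rw [this]

/-- gain of a walk -/
def gain (γ : V × V → ℝ) (l : List V) : ℝ := ((edges l).map γ).prod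

@[simp] lemma gain_single (γ : V × V → ℝ) (a : V) : gain γ [a] = 1 := by
  rw [gain]; simp

lemma gain_cons_cons (γ : V × V → ℝ) (a b : V) (l : List V) :
    gain γ (a :: b :: l) = γ (a, b) * gain γ (b :: l) := by
  rw [gain, gain]; simp

lemma gain_append_cons (γ : V × V → ℝ) (v : V) (p q : List V) :
    gain γ (p ++ v :: q) = gain γ (p ++ [v]) * gain γ (v :: q) := by
  rw [gain, gain, gain, edges_append_cons]; simp

lemma gain_pos {E : Finset (V × V)} {γ : V × V → ℝ} (hγ : ∀ a ∈ E, 0 < γ a)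
    {l : List V} (hl : ∀ a ∈ edges l, a ∈ E) : 0 < gain γ l := by
  apply List.prod_pos
  intro x hx
  obtain ⟨a, ha, rfl⟩ := List.mem_map.1 hx
  exact hγ a (hl a ha)

lemma nodup_closed_eq_single {l : List V} {v : V} (hn : l.Nodup)
    (hh : l.head? = some v) (hl : l.getLast? = some v) : l = [v] := by
  cases l with
  | nil => simp at hh
  | cons a l =>
    have ha : a = v := by simpa using hh
    subst ha
    cases l with
    | nil => rfl
    | cons b l =>
      exfalso
      rw [List.getLast?_cons_cons] at hl
      obtain ⟨h, h2⟩ := List.mem_getLast?_eq_getLast hl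
      have : a ∈ b :: l := h2 ▸ List.getLast_mem h
      simp only [List.nodup_cons] at hn
      exact hn.1 this

lemma exists_dup_decomp : ∀ {l : List V}, ¬ l.Nodup →
    ∃ (xs : List V) (v : V) (ys zs : List V), l = xs ++ v :: ys ++ v :: zs := by
  intro l
  induction l with
  | nil => intro h; exact absurd List.nodup_nil h
  | cons a l ih =>
    intro h
    rw [List.nodup_cons] at h
    push_neg at h
    by_cases ha : a ∈ l
    · obtain ⟨ys, zs, rfl⟩ := List.append_of_mem ha
      exact ⟨[], a, ys, zs, rfl⟩
    · obtain ⟨xs, v, ys, zs, rfl⟩ := ih (h ha)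
      exact ⟨a :: xs, v, ys, zs, rfl⟩

def NoBadCycle [Fintype V] [DecidableEq V] (E : Finset (V × V)) (γ : V × V → ℝ) (t : V) : Prop :=
  ¬ ∃ (vs us : List V) (v : V),
      vs ≠ [] ∧
      (∀ a ∈ vs.zip (vs.rotate 1), a ∈ E) ∧
      1 < ((vs.zip (vs.rotate 1)).map γ).prod ∧
      v ∈ vs ∧
      us.head? = some v ∧ us.getLast? = some t ∧
      (∀ a ∈ us.zip us.tail, a ∈ E)

lemma shorten [Fintype V] [DecidableEq V] {E : Finset (V × V)} {γ : V × V → ℝ} {t : V}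
    (hγ : ∀ a ∈ E, 0 < γ a) (H : NoBadCycle E γ t) :
    ∀ (n : ℕ) (ws : List V), ws.length ≤ n → (∀ a ∈ edges ws, a ∈ E) →
      ws.getLast? = some t →
      ∃ ws' : List V, (∀ a ∈ edges ws', a ∈ E) ∧ ws'.head? = ws.head? ∧
        ws'.getLast? = some t ∧ ws'.Nodup ∧ gain γ ws ≤ gain γ ws' := by
  intro n
  induction n with
  | zero =>
    intro ws hlen _ hlast
    obtain rfl := List.length_eq_zero_iff.1 (Nat.le_zero.1 hlen)
    simp at hlast
  | succ n ih =>
    intro ws hlen hE hlast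
    by_cases hnd : ws.Nodup
    · exact ⟨ws, hE, rfl, hlast, hnd, le_refl _⟩
    obtain ⟨xs, v, ys, zs, rfl⟩ := exists_dup_decomp hnd
    -- edge decompositions
    have E1 : edges (xs ++ v :: (ys ++ v :: zs))
        = edges (xs ++ [v]) ++ edges (v :: (ys ++ v :: zs)) :=
      edges_append_cons v xs (ys ++ v :: zs)
    have E2 : edges (v :: (ys ++ v :: zs)) = edges ((v :: ys) ++ [v]) ++ edges (v :: zs) := by
      have := edges_append_cons v (v :: ys) zs
      simpa using this
    have hassoc : xs ++ v :: ys ++ v :: zs = xs ++ v :: (ys ++ v :: zs) := by simp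
    have hEall : ∀ a ∈ edges (xs ++ v :: (ys ++ v :: zs)), a ∈ E := by
      rw [← hassoc]; exact hE
    have hlast' : (v :: zs).getLast? = some t := by
      rw [show xs ++ v :: ys ++ v :: zs = (xs ++ v :: ys) ++ v :: zs by simp,
        List.getLast?_append_cons] at hlast
      exact hlast
    have hcycE : ∀ a ∈ edges ((v :: ys) ++ [v]), a ∈ E := by
      intro a ha
      apply hEall
      rw [E1, E2]
      simp only [List.mem_append]
      right; left; simpa using ha
    have hpathE : ∀ a ∈ edges (v :: zs), a ∈ E := by
      intro a ha
      apply hEall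
      rw [E1, E2]
      simp only [List.mem_append]
      right; right; exact ha
    -- the cycle gain is at most 1
    have hGc : gain γ ((v :: ys) ++ [v]) ≤ 1 := by
      by_contra hgt
      push_neg at hgt
      apply H
      refine ⟨v :: ys, v :: zs, v, by simp, ?_, ?_, by simp, rfl, hlast', ?_⟩
      · intro a ha
        rw [zip_rotate_eq_edges] at ha
        exact hcycE a (by simpa using ha)
      · rw [zip_rotate_eq_edges]
        simpa [gain] using hgt
      · intro a ha
        rw [← edges_eq_zip] at ha
        exact hpathE a (by simpa using ha)
    -- shorter walk
    have hlen'' : (xs ++ v :: zs).length ≤ n := by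
      have := hlen
      rw [hassoc] at this
      simp only [List.length_append, List.length_cons] at this ⊢
      omega
    have hE'' : ∀ a ∈ edges (xs ++ v :: zs), a ∈ E := by
      intro a ha
      rw [edges_append_cons] at ha
      rcases List.mem_append.1 ha with h | h
      · apply hEall; rw [E1]; exact List.mem_append.2 (Or.inl h)
      · exact hpathE a h
    have hlast'' : (xs ++ v :: zs).getLast? = some t := by
      rw [List.getLast?_append_cons]; exact hlast'
    have hgain : gain γ (xs ++ v :: ys ++ v :: zs) ≤ gain γ (xs ++ v :: zs) := by
      have gA : gain γ (xs ++ v :: (ys ++ v :: zs))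
          = gain γ (xs ++ [v]) * gain γ (v :: (ys ++ v :: zs)) :=
        gain_append_cons γ v xs (ys ++ v :: zs)
      have gB : gain γ (v :: (ys ++ v :: zs))
          = gain γ ((v :: ys) ++ [v]) * gain γ (v :: zs) := by
        simpa using gain_append_cons γ v (v :: ys) zs
      have gC : gain γ (xs ++ v :: zs) = gain γ (xs ++ [v]) * gain γ (v :: zs) :=
        gain_append_cons γ v xs zs
      rw [hassoc, gA, gB, gC]
      have h1 : 0 < gain γ (xs ++ [v]) := gain_pos hγ (by
        intro a ha; apply hEall; rw [E1]; exact List.mem_append.2 (Or.inl ha))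
      have h2 : 0 < gain γ (v :: zs) := gain_pos hγ hpathE
      have h3 : gain γ ((v :: ys) ++ [v]) * gain γ (v :: zs) ≤ gain γ (v :: zs) := by
        nlinarith [hGc, h2]
      nlinarith [h1, h3]
    obtain ⟨ws', hw1, hw2, hw3, hw4, hw5⟩ := ih (xs ++ v :: zs) hlen'' hE'' hlast''
    refine ⟨ws', hw1, ?_, hw3, hw4, le_trans hgain hw5⟩
    rw [hw2]
    cases xs <;> simp

section
variable [Fintype V] [DecidableEq V]

def mu0 (t : V) : V → ℝ := fun i => if i = t then 1 else 0

def stepmu (E : Finset (V × V)) (γ : V × V → ℝ) (t : V) (μ : V → ℝ) : V → ℝ :=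
  fun i => (E.filter (fun a => a.1 = i)).fold max (mu0 t i) (fun a => γ a * μ a.2)

def muk (E : Finset (V × V)) (γ : V × V → ℝ) (t : V) (k : ℕ) : V → ℝ :=
  (stepmu E γ t)^[k] (mu0 t)

variable {E : Finset (V × V)} {γ : V × V → ℝ} {t : V}

lemma muk_succ (k : ℕ) : muk E γ t (k + 1) = stepmu E γ t (muk E γ t k) :=
  Function.iterate_succ_apply' _ _ _

@[simp] lemma muk_zero : muk E γ t 0 = mu0 t := rfl

lemma mu0_nonneg (i : V) : 0 ≤ mu0 t i := by unfold mu0; positivity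

lemma mu0_le_stepmu (μ : V → ℝ) (i : V) : mu0 t i ≤ stepmu E γ t μ i :=
  (Finset.le_fold_max _).2 (Or.inl le_rfl)

lemma stepmu_mono (hγ : ∀ a ∈ E, 0 < γ a) {μ μ' : V → ℝ} (h : ∀ i, μ i ≤ μ' i) (i : V) :
    stepmu E γ t μ i ≤ stepmu E γ t μ' i := by
  rw [stepmu, Finset.fold_max_le]
  refine ⟨mu0_le_stepmu μ' i, fun a ha => ?_⟩
  have haE : a ∈ E := (Finset.mem_filter.1 ha).1
  calc γ a * μ a.2 ≤ γ a * μ' a.2 :=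
        mul_le_mul_of_nonneg_left (h a.2) (le_of_lt (hγ a haE))
    _ ≤ stepmu E γ t μ' i := (Finset.le_fold_max _).2 (Or.inr ⟨a, ha, le_rfl⟩)

lemma muk_le_succ (hγ : ∀ a ∈ E, 0 < γ a) : ∀ (k : ℕ) (i : V),
    muk E γ t k i ≤ muk E γ t (k + 1) i := by
  intro k
  induction k with
  | zero => intro i; rw [muk_succ]; exact mu0_le_stepmu _ i
  | succ k ih =>
    intro i
    rw [muk_succ, muk_succ]
    exact stepmu_mono hγ ih i

lemma muk_le_muk (hγ : ∀ a ∈ E, 0 < γ a) {k m : ℕ} (h : k ≤ m) (i : V) :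
    muk E γ t k i ≤ muk E γ t m i := by
  induction m with
  | zero => obtain rfl : k = 0 := Nat.le_zero.1 h; exact le_rfl
  | succ m ih =>
    rcases Nat.lt_or_ge k (m+1) with h' | h'
    · exact le_trans (ih (by omega)) (muk_le_succ hγ m i)
    · have : k = m + 1 := by omega
      subst this; rfl

lemma muk_nonneg (hγ : ∀ a ∈ E, 0 < γ a) (k : ℕ) (i : V) : 0 ≤ muk E γ t k i :=
  le_trans (mu0_nonneg i) (muk_le_muk hγ (Nat.zero_le k) i)

lemma one_le_muk_t (hγ : ∀ a ∈ E, 0 < γ a) (k : ℕ) : 1 ≤ muk E γ t k t := by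
  have := muk_le_muk (t := t) hγ (Nat.zero_le k) t
  simpa [mu0] using this

/-- (a) every walk to t has gain at most muk -/
lemma gain_le_muk (hγ : ∀ a ∈ E, 0 < γ a) :
    ∀ (l : List V) (k : ℕ) (i : V), l.head? = some i → l.getLast? = some t →
      l.length ≤ k + 1 → (∀ a ∈ edges l, a ∈ E) → gain γ l ≤ muk E γ t k i := by
  intro l
  induction l with
  | nil => intro k i hi; simp at hi
  | cons a l ih =>
    intro k i hi hlast hlen hE
    obtain rfl : i = a := by simpa using hi.symm
    cases l with
    | nil =>
      have hit : i = t := by simpa using hlast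
      rw [hit, gain_single]
      exact one_le_muk_t hγ k
    | cons b l' =>
      cases k with
      | zero => simp only [List.length_cons] at hlen; omega
      | succ k' =>
        have hlen' : (b :: l').length ≤ k' + 1 := by
          simp at hlen ⊢; omega
        have hlast' : (b :: l').getLast? = some t := by
          rwa [List.getLast?_cons_cons] at hlast
        have hE' : ∀ a ∈ edges (b :: l'), a ∈ E := fun a ha => hE a (by simp [ha])
        have h1 : gain γ (b :: l') ≤ muk E γ t k' b :=
          ih k' b rfl hlast' hlen' hE'
        have hib : (i, b) ∈ E := hE (i, b) (by simp)
        calc gain γ (i :: b :: l') = γ (i, b) * gain γ (b :: l') :=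
              gain_cons_cons γ i b l'
          _ ≤ γ (i, b) * muk E γ t k' b :=
              mul_le_mul_of_nonneg_left h1 (le_of_lt (hγ _ hib))
          _ ≤ muk E γ t (k' + 1) i := by
              rw [muk_succ]
              exact (Finset.le_fold_max _).2
                (Or.inr ⟨(i, b), Finset.mem_filter.2 ⟨hib, rfl⟩, le_rfl⟩)

/-- (b) muk is witnessed by a walk (or is nonpositive) -/
lemma muk_witness (hγ : ∀ a ∈ E, 0 < γ a) : ∀ (k : ℕ) (i : V),
    muk E γ t k i ≤ 0 ∨ ∃ l : List V, l.head? = some i ∧ l.getLast? = some t ∧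
      l.length ≤ k + 1 ∧ (∀ a ∈ edges l, a ∈ E) ∧ muk E γ t k i ≤ gain γ l := by
  intro k
  induction k with
  | zero =>
    intro i
    by_cases hit : i = t
    · exact Or.inr ⟨[i], rfl, by simp [hit], by simp, by simp, by simp [mu0, hit]⟩
    · left; simp [mu0, hit]
  | succ k ih =>
    intro i
    have hfold : muk E γ t (k+1) i
        ≤ (E.filter (fun a => a.1 = i)).fold max (mu0 t i) (fun a => γ a * muk E γ t k a.2) := by
      rw [muk_succ]; rfl
    rcases (Finset.le_fold_max _).1 hfold with h | ⟨a, ha, hle⟩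
    · by_cases hit : i = t
      · exact Or.inr ⟨[i], rfl, by simp [hit], by simp, by simp,
          by simpa [mu0, hit] using h⟩
      · left; simpa [mu0, hit] using h
    · have haE : a ∈ E := (Finset.mem_filter.1 ha).1
      have ha1 : a.1 = i := (Finset.mem_filter.1 ha).2
      rcases ih a.2 with h0 | ⟨l, hl1, hl2, hl3, hl4, hl5⟩
      · left
        calc muk E γ t (k+1) i ≤ γ a * muk E γ t k a.2 := hle
          _ ≤ 0 := mul_nonpos_of_nonneg_of_nonpos (le_of_lt (hγ a haE)) h0
      · cases l with
        | nil => simp at hl1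
        | cons c l' =>
          obtain rfl : c = a.2 := by simpa using hl1
          refine Or.inr ⟨i :: a.2 :: l', rfl, ?_, ?_, ?_, ?_⟩
          · rwa [List.getLast?_cons_cons]
          · simp at hl3 ⊢; omega
          · intro e he
            rw [edges_cons_cons] at he
            rcases List.mem_cons.1 he with rfl | he'
            · rwa [show (i, a.2) = a by rw [← ha1]]
            · exact hl4 e he'
          · calc muk E γ t (k+1) i ≤ γ a * muk E γ t k a.2 := hle
              _ ≤ γ a * gain γ (a.2 :: l') :=
                  mul_le_mul_of_nonneg_left hl5 (le_of_lt (hγ a haE))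
              _ = gain γ (i :: a.2 :: l') := by
                  rw [gain_cons_cons, ← ha1]

def exc0 (E : Finset (V × V)) (γ : V × V → ℝ) (g : V × V → ℝ) (i : V) : ℝ :=
  (∑ a ∈ E.filter (fun a => a.2 = i), γ a * g a)
    - (∑ a ∈ E.filter (fun a => a.1 = i), g a)

variable {E : Finset (V × V)} {γ : V × V → ℝ} {b : V → ℝ} {t : V}

lemma sum_mul_comb (s : Finset (V × V)) (c f g : V × V → ℝ) (lam : ℝ) :
    ∑ a ∈ s, c a * (f a + lam * g a)
      = ∑ a ∈ s, c a * f a + lam * ∑ a ∈ s, c a * g a := by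
  rw [Finset.mul_sum, ← Finset.sum_add_distrib]
  exact Finset.sum_congr rfl fun a _ => by ring

lemma excess_linear (f g : V × V → ℝ) (lam : ℝ) (i : V) :
    excess E γ b (fun a => f a + lam * g a) i
      = excess E γ b f i + lam * exc0 E γ g i := by
  unfold excess exc0
  have h1 := sum_mul_comb (E.filter (fun a => a.2 = i)) γ f g lam
  have h2 := sum_mul_comb (E.filter (fun a => a.1 = i)) (fun _ => 1) f g lam
  simp only [one_mul] at h2
  rw [h1, h2]
  ring

lemma exc0_add (g1 g2 : V × V → ℝ) (i : V) :
    exc0 E γ (fun a => g1 a + g2 a) i = exc0 E γ g1 i + exc0 E γ g2 i := by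
  unfold exc0
  simp only [mul_add, Finset.sum_add_distrib]
  ring

/-- key summation identity -/
lemma key_identity (μ : V → ℝ) (f : V × V → ℝ) :
    ∑ i, μ i * excess E γ b f i
      = (∑ a ∈ E, (γ a * μ a.2 - μ a.1) * f a) - ∑ i, μ i * b i := by
  unfold excess
  have hA : ∑ i, ∑ a ∈ E.filter (fun a => a.2 = i), μ a.2 * (γ a * f a)
      = ∑ a ∈ E, μ a.2 * (γ a * f a) :=
    Finset.sum_fiberwise_of_maps_to (fun a _ => Finset.mem_univ a.2) _
  have hB : ∑ i, ∑ a ∈ E.filter (fun a => a.1 = i), μ a.1 * f a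
      = ∑ a ∈ E, μ a.1 * f a :=
    Finset.sum_fiberwise_of_maps_to (fun a _ => Finset.mem_univ a.1) _
  have hA' : ∀ i, ∑ a ∈ E.filter (fun a => a.2 = i), μ a.2 * (γ a * f a)
      = μ i * ∑ a ∈ E.filter (fun a => a.2 = i), γ a * f a := by
    intro i
    rw [Finset.mul_sum]
    refine Finset.sum_congr rfl fun a ha => ?_
    rw [(Finset.mem_filter.1 ha).2]
  have hB' : ∀ i, ∑ a ∈ E.filter (fun a => a.1 = i), μ a.1 * f a
      = μ i * ∑ a ∈ E.filter (fun a => a.1 = i), f a := by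
    intro i
    rw [Finset.mul_sum]
    refine Finset.sum_congr rfl fun a ha => ?_
    rw [(Finset.mem_filter.1 ha).2]
  calc ∑ i, μ i * ((∑ a ∈ E.filter (fun a => a.2 = i), γ a * f a)
          - (∑ a ∈ E.filter (fun a => a.1 = i), f a) - b i)
      = ∑ i, (μ i * (∑ a ∈ E.filter (fun a => a.2 = i), γ a * f a)
          - μ i * (∑ a ∈ E.filter (fun a => a.1 = i), f a) - μ i * b i) := by
        exact Finset.sum_congr rfl fun i _ => by ring
    _ = (∑ i, μ i * (∑ a ∈ E.filter (fun a => a.2 = i), γ a * f a))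
          - (∑ i, μ i * (∑ a ∈ E.filter (fun a => a.1 = i), f a)) - ∑ i, μ i * b i := by
        rw [Finset.sum_sub_distrib, Finset.sum_sub_distrib]
    _ = (∑ a ∈ E, μ a.2 * (γ a * f a)) - (∑ a ∈ E, μ a.1 * f a) - ∑ i, μ i * b i := by
        rw [← hA, ← hB]
        congr 2
        · exact Finset.sum_congr rfl fun i _ => (hA' i).symm
        · exact Finset.sum_congr rfl fun i _ => (hB' i).symm
    _ = (∑ a ∈ E, (γ a * μ a.2 - μ a.1) * f a) - ∑ i, μ i * b i := by
        rw [← Finset.sum_sub_distrib]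
        congr 1
        exact Finset.sum_congr rfl fun a _ => by ring

lemma excess_t_le (μ : V → ℝ) (hμ0 : ∀ i, 0 ≤ μ i) (hμt : μ t = 1)
    (hbell : ∀ a ∈ E, γ a * μ a.2 ≤ μ a.1) (f : V × V → ℝ) (hf : ∀ a, 0 ≤ f a)
    (hex : ∀ i, i ≠ t → 0 ≤ excess E γ b f i) :
    excess E γ b f t ≤ -∑ i, μ i * b i := by
  have hsum : ∑ i, μ i * excess E γ b f i ≤ -∑ i, μ i * b i := by
    rw [key_identity]
    have h0 : ∑ a ∈ E, (γ a * μ a.2 - μ a.1) * f a ≤ 0 := by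
      apply Finset.sum_nonpos
      intro a ha
      have h1 : γ a * μ a.2 - μ a.1 ≤ 0 := by linarith [hbell a ha]
      nlinarith [hf a]
    linarith
  have hsplit : excess E γ b f t + ∑ i ∈ Finset.univ.erase t, μ i * excess E γ b f i
      = ∑ i, μ i * excess E γ b f i := by
    have := Finset.add_sum_erase Finset.univ (fun i => μ i * excess E γ b f i)
      (Finset.mem_univ t)
    rw [← this, hμt, one_mul]
  have hrest : 0 ≤ ∑ i ∈ Finset.univ.erase t, μ i * excess E γ b f i := by
    apply Finset.sum_nonneg
    intro i hi
    exact mul_nonneg (hμ0 i) (hex i (Finset.mem_erase.1 hi).1)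
  linarith

def pump (γ : V × V → ℝ) : List (V × V) → ℝ → (V × V → ℝ)
  | [], _ => fun _ => 0
  | e :: l, w => fun a => (if a = e then w else 0) + pump γ l (γ e * w) a

variable {E : Finset (V × V)} {γ : V × V → ℝ}

lemma pump_nonneg (hγ : ∀ a ∈ E, 0 < γ a) :
    ∀ (l : List (V × V)), (∀ e ∈ l, e ∈ E) → ∀ (w : ℝ), 0 ≤ w → ∀ a, 0 ≤ pump γ l w a := by
  intro l
  induction l with
  | nil => intro _ w hw a; simp [pump]
  | cons e l ih =>
    intro hl w hw a
    have he : e ∈ E := hl e (by simp)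
    have h1 : 0 ≤ γ e * w := mul_nonneg (le_of_lt (hγ e he)) hw
    have := ih (fun x hx => hl x (by simp [hx])) (γ e * w) h1 a
    simp only [pump]
    positivity

lemma exc0_single {e : V × V} (he : e ∈ E) (w : ℝ) (x : V) :
    exc0 E γ (fun a => if a = e then w else 0) x
      = (if e.2 = x then γ e * w else 0) - (if e.1 = x then w else 0) := by
  unfold exc0
  have h1 : ∑ a ∈ E.filter (fun a => a.2 = x), γ a * (if a = e then w else 0)
      = if e.2 = x then γ e * w else 0 := by
    rw [show (∑ a ∈ E.filter (fun a => a.2 = x), γ a * (if a = e then w else 0))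
        = ∑ a ∈ E.filter (fun a => a.2 = x), (if a = e then γ e * w else 0) from
      Finset.sum_congr rfl fun a _ => by split_ifs with h <;> simp [h]]
    simp [Finset.sum_ite_eq', Finset.mem_filter, he]
  have h2 : ∑ a ∈ E.filter (fun a => a.1 = x), (if a = e then w else 0)
      = if e.1 = x then w else 0 := by
    simp [Finset.sum_ite_eq', Finset.mem_filter, he]
  rw [h1, h2]

lemma exc0_pump : ∀ (l : List V) (a0 : V) (w : ℝ),
    (∀ e ∈ edges (a0 :: l), e ∈ E) → ∀ x,
    exc0 E γ (pump γ (edges (a0 :: l)) w) x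
      = (if (a0 :: l).getLast? = some x then gain γ (a0 :: l) * w else 0)
        - (if a0 = x then w else 0) := by
  intro l
  induction l with
  | nil =>
    intro a0 w _ x
    show exc0 E γ (fun _ => 0) x = _
    unfold exc0
    by_cases h : a0 = x <;> simp [h]
  | cons b l2 ih =>
    intro a0 w hE x
    have hab : (a0, b) ∈ E := hE (a0, b) (by simp)
    have hE' : ∀ e ∈ edges (b :: l2), e ∈ E := fun e he' => hE e (by simp [he'])
    have hsplit : pump γ (edges (a0 :: b :: l2)) w
        = fun a => (if a = (a0, b) then w else 0)
            + pump γ (edges (b :: l2)) (γ (a0, b) * w) a := by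
      rw [edges_cons_cons]; rfl
    rw [hsplit, exc0_add, exc0_single hab, ih b (γ (a0, b) * w) hE' x,
      List.getLast?_cons_cons, gain_cons_cons]
    split_ifs <;> ring

lemma muk_card_le (hγ : ∀ a ∈ E, 0 < γ a) (H : NoBadCycle E γ t) (i : V) :
    muk E γ t (Fintype.card V + 1) i ≤ muk E γ t (Fintype.card V) i := by
  rcases muk_witness hγ (Fintype.card V + 1) i with h | ⟨l, hl1, hl2, hl3, hl4, hl5⟩
  · exact le_trans h (muk_nonneg hγ _ i)
  · obtain ⟨ws', hw1, hw2, hw3, hw4, hw5⟩ := shorten hγ H l.length l le_rfl hl4 hl2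
    have hlen : ws'.length ≤ Fintype.card V := hw4.length_le_card
    have hhead : ws'.head? = some i := by rw [hw2, hl1]
    have := gain_le_muk hγ ws' (Fintype.card V) i hhead hw3 (by omega) hw1
    linarith

lemma bellman_muk (hγ : ∀ a ∈ E, 0 < γ a) (H : NoBadCycle E γ t) :
    ∀ a ∈ E, γ a * muk E γ t (Fintype.card V) a.2 ≤ muk E γ t (Fintype.card V) a.1 := by
  intro a ha
  have h1 : γ a * muk E γ t (Fintype.card V) a.2 ≤ muk E γ t (Fintype.card V + 1) a.1 := by
    rw [muk_succ]
    exact (Finset.le_fold_max _).2 (Or.inr ⟨a, Finset.mem_filter.2 ⟨ha, rfl⟩, le_rfl⟩)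
  exact le_trans h1 (muk_card_le hγ H a.1)

lemma muk_t_one (hγ : ∀ a ∈ E, 0 < γ a) (H : NoBadCycle E γ t) :
    muk E γ t (Fintype.card V) t = 1 := by
  refine le_antisymm ?_ (one_le_muk_t hγ _)
  rcases muk_witness hγ (Fintype.card V) t with h | ⟨l, hl1, hl2, hl3, hl4, hl5⟩
  · linarith
  · obtain ⟨ws', hw1, hw2, hw3, hw4, hw5⟩ := shorten hγ H l.length l le_rfl hl4 hl2
    have hws : ws' = [t] := nodup_closed_eq_single hw4 (by rw [hw2, hl1]) hw3
    rw [hws, gain_single] at hw5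
    linarith

end

end GenFlow

open GenFlow

/-- for a feasible instance of the uncapacitated generalized flow
maximization problem, the objective is bounded iff there is no directed cycle of
gain > 1 together with a directed path from a node of the cycle to the sink t. -/
theorem bounded_iff_no_gain_cycle_reaching_sink {V : Type*} [Fintype V] [DecidableEq V]
    (E : Finset (V × V)) (γ : V × V → ℝ) (b : V → ℝ) (t : V)
    (hγ : ∀ a ∈ E, 0 < γ a)
    (hfeas : ∃ f : V × V → ℝ, (∀ a, 0 ≤ f a) ∧ ∀ i, i ≠ t → 0 ≤ excess E γ b f i) :
    (∃ M : ℝ, ∀ f : V × V → ℝ, (∀ a, 0 ≤ f a) →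
        (∀ i, i ≠ t → 0 ≤ excess E γ b f i) → excess E γ b f t ≤ M)
    ↔ ¬ ∃ (vs us : List V) (v : V),
        vs ≠ [] ∧
        (∀ a ∈ vs.zip (vs.rotate 1), a ∈ E) ∧
        1 < ((vs.zip (vs.rotate 1)).map γ).prod ∧
        v ∈ vs ∧
        us.head? = some v ∧ us.getLast? = some t ∧
        (∀ a ∈ us.zip us.tail, a ∈ E) := by
  constructor
  · rintro ⟨M, hM⟩ ⟨vs, us, v, hvs, hvsE, hvsG, hv, hus1, hus2, husE⟩
    obtain ⟨f₀, hf₀, hex₀⟩ := hfeas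
    obtain ⟨v0, vs', rfl⟩ : ∃ v0 vs', vs = v0 :: vs' := by
      cases vs with
      | nil => exact absurd rfl hvs
      | cons a l => exact ⟨a, l, rfl⟩
    rw [zip_rotate_eq_edges] at hvsE hvsG
    obtain ⟨xs, ys, hxy⟩ := List.append_of_mem hv
    -- rotated cycle starting at v
    have perm : (edges ((v :: (ys ++ xs)) ++ [v])).Perm (edges (v0 :: (vs' ++ [v0]))) := by
      cases xs with
      | nil =>
        have h1 : v0 = v ∧ vs' = ys := by
          have := hxy; simp at this; exact this
        obtain ⟨rfl, rfl⟩ := h1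
        simp
      | cons w0 xs2 =>
        have h1 : v0 = w0 ∧ vs' = xs2 ++ v :: ys := by
          have := hxy; simp at this; exact ⟨this.1, this.2⟩
        obtain ⟨heq, rfl⟩ := h1
        rw [heq]
        have eL : edges ((v :: (ys ++ w0 :: xs2)) ++ [v])
            = edges ((v :: ys) ++ [w0]) ++ edges (w0 :: (xs2 ++ [v])) := by
          rw [show (v :: (ys ++ w0 :: xs2)) ++ [v] = (v :: ys) ++ w0 :: (xs2 ++ [v]) by simp]
          exact edges_append_cons w0 (v :: ys) (xs2 ++ [v])
        have eR : edges (w0 :: ((xs2 ++ v :: ys) ++ [w0]))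
            = edges ((w0 :: xs2) ++ [v]) ++ edges ((v :: ys) ++ [w0]) := by
          rw [show w0 :: ((xs2 ++ v :: ys) ++ [w0]) = (w0 :: xs2) ++ v :: (ys ++ [w0]) by simp]
          rw [edges_append_cons v (w0 :: xs2) (ys ++ [w0])]
          rfl
        rw [eL, eR, show edges ((w0 :: xs2) ++ [v]) = edges (w0 :: (xs2 ++ [v])) by simp]
        exact List.perm_append_comm
    set C : List V := v :: (ys ++ xs) with hCdef
    have hCE : ∀ a ∈ edges (C ++ [v]), a ∈ E := fun a ha => hvsE a (perm.mem_iff.1 ha)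
    have hG : 1 < gain γ (C ++ [v]) := by
      rw [gain, (perm.map γ).prod_eq]
      exact hvsG
    -- the path
    obtain ⟨us2, rfl⟩ : ∃ us2, us = v :: us2 := by
      cases us with
      | nil => simp at hus1
      | cons a l =>
        have ha : a = v := by simpa using hus1
        exact ⟨l, by rw [ha]⟩
    have husE' : ∀ a ∈ edges (v :: us2), a ∈ E := by
      intro a ha
      apply husE
      rwa [← edges_eq_zip]
    set G := gain γ (C ++ [v]) with hGdef
    set P := gain γ (v :: us2) with hPdef
    have hP : 0 < P := gain_pos hγ husE'
    set g : V × V → ℝ :=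
      fun a => pump γ (edges (C ++ [v])) 1 a + pump γ (edges (v :: us2)) (G - 1) a with hgdef
    have hgnn : ∀ a, 0 ≤ g a := fun a =>
      add_nonneg (pump_nonneg hγ _ hCE 1 zero_le_one a)
        (pump_nonneg hγ _ husE' (G - 1) (by linarith) a)
    have hCform : C ++ [v] = v :: ((ys ++ xs) ++ [v]) := by rw [hCdef]; rfl
    have hClast : (C ++ [v]).getLast? = some v := List.getLast?_concat
    have hexg : ∀ x, exc0 E γ g x = if t = x then (G - 1) * P else 0 := by
      intro x
      rw [hgdef, exc0_add]
      have e1 : exc0 E γ (pump γ (edges (C ++ [v])) 1) x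
          = (if v = x then G * 1 else 0) - (if v = x then 1 else 0) := by
        have := exc0_pump (γ := γ) ((ys ++ xs) ++ [v]) v 1 (by rw [← hCform]; exact hCE) x
        rw [← hCform] at this
        rw [this, hClast, ← hGdef]
        simp only [Option.some_inj]
      have e2 : exc0 E γ (pump γ (edges (v :: us2)) (G - 1)) x
          = (if t = x then P * (G - 1) else 0) - (if v = x then G - 1 else 0) := by
        have := exc0_pump (γ := γ) us2 v (G - 1) husE' x
        rw [this, hus2, ← hPdef]
        simp only [Option.some_inj]
      rw [e1, e2]
      split_ifs <;> ring
    set lam : ℝ := max 0 ((M - excess E γ b f₀ t) / ((G - 1) * P) + 1) with hlamdef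
    have hlam0 : 0 ≤ lam := le_max_left _ _
    set f1 : V × V → ℝ := fun a => f₀ a + lam * g a with hf1def
    have hf1 : ∀ a, 0 ≤ f1 a := fun a =>
      add_nonneg (hf₀ a) (mul_nonneg hlam0 (hgnn a))
    have hex1 : ∀ i, i ≠ t → 0 ≤ excess E γ b f1 i := by
      intro i hi
      rw [hf1def, excess_linear, hexg i, if_neg (fun h => hi h.symm)]
      have := hex₀ i hi
      linarith
    have hMt : excess E γ b f1 t ≤ M := hM f1 hf1 hex1
    have hft : excess E γ b f1 t = excess E γ b f₀ t + lam * ((G - 1) * P) := by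
      rw [hf1def, excess_linear, hexg t, if_pos rfl]
    have hD : 0 < (G - 1) * P := mul_pos (by linarith) hP
    have hlam2 : (M - excess E γ b f₀ t) / ((G - 1) * P) < lam :=
      lt_of_lt_of_le (lt_add_one _) (le_max_right _ _)
    have : M - excess E γ b f₀ t < lam * ((G - 1) * P) := (div_lt_iff₀ hD).1 hlam2
    linarith
  · intro H
    refine ⟨-∑ i, muk E γ t (Fintype.card V) i * b i, fun f hf hex => ?_⟩
    exact excess_t_le (muk E γ t (Fintype.card V)) (muk_nonneg hγ _)
      (muk_t_one hγ H) (bellman_muk hγ H) f hf hex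
end

section
/- Let f̃ and f* be two generalized flows (with respect to the same demands) such that f̃ admits a conservative labeling μ and f* admits a conservative labeling μ*. Define h on the residual arc set by h_{ij} = f*_{ij} − f̃_{ij} when ij ∈ E and f*_{ij} > f̃_{ij}, and h_{ij} = γ_{ji}(f*_{ji} − f̃_{ji}) when ji ∈ E and f*_{ji} > f̃_{ji}, and suppose f* is chosen among optimal solutions minimizing ‖f̃ − f*‖₁. Then the support H of h contains no directed cycle. -/
/-- let f̃ admit a conservative labeling μ and f* be an optimal
solution, admitting a conservative labeling μ*, chosen among optimal solutions
to minimize ‖f̃ − f*‖₁. Then the support of the residual difference flow h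
contains no directed cycle. -/
theorem difference_support_acyclic {V : Type*} [Fintype V] [DecidableEq V]
    (E : Finset (V × V)) (γ : V × V → ℝ) (b : V → ℝ) (t : V)
    (ft fs : V × V → ℝ) (μ μs : V → ℝ)
    (hγ : ∀ a ∈ E, 0 < γ a)
    (hft0 : ∀ a, 0 ≤ ft a) (hfs0 : ∀ a, 0 ≤ fs a)
    (hftfeas : ∀ i, i ≠ t → 0 ≤ excess E γ b ft i)
    (hfsfeas : ∀ i, i ≠ t → 0 ≤ excess E γ b fs i)
    -- μ is conservative for f̃
    (hμt : μ t = 1) (hμpos : ∀ i, i ≠ t → 0 < μ i)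
    (hμdual : ∀ a ∈ E, γ a * μ a.1 ≤ μ a.2)
    (hμslack : ∀ a ∈ E, 0 < ft a → γ a * μ a.1 = μ a.2)
    -- μ* is conservative for f*
    (hμst : μs t = 1) (hμspos : ∀ i, i ≠ t → 0 < μs i)
    (hμsdual : ∀ a ∈ E, γ a * μs a.1 ≤ μs a.2)
    (hμsslack : ∀ a ∈ E, 0 < fs a → γ a * μs a.1 = μs a.2)
    -- f* is optimal
    (hopt : ∀ g : V × V → ℝ, (∀ a, 0 ≤ g a) →
        (∀ i, i ≠ t → 0 ≤ excess E γ b g i) →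
        excess E γ b g t ≤ excess E γ b fs t)
    -- f* minimizes ‖f̃ − ·‖₁ among optimal solutions
    (hmin : ∀ g : V × V → ℝ, (∀ a, 0 ≤ g a) →
        (∀ i, i ≠ t → 0 ≤ excess E γ b g i) →
        excess E γ b fs t ≤ excess E γ b g t →
        (∑ a ∈ E, |ft a - fs a|) ≤ ∑ a ∈ E, |ft a - g a|) :
    ¬ ∃ vs : List V, vs ≠ [] ∧
        ∀ a ∈ vs.zip (vs.rotate 1),
          (a ∈ E ∧ ft a < fs a) ∨
          ((a.2, a.1) ∈ E ∧ fs (a.2, a.1) < ft (a.2, a.1)) := by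
  classical
  rintro ⟨vs, hne, hcyc⟩
  set n := vs.length with hndef
  have hn : 0 < n := List.length_pos_iff.mpr hne
  set v : ℕ → V := fun k => vs.get ⟨k % n, Nat.mod_lt _ hn⟩ with hvdef
  have hvn : v n = v 0 := by simp [hvdef, Nat.mod_self]
  -- every step of the walk is a residual difference arc
  have hstep : ∀ k, k < n →
      ((v k, v (k+1)) ∈ E ∧ ft (v k, v (k+1)) < fs (v k, v (k+1))) ∨
      ((v (k+1), v k) ∈ E ∧ fs (v (k+1), v k) < ft (v (k+1), v k)) := by
    intro k hk
    have h1 : (vs.rotate 1).length = n := by simp [hndef]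
    have hk2 : k < (vs.zip (vs.rotate 1)).length := by
      rw [List.length_zip]; omega
    have hmem : (vs.zip (vs.rotate 1))[k] ∈ vs.zip (vs.rotate 1) :=
      List.getElem_mem hk2
    have hget : (vs.zip (vs.rotate 1))[k] = (v k, v (k+1)) := by
      rw [List.getElem_zip]
      have e1 : vs[k]'(by omega) = v k := by
        simp [hvdef, List.get_eq_getElem, Nat.mod_eq_of_lt hk]
      have e2 : (vs.rotate 1)[k]'(by omega) = v (k+1) := by
        rw [List.getElem_rotate]
        simp [hvdef, List.get_eq_getElem]
        rfl
      rw [e1, e2]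
    have h := hcyc _ hmem
    rw [hget] at h
    simpa using h
  -- positivity of labels
  have hμp : ∀ i, 0 < μ i := by
    intro i
    by_cases h : i = t
    · rw [h, hμt]; norm_num
    · exact hμpos i h
  have hμsp : ∀ i, 0 < μs i := by
    intro i
    by_cases h : i = t
    · rw [h, hμst]; norm_num
    · exact hμspos i h
  -- direction of each step
  set D : ℕ → Prop :=
    fun k => (v k, v (k+1)) ∈ E ∧ ft (v k, v (k+1)) < fs (v k, v (k+1)) with hDdef
  have hback : ∀ k, k < n → ¬ D k →
      (v (k+1), v k) ∈ E ∧ fs (v (k+1), v k) < ft (v (k+1), v k) :=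
    fun k hk hD => (hstep k hk).resolve_left hD
  set gain : ℕ → ℝ :=
    fun k => if D k then γ (v k, v (k+1)) else (γ (v (k+1), v k))⁻¹ with hgaindef
  have hgainpos : ∀ k, k < n → 0 < gain k := by
    intro k hk
    by_cases h : D k
    · simpa [hgaindef, if_pos h] using hγ _ h.1
    · have h2 := hγ _ (hback k hk h).1
      simp only [hgaindef, if_neg h]
      positivity
  set pre : ℕ → ℝ := fun k => ∏ j ∈ Finset.range k, gain j with hpredef
  have hpre0 : pre 0 = 1 := by simp [hpredef]
  have hpresucc : ∀ k, pre (k+1) = pre k * gain k := by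
    intro k; simp [hpredef, Finset.prod_range_succ]
  have hprepos : ∀ k, k ≤ n → 0 < pre k := by
    intro k hk
    apply Finset.prod_pos
    intro j hj
    exact hgainpos j (by have := Finset.mem_range.mp hj; omega)
  -- telescoping
  have tel : ∀ (w : V → ℝ), (∀ i, 0 < w i) → ∀ m : ℕ,
      (∏ k ∈ Finset.range m, (w (v (k+1)) / w (v k))) = w (v m) / w (v 0) := by
    intro w hw m
    induction m with
    | zero => simp [div_self (hw (v 0)).ne']
    | succ m ih =>
        rw [Finset.prod_range_succ, ih, div_mul_div_comm,
          mul_comm (w (v 0)) (w (v m)), mul_comm (w (v m)) (w (v (m+1))),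
          mul_comm (w (v m)) (w (v 0))]
        rw [mul_div_mul_right _ _ (hw (v m)).ne']
  -- gain of the cycle is 1
  have key1 : ∀ k, k < n → gain k * μ (v k) ≤ μ (v (k+1)) := by
    intro k hk
    by_cases h : D k
    · simpa [hgaindef, if_pos h] using hμdual _ h.1
    · obtain ⟨hE, hlt⟩ := hback k hk h
      have hpos : 0 < ft (v (k+1), v k) := lt_of_le_of_lt (hfs0 _) hlt
      have hsl := hμslack _ hE hpos
      have hγpos := hγ _ hE
      simp only [hgaindef, if_neg h]
      rw [← hsl]
      have : (γ (v (k+1), v k))⁻¹ * (γ (v (k+1), v k) * μ (v (k+1))) = μ (v (k+1)) := by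
        field_simp
      rw [this]
  have key2 : ∀ k, k < n → μs (v (k+1)) ≤ gain k * μs (v k) := by
    intro k hk
    by_cases h : D k
    · have hpos : 0 < fs (v k, v (k+1)) := lt_of_le_of_lt (hft0 _) h.2
      have hsl := hμsslack _ h.1 hpos
      simp only [hgaindef, if_pos h]
      exact le_of_eq hsl.symm
    · obtain ⟨hE, _⟩ := hback k hk h
      have hd := hμsdual _ hE
      have hγpos := hγ _ hE
      simp only [hgaindef, if_neg h]
      rw [le_inv_mul_iff₀ hγpos]
      simpa using hd
  have hle1 : pre n ≤ 1 := by
    calc pre n ≤ ∏ k ∈ Finset.range n, (μ (v (k+1)) / μ (v k)) := by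
          apply Finset.prod_le_prod
          · intro k hk; exact (hgainpos k (Finset.mem_range.mp hk)).le
          · intro k hk
            rw [le_div_iff₀ (hμp (v k))]
            exact key1 k (Finset.mem_range.mp hk)
      _ = μ (v n) / μ (v 0) := tel μ hμp n
      _ = 1 := by rw [hvn]; exact div_self (hμp (v 0)).ne'
  have hge1 : 1 ≤ pre n := by
    calc (1:ℝ) = μs (v n) / μs (v 0) := by rw [hvn, div_self (hμsp (v 0)).ne']
      _ = ∏ k ∈ Finset.range n, (μs (v (k+1)) / μs (v k)) := (tel μs hμsp n).symm
      _ ≤ pre n := by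
          apply Finset.prod_le_prod
          · intro k hk; exact div_nonneg (hμsp _).le (hμsp _).le
          · intro k hk
            rw [div_le_iff₀ (hμsp (v k))]
            exact key2 k (Finset.mem_range.mp hk)
  have hpren : pre n = 1 := le_antisymm hle1 hge1
  -- choice of ε
  set P : ℝ := (Finset.range (n+1)).sup' (by simp) pre with hPdef
  have hpreleP : ∀ k, k ≤ n → pre k ≤ P := fun k hk =>
    Finset.le_sup' pre (Finset.mem_range.mpr (by omega))
  have hPpos : 0 < P := lt_of_lt_of_le (hprepos 0 (by omega)) (hpreleP 0 (by omega))
  set ed : ℕ → V × V := fun k => if D k then (v k, v (k+1)) else (v (k+1), v k) with heddef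
  have hedE : ∀ k, k < n → ed k ∈ E := by
    intro k hk
    by_cases h : D k
    · simp only [heddef, if_pos h]; exact h.1
    · simp only [heddef, if_neg h]; exact (hback k hk h).1
  have hedF : ∀ k, k < n → D k → ft (ed k) < fs (ed k) := by
    intro k hk h; simp only [heddef, if_pos h]; exact h.2
  have hedB : ∀ k, k < n → ¬ D k → fs (ed k) < ft (ed k) := by
    intro k hk h; simp only [heddef, if_neg h]; exact (hback k hk h).2
  set w : ℕ → ℝ := fun k => |ft (ed k) - fs (ed k)| with hwdef
  have hwpos : ∀ k, k < n → 0 < w k := by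
    intro k hk
    simp only [hwdef]
    rw [abs_pos, sub_ne_zero]
    by_cases h : D k
    · exact (hedF k hk h).ne
    · exact (hedB k hk h).ne'
  set gmin : ℝ := (Finset.range n).inf' ⟨0, Finset.mem_range.mpr hn⟩ w with hgmdef
  have hgminpos : 0 < gmin := by
    rw [hgmdef]; refine (Finset.lt_inf'_iff ..).mpr ?_
    intro k hk
    exact hwpos k (Finset.mem_range.mp hk)
  have hgminle : ∀ k, k < n → gmin ≤ w k := fun k hk =>
    Finset.inf'_le w (Finset.mem_range.mpr hk)
  set ε : ℝ := gmin / (n * P) with hεdef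
  have hnR : (0:ℝ) < n := by exact_mod_cast hn
  have hεpos : 0 < ε := by rw [hεdef]; positivity
  set δ : ℕ → ℝ := fun k => ε * pre k with hδdef
  have hδpos : ∀ k, k ≤ n → 0 < δ k := fun k hk => mul_pos hεpos (hprepos k hk)
  have hδle : ∀ k, k ≤ n → δ k ≤ gmin / n := by
    intro k hk
    have h1 : δ k ≤ ε * P := by
      rw [hδdef]
      exact mul_le_mul_of_nonneg_left (hpreleP k hk) hεpos.le
    have h2 : ε * P = gmin / n := by
      rw [hεdef]; field_simp
    linarith
  have hδ0 : δ 0 = ε := by simp [hδdef, hpre0]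
  have hδn : δ n = ε := by simp [hδdef, hpren]
  have hδsucc : ∀ k, δ (k+1) = δ k * gain k := by
    intro k; simp only [hδdef, hpresucc]; ring
  -- the perturbation
  set amt : ℕ → ℝ := fun k => if D k then -δ k else δ (k+1) with hamtdef
  set S : V × V → ℝ :=
    fun e => ∑ k ∈ Finset.range n, if e = ed k then amt k else 0 with hSdef
  set g : V × V → ℝ := fun e => fs e + S e with hgdef
  -- bound on |S e|
  have hSabs : ∀ e, |S e| ≤ gmin := by
    intro e
    calc |S e| ≤ ∑ k ∈ Finset.range n, |if e = ed k then amt k else 0| := by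
          simp only [hSdef]; exact Finset.abs_sum_le_sum_abs _ _
      _ ≤ ∑ k ∈ Finset.range n, gmin / n := by
          apply Finset.sum_le_sum
          intro k hk
          have hk' := Finset.mem_range.mp hk
          by_cases h : e = ed k
          · rw [if_pos h]
            by_cases hD : D k
            · simp only [hamtdef, if_pos hD, abs_neg]
              rw [abs_of_pos (hδpos k (by omega))]
              exact hδle k (by omega)
            · simp only [hamtdef, if_neg hD]
              rw [abs_of_pos (hδpos (k+1) (by omega))]
              exact hδle (k+1) (by omega)
          · rw [if_neg h]
            simp only [abs_zero]
            positivity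
      _ = gmin := by
          rw [Finset.sum_const, Finset.card_range, nsmul_eq_mul]
          field_simp
  -- main per-edge properties
  have hmain : ∀ e, 0 ≤ g e ∧ |ft e - g e| ≤ |ft e - fs e| := by
    intro e
    by_cases hex : ∃ k, k < n ∧ e = ed k
    · obtain ⟨k0, hk0, he0⟩ := hex
      by_cases hD0 : D k0
      · -- forward edge : ft e < fs e, S e ≤ 0
        have hlt : ft e < fs e := he0 ▸ hedF k0 hk0 hD0
        have hSnp : S e ≤ 0 := by
          simp only [hSdef]
          apply Finset.sum_nonpos
          intro k hk
          have hk' := Finset.mem_range.mp hk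
          by_cases h : e = ed k
          · rw [if_pos h]
            by_cases hD : D k
            · simp only [hamtdef, if_pos hD]
              linarith [hδpos k (by omega : k ≤ n)]
            · exfalso
              have hB := hedB k hk' hD
              rw [← h] at hB
              linarith
          · rw [if_neg h]
        have hwk0 : w k0 = fs e - ft e := by
          simp only [hwdef]
          rw [← he0, abs_of_neg (by linarith : ft e - fs e < 0)]
          ring
        have hSlb : -(fs e - ft e) ≤ S e := by
          have h1 := hSabs e
          have h2 := hgminle k0 hk0
          rw [hwk0] at h2
          have h3 := neg_abs_le (S e)
          linarith
        have hfte : ft e ≤ g e := by simp only [hgdef]; linarith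
        have hgfs : g e ≤ fs e := by simp only [hgdef]; linarith
        constructor
        · linarith [hft0 e]
        · rw [abs_of_nonpos (by linarith), abs_of_neg (by linarith)]
          linarith
      · -- backward edge : fs e < ft e, S e ≥ 0
        have hlt : fs e < ft e := he0 ▸ hedB k0 hk0 hD0
        have hSnn : 0 ≤ S e := by
          simp only [hSdef]
          apply Finset.sum_nonneg
          intro k hk
          have hk' := Finset.mem_range.mp hk
          by_cases h : e = ed k
          · rw [if_pos h]
            by_cases hD : D k
            · exfalso
              have hF := hedF k hk' hD
              rw [← h] at hF
              linarith
            · simp only [hamtdef, if_neg hD]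
              linarith [hδpos (k+1) (by omega : k+1 ≤ n)]
          · rw [if_neg h]
        have hwk0 : w k0 = ft e - fs e := by
          simp only [hwdef]
          rw [← he0, abs_of_pos (by linarith : 0 < ft e - fs e)]
        have hSub : S e ≤ ft e - fs e := by
          have h1 := hSabs e
          have h2 := hgminle k0 hk0
          rw [hwk0] at h2
          have h3 := le_abs_self (S e)
          linarith
        have hfte : g e ≤ ft e := by simp only [hgdef]; linarith
        have hgfs : fs e ≤ g e := by simp only [hgdef]; linarith
        constructor
        · linarith [hfs0 e]
        · rw [abs_of_nonneg (by linarith), abs_of_pos (by linarith)]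
          linarith
    · have hS0 : S e = 0 := by
        simp only [hSdef]
        apply Finset.sum_eq_zero
        intro k hk
        rw [if_neg]
        intro h
        exact hex ⟨k, Finset.mem_range.mp hk, h⟩
      have hge : g e = fs e := by simp only [hgdef]; rw [hS0]; ring
      rw [hge]
      exact ⟨hfs0 e, le_refl _⟩
  -- strict improvement on ed 0
  have hstrict : |ft (ed 0) - g (ed 0)| < |ft (ed 0) - fs (ed 0)| := by
    have hsplit : S (ed 0) =
        (∑ k ∈ Finset.range n \ {0}, if ed 0 = ed k then amt k else 0) + amt 0 := by
      simp only [hSdef]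
      rw [Finset.sum_eq_sum_sdiff_singleton_add (Finset.mem_range.mpr hn)
        (fun k => if ed 0 = ed k then amt k else 0)]
      simp
    by_cases hD0 : D 0
    · have hlt : ft (ed 0) < fs (ed 0) := hedF 0 hn hD0
      have hSub : S (ed 0) ≤ -δ 0 := by
        rw [hsplit]
        simp only [hamtdef, if_pos hD0]
        have hrest : (∑ k ∈ Finset.range n \ {0}, if ed 0 = ed k then amt k else 0) ≤ 0 := by
          apply Finset.sum_nonpos
          intro k hk
          have hk' : k < n := Finset.mem_range.mp (Finset.mem_sdiff.mp hk).1
          by_cases h : ed 0 = ed k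
          · rw [if_pos h]
            by_cases hD : D k
            · simp only [hamtdef, if_pos hD]
              linarith [hδpos k (by omega : k ≤ n)]
            · exfalso
              have h1 := hedB k hk' hD
              rw [← h] at h1
              linarith
          · rw [if_neg h]
        linarith
      have hfte : ft (ed 0) ≤ g (ed 0) := by
        have h1 := hSabs (ed 0)
        have h2 := hgminle 0 hn
        have hwk0 : w 0 = fs (ed 0) - ft (ed 0) := by
          simp only [hwdef]
          rw [abs_of_neg (by linarith : ft (ed 0) - fs (ed 0) < 0)]
          ring
        rw [hwk0] at h2
        have h3 := neg_abs_le (S (ed 0))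
        simp only [hgdef]; linarith
      have hglt : g (ed 0) < fs (ed 0) := by
        simp only [hgdef]
        have := hδpos 0 (by omega)
        linarith
      rw [abs_of_nonpos (by linarith), abs_of_neg (by linarith)]
      linarith
    · have hlt : fs (ed 0) < ft (ed 0) := hedB 0 hn hD0
      have hSlb : δ 1 ≤ S (ed 0) := by
        rw [hsplit]
        simp only [hamtdef, if_neg hD0]
        have hrest : (0:ℝ) ≤ ∑ k ∈ Finset.range n \ {0}, if ed 0 = ed k then amt k else 0 := by
          apply Finset.sum_nonneg
          intro k hk
          have hk' : k < n := Finset.mem_range.mp (Finset.mem_sdiff.mp hk).1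
          by_cases h : ed 0 = ed k
          · rw [if_pos h]
            by_cases hD : D k
            · exfalso
              have h1 := hedF k hk' hD
              rw [← h] at h1
              linarith
            · simp only [hamtdef, if_neg hD]
              linarith [hδpos (k+1) (by omega : k+1 ≤ n)]
          · rw [if_neg h]
        linarith
      have hfte : g (ed 0) ≤ ft (ed 0) := by
        have h1 := hSabs (ed 0)
        have h2 := hgminle 0 hn
        have hwk0 : w 0 = ft (ed 0) - fs (ed 0) := by
          simp only [hwdef]
          rw [abs_of_pos (by linarith : 0 < ft (ed 0) - fs (ed 0))]
        rw [hwk0] at h2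
        have h3 := le_abs_self (S (ed 0))
        simp only [hgdef]; linarith
      have hglt : fs (ed 0) < g (ed 0) := by
        simp only [hgdef]
        have := hδpos 1 (by omega)
        linarith
      rw [abs_of_nonneg (by linarith), abs_of_pos (by linarith)]
      linarith
  -- excess invariance
  have hexg : ∀ i, excess E γ b g i = excess E γ b fs i := by
    intro i
    have hA : ∑ a ∈ E.filter (fun a => a.2 = i), γ a * g a
        = (∑ a ∈ E.filter (fun a => a.2 = i), γ a * fs a)
          + ∑ k ∈ Finset.range n, (if (ed k).2 = i then γ (ed k) * amt k else 0) := by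
      have hsplit : ∀ a : V × V, γ a * g a = γ a * fs a + γ a * S a := by
        intro a; simp only [hgdef]; ring
      simp only [hsplit]
      rw [Finset.sum_add_distrib]
      congr 1
      simp only [hSdef, Finset.mul_sum]
      rw [Finset.sum_comm]
      apply Finset.sum_congr rfl
      intro k hk
      have hk' := Finset.mem_range.mp hk
      have hite : ∀ a ∈ E.filter (fun a => a.2 = i),
          γ a * (if a = ed k then amt k else 0) = if a = ed k then γ a * amt k else 0 := by
        intro a _
        split <;> simp
      rw [Finset.sum_congr rfl hite, Finset.sum_ite_eq' (E.filter (fun a => a.2 = i)) (ed k)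
        (fun a => γ a * amt k)]
      by_cases h2 : (ed k).2 = i
      · rw [if_pos h2, if_pos (Finset.mem_filter.mpr ⟨hedE k hk', h2⟩)]
      · have hnm : ed k ∉ E.filter (fun a => a.2 = i) :=
          fun hmem => h2 (Finset.mem_filter.mp hmem).2
        rw [if_neg h2, if_neg hnm]
    have hB : ∑ a ∈ E.filter (fun a => a.1 = i), g a
        = (∑ a ∈ E.filter (fun a => a.1 = i), fs a)
          + ∑ k ∈ Finset.range n, (if (ed k).1 = i then amt k else 0) := by
      simp only [hgdef]
      rw [Finset.sum_add_distrib]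
      congr 1
      simp only [hSdef]
      rw [Finset.sum_comm]
      apply Finset.sum_congr rfl
      intro k hk
      have hk' := Finset.mem_range.mp hk
      rw [Finset.sum_ite_eq' (E.filter (fun a => a.1 = i)) (ed k) (fun _ => amt k)]
      by_cases h2 : (ed k).1 = i
      · rw [if_pos h2, if_pos (Finset.mem_filter.mpr ⟨hedE k hk', h2⟩)]
      · have hnm : ed k ∉ E.filter (fun a => a.1 = i) :=
          fun hmem => h2 (Finset.mem_filter.mp hmem).2
        rw [if_neg h2, if_neg hnm]
    have hT : ∀ k, k < n →
        (if (ed k).2 = i then γ (ed k) * amt k else 0)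
          - (if (ed k).1 = i then amt k else 0)
        = (if v k = i then δ k else 0) - (if v (k+1) = i then δ (k+1) else 0) := by
      intro k hk
      by_cases hD : D k
      · have hed : ed k = (v k, v (k+1)) := by simp only [heddef, if_pos hD]
        have hamt : amt k = -δ k := by simp only [hamtdef, if_pos hD]
        have hγδ : γ (v k, v (k+1)) * -δ k = -δ (k+1) := by
          rw [hδsucc k]
          have hg : gain k = γ (v k, v (k+1)) := by simp only [hgaindef, if_pos hD]
          rw [hg]; ring
        rw [hed, hamt, hγδ]
        by_cases h1 : v k = i
        · by_cases h2 : v (k+1) = i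
          · simp [h1, h2]; ring
          · simp [h1, h2]
        · by_cases h2 : v (k+1) = i
          · simp [h1, h2]
          · simp [h1, h2]
      · have hed : ed k = (v (k+1), v k) := by simp only [heddef, if_neg hD]
        have hamt : amt k = δ (k+1) := by simp only [hamtdef, if_neg hD]
        have hγpos2 := hγ _ (hback k hk hD).1
        have hγδ : γ (v (k+1), v k) * δ (k+1) = δ k := by
          rw [hδsucc k]
          have hg : gain k = (γ (v (k+1), v k))⁻¹ := by simp only [hgaindef, if_neg hD]
          rw [hg]
          field_simp
        rw [hed, hamt, hγδ]
    have htel : ∑ k ∈ Finset.range n,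
        ((if (ed k).2 = i then γ (ed k) * amt k else 0)
          - (if (ed k).1 = i then amt k else 0)) = 0 := by
      rw [Finset.sum_congr rfl (fun k hk => hT k (Finset.mem_range.mp hk))]
      rw [Finset.sum_range_sub' (fun k => if v k = i then δ k else 0) n]
      rw [hvn, hδn, hδ0]
      ring
    have hsum : ∑ k ∈ Finset.range n, (if (ed k).2 = i then γ (ed k) * amt k else 0)
        = ∑ k ∈ Finset.range n, (if (ed k).1 = i then amt k else 0) := by
      rw [Finset.sum_sub_distrib] at htel
      linarith
    unfold excess
    rw [hA, hB, hsum]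
    ring
  -- conclude
  have hg0 : ∀ a, 0 ≤ g a := fun a => (hmain a).1
  have hgfeas : ∀ i, i ≠ t → 0 ≤ excess E γ b g i := fun i hi => (hexg i) ▸ hfsfeas i hi
  have hm := hmin g hg0 hgfeas (le_of_eq (hexg t).symm)
  have hltsum : ∑ a ∈ E, |ft a - g a| < ∑ a ∈ E, |ft a - fs a| :=
    Finset.sum_lt_sum (fun a _ => (hmain a).2) ⟨ed 0, hedE 0 hn, hstrict⟩
  linarith
end

section
/- Let (f, μ) be a Δ-feasible pair. Then there exists an optimal solution f* of the generalized flow maximization problem such that ‖f^μ − (f*)^μ‖_∞ ≤ Ex^μ(f) + (|F^μ| + 1)Δ, where F^μ is the set of non-tight arcs and Ex^μ(f) = Σ_{i≠t} e_i(f)/μ_i is the relabeled surplus. -/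
set_option linter.unusedSectionVars false
set_option linter.unnecessarySeqFocus false


/-- Primal feasibility for the uncapacitated problem. -/
def primalFeas {V : Type*} [Fintype V] [DecidableEq V] (E : Finset (V × V))
    (γ : V × V → ℝ) (b : V → ℝ) (t : V) (f : V × V → ℝ) : Prop :=
  (∀ a, 0 ≤ f a) ∧ ∀ i, i ≠ t → 0 ≤ excess E γ b f i

section Aux

open Relation Finset

variable {V : Type*} [Fintype V] [DecidableEq V]

/-- Linear part of the excess map. -/
def lin (E : Finset (V × V)) (γ : V × V → ℝ) (u : V × V → ℝ) (i : V) : ℝ :=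
  (∑ a ∈ E.filter (fun a => a.2 = i), γ a * u a)
    - (∑ a ∈ E.filter (fun a => a.1 = i), u a)

variable (E : Finset (V × V)) (γ : V × V → ℝ) (b : V → ℝ)

lemma excess_add (y u : V × V → ℝ) (i : V) :
    excess E γ b (fun a => y a + u a) i = excess E γ b y i + lin E γ u i := by
  unfold excess lin
  simp only [mul_add, Finset.sum_add_distrib]
  ring

lemma lin_smul (c : ℝ) (u : V × V → ℝ) (k : V) :
    lin E γ (fun a => c * u a) k = c * lin E γ u k := by
  unfold lin
  simp only [Finset.mul_sum, mul_sub]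
  congr 1 <;> apply Finset.sum_congr rfl <;> intro a _ <;> ring

lemma lin_add (u v : V × V → ℝ) (k : V) :
    lin E γ (fun a => u a + v a) k = lin E γ u k + lin E γ v k := by
  unfold lin
  simp only [mul_add, Finset.sum_add_distrib]
  ring

lemma lin_single (a₀ : V × V) (c : ℝ) (ha₀ : a₀ ∈ E) (k : V) :
    lin E γ (fun a => if a = a₀ then c else 0) k
      = (if a₀.2 = k then γ a₀ * c else 0) - (if a₀.1 = k then c else 0) := by
  unfold lin
  rw [Finset.sum_filter, Finset.sum_filter]
  have h1 : ∀ a ∈ E, (if a.2 = k then γ a * (if a = a₀ then c else 0) else 0)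
      = if a = a₀ then (if a₀.2 = k then γ a₀ * c else 0) else 0 := by
    intro a _
    by_cases h : a = a₀ <;> simp [h]
  have h2 : ∀ a ∈ E, (if a.1 = k then (if a = a₀ then c else 0) else 0)
      = if a = a₀ then (if a₀.1 = k then c else 0) else 0 := by
    intro a _
    by_cases h : a = a₀ <;> simp [h]
  rw [Finset.sum_congr rfl h1, Finset.sum_congr rfl h2,
    Finset.sum_ite_eq' E a₀, Finset.sum_ite_eq' E a₀, if_pos ha₀, if_pos ha₀]

lemma sum_over_cut (A : Finset V) (π : V × V → V) (F : V × V → ℝ) :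
    ∑ i ∈ A, ∑ a ∈ E.filter (fun a => π a = i), F a
      = ∑ a ∈ E.filter (fun a => π a ∈ A), F a := by
  simp only [Finset.sum_filter]
  rw [Finset.sum_comm]
  apply Finset.sum_congr rfl
  intro a _
  rw [Finset.sum_ite_eq A (π a) (fun _ => F a)]

end Aux

section Push

open Relation

variable {V : Type*} [Fintype V] [DecidableEq V]
variable (E : Finset (V × V)) (γ : V × V → ℝ) (x : V × V → ℝ) (μ : V → ℝ)

/-- Residual ("toward `x`") step relation of `y` relative to `x`. -/
def rel (y : V × V → ℝ) (i j : V) : Prop :=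
  ((i, j) ∈ E ∧ x (i, j) < y (i, j)) ∨
    ((j, i) ∈ E ∧ y (j, i) < x (j, i) ∧ μ i ≤ γ (j, i) * μ j)

/-- Data of a small augmentation along a residual chain from `i` to `j`. -/
structure Push (y : V × V → ℝ) (i j : V) (ε : ℝ) (u : V × V → ℝ) (p q : ℝ) : Prop where
  hp : 0 < p
  hpe : p ≤ ε
  hq : 0 < q
  hqp : q ≤ p
  hsupp : ∀ a, a ∉ E → u a = 0
  hdir : ∀ a, 0 ≤ u a * (x a - y a)
  hmag : ∀ a, |u a| ≤ ε * μ a.1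
  hne : ∀ a, u a ≠ 0 → x a ≠ y a
  hex : ∃ a, u a ≠ 0
  hlin : ∀ k, (if k = i then μ k * p else 0) - (if k = j then μ k * q else 0) ≤ lin E γ u k

variable {E γ x μ}

lemma Push.smul {y : V × V → ℝ} {i j : V} {ε : ℝ} {u : V × V → ℝ} {p q : ℝ}
    (h : Push E γ x μ y i j ε u p q) {θ : ℝ} (hθ : 0 < θ) (hθ1 : θ ≤ 1) :
    Push E γ x μ y i j ε (fun a => θ * u a) (θ * p) (θ * q) := by
  refine ⟨mul_pos hθ h.hp, ?_, mul_pos hθ h.hq, ?_, ?_, ?_, ?_, ?_, ?_, ?_⟩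
  · have h1 : θ * p ≤ p := by nlinarith [h.hp]
    linarith [h.hpe]
  · exact mul_le_mul_of_nonneg_left h.hqp hθ.le
  · intro a ha; rw [h.hsupp a ha, mul_zero]
  · intro a
    rw [mul_assoc]
    exact mul_nonneg hθ.le (h.hdir a)
  · intro a
    rw [abs_mul, abs_of_pos hθ]
    have h4 : θ * |u a| ≤ |u a| := by nlinarith [abs_nonneg (u a)]
    linarith [h.hmag a]
  · intro a ha
    exact h.hne a (by intro h0; rw [h0, mul_zero] at ha; exact ha rfl)
  · obtain ⟨a, ha⟩ := h.hex
    exact ⟨a, mul_ne_zero (ne_of_gt hθ) ha⟩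
  · intro k
    have h1 := h.hlin k
    rw [lin_smul E γ θ u k]
    have e1 : (if k = i then μ k * (θ * p) else 0) = θ * (if k = i then μ k * p else 0) := by
      by_cases hi : k = i
      · rw [if_pos hi, if_pos hi]; ring
      · rw [if_neg hi, if_neg hi, mul_zero]
    have e2 : (if k = j then μ k * (θ * q) else 0) = θ * (if k = j then μ k * q else 0) := by
      by_cases hj : k = j
      · rw [if_pos hj, if_pos hj]; ring
      · rw [if_neg hj, if_neg hj, mul_zero]
    rw [e1, e2, ← mul_sub]
    exact mul_le_mul_of_nonneg_left h1 hθ.le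

lemma push_single (hμ : ∀ i, 0 < μ i) (hγpos : ∀ a ∈ E, 0 < γ a)
    (hdual : ∀ a ∈ E, γ a * μ a.1 ≤ μ a.2)
    {y : V × V → ℝ} {i j : V} (hr : rel E γ x μ y i j) {ε : ℝ} (hε : 0 < ε) :
    ∃ u p q, Push E γ x μ y i j ε u p q := by
  have hμi := hμ i; have hμj := hμ j
  rcases hr with ⟨hmem, hxy⟩ | ⟨hmem, hxy, htight⟩
  · -- forward arc (i,j): decrease y on it
    have hγ0 : 0 < γ (i, j) := hγpos _ hmem
    have hd : γ (i, j) * μ i ≤ μ j := hdual _ hmem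
    refine ⟨fun a => if a = (i, j) then -(ε * μ i) else 0, ε,
      γ (i, j) * ε * μ i / μ j, ?_⟩
    refine ⟨hε, le_refl _, div_pos (mul_pos (mul_pos hγ0 hε) hμi) hμj, ?_, ?_, ?_, ?_, ?_, ?_, ?_⟩
    · rw [div_le_iff₀ hμj]
      nlinarith
    · intro a ha
      rw [if_neg (by rintro rfl; exact ha hmem)]
    · intro a
      by_cases h : a = (i, j)
      · rw [if_pos h, h]
        have h0 := mul_pos (mul_pos hε hμi) (sub_pos.mpr hxy)
        nlinarith [h0]
      · rw [if_neg h]; simp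
    · intro a
      by_cases h : a = (i, j)
      · rw [if_pos h, h, abs_neg, abs_of_pos (mul_pos hε hμi)]
      · rw [if_neg h, abs_zero]
        exact le_of_lt (mul_pos hε (hμ a.1))
    · intro a ha
      by_cases h : a = (i, j)
      · rw [h]; exact ne_of_lt hxy
      · rw [if_neg h] at ha; exact absurd rfl ha
    · refine ⟨(i, j), ?_⟩
      rw [if_pos rfl]
      intro h0
      nlinarith [neg_eq_zero.mp h0]
    · intro k
      rw [lin_single E γ (i, j) _ hmem k]
      have e : μ j * (γ (i, j) * ε * μ i / μ j) = γ (i, j) * ε * μ i := by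
        field_simp
      rcases eq_or_ne k i with hi | hi <;> rcases eq_or_ne k j with hj | hj
      · subst hi; subst hj
        rw [if_pos rfl, if_pos rfl, if_pos (show (k, k).2 = k from rfl),
          if_pos (show (k, k).1 = k from rfl)]
        linarith [e]
      · subst hi
        rw [if_pos rfl, if_neg hj, if_neg (show ¬(k, j).2 = k from fun h => hj h.symm),
          if_pos (show (k, j).1 = k from rfl)]
        linarith [mul_comm (μ k) ε]
      · subst hj
        rw [if_neg hi, if_pos rfl, if_pos (show (i, k).2 = k from rfl),
          if_neg (show ¬(i, k).1 = k from fun h => hi h.symm)]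
        linarith [e]
      · rw [if_neg hi, if_neg hj, if_neg (show ¬(i, j).2 = k from fun h => hj h.symm),
          if_neg (show ¬(i, j).1 = k from fun h => hi h.symm)]
  · -- reverse tight arc (j,i): increase y on it
    have hγ0 : 0 < γ (j, i) := hγpos _ hmem
    refine ⟨fun a => if a = (j, i) then ε * μ i / γ (j, i) else 0, ε,
      ε * μ i / (γ (j, i) * μ j), ?_⟩
    refine ⟨hε, le_refl _, div_pos (mul_pos hε hμi) (mul_pos hγ0 hμj), ?_, ?_, ?_, ?_, ?_, ?_, ?_⟩
    · rw [div_le_iff₀ (by positivity)]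
      nlinarith
    · intro a ha
      rw [if_neg (by rintro rfl; exact ha hmem)]
    · intro a
      by_cases h : a = (j, i)
      · rw [if_pos h, h]
        have h1 : 0 < x (j, i) - y (j, i) := by linarith
        exact le_of_lt (mul_pos (div_pos (mul_pos hε hμi) hγ0) h1)
      · rw [if_neg h]; simp
    · intro a
      by_cases h : a = (j, i)
      · rw [if_pos h, h]
        have h1 : (0:ℝ) < ε * μ i / γ (j, i) := div_pos (mul_pos hε hμi) hγ0
        rw [abs_of_pos h1, div_le_iff₀ hγ0]
        show ε * μ i ≤ ε * μ (j, i).1 * γ (j, i)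
        have : (j, i).1 = j := rfl
        rw [this]
        nlinarith
      · rw [if_neg h, abs_zero]
        exact le_of_lt (mul_pos hε (hμ a.1))
    · intro a ha
      by_cases h : a = (j, i)
      · rw [h]; exact (ne_of_lt hxy).symm
      · rw [if_neg h] at ha; exact absurd rfl ha
    · refine ⟨(j, i), ?_⟩
      rw [if_pos rfl]
      exact ne_of_gt (div_pos (mul_pos hε hμi) hγ0)
    · intro k
      rw [lin_single E γ (j, i) _ hmem k]
      have hq1 : γ (j, i) * (ε * μ i / γ (j, i)) = μ i * ε := by
        field_simp
      have hq2 : μ j * (ε * μ i / (γ (j, i) * μ j)) = ε * μ i / γ (j, i) := by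
        field_simp
      rcases eq_or_ne k i with hi | hi <;> rcases eq_or_ne k j with hj | hj
      · subst hi; subst hj
        rw [if_pos rfl, if_pos rfl, if_pos (show (k, k).2 = k from rfl),
          if_pos (show (k, k).1 = k from rfl)]
        linarith [hq1, hq2]
      · subst hi
        rw [if_pos rfl, if_neg hj, if_pos (show (j, k).2 = k from rfl),
          if_neg (show ¬(j, k).1 = k from fun h => hj h.symm)]
        linarith [hq1]
      · subst hj
        rw [if_neg hi, if_pos rfl, if_neg (show ¬(k, i).2 = k from fun h => hi h.symm),
          if_pos (show (k, i).1 = k from rfl)]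
        linarith [hq2]
      · rw [if_neg hi, if_neg hj, if_neg (show ¬(j, i).2 = k from fun h => hi h.symm),
          if_neg (show ¬(j, i).1 = k from fun h => hj h.symm)]

lemma push_chain (hμ : ∀ i, 0 < μ i) (hγpos : ∀ a ∈ E, 0 < γ a)
    (hdual : ∀ a ∈ E, γ a * μ a.1 ≤ μ a.2)
    {y : V × V → ℝ} {i j : V} (h : Relation.TransGen (rel E γ x μ y) i j) :
    ∀ ε : ℝ, 0 < ε → ∃ u p q, Push E γ x μ y i j ε u p q := by
  induction h using Relation.TransGen.head_induction_on with
  | single hr => exact fun ε hε => push_single hμ hγpos hdual hr hε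
  | @head i k₀ hr h' IH =>
    intro ε hε
    obtain ⟨u₂, p₂, q₂, H₂⟩ := IH (ε / 2) (by positivity)
    obtain ⟨u₁, p₁, q₁, H₁⟩ :=
      push_single hμ hγpos hdual hr (ε := min (ε / 2) p₂) (lt_min (by positivity) H₂.hp)
    have hq₁p₂ : q₁ ≤ p₂ := le_trans H₁.hqp (le_trans H₁.hpe (min_le_right _ _))
    have hθ : 0 < q₁ / p₂ := div_pos H₁.hq H₂.hp
    have hθ1 : q₁ / p₂ ≤ 1 := (div_le_one H₂.hp).mpr hq₁p₂
    have H₂' := H₂.smul hθ hθ1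
    have hθp₂ : q₁ / p₂ * p₂ = q₁ := div_mul_cancel₀ _ (ne_of_gt H₂.hp)
    refine ⟨fun a => u₁ a + q₁ / p₂ * u₂ a, p₁, q₁ / p₂ * q₂, ?_⟩
    refine ⟨H₁.hp, le_trans H₁.hpe (le_trans (min_le_left _ _) (by linarith)),
      mul_pos hθ H₂.hq, ?_, ?_, ?_, ?_, ?_, ?_, ?_⟩
    · calc q₁ / p₂ * q₂ ≤ q₁ / p₂ * p₂ := mul_le_mul_of_nonneg_left H₂.hqp hθ.le
        _ = q₁ := hθp₂
        _ ≤ p₁ := H₁.hqp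
    · intro a ha; rw [H₁.hsupp a ha, H₂.hsupp a ha, mul_zero, add_zero]
    · intro a
      have d1 := H₁.hdir a
      have d2 := H₂'.hdir a
      nlinarith
    · intro a
      have m1 := H₁.hmag a
      have m2 := H₂'.hmag a
      calc |u₁ a + q₁ / p₂ * u₂ a| ≤ |u₁ a| + |q₁ / p₂ * u₂ a| := abs_add_le _ _
        _ ≤ min (ε / 2) p₂ * μ a.1 + ε / 2 * μ a.1 := add_le_add m1 m2
        _ ≤ ε / 2 * μ a.1 + ε / 2 * μ a.1 := by
            have h5 := hμ a.1
            have h6 := min_le_left (ε / 2) p₂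
            nlinarith
        _ = ε * μ a.1 := by ring
    · intro a ha
      by_cases h1 : u₁ a = 0
      · by_cases h2 : q₁ / p₂ * u₂ a = 0
        · exact absurd (by rw [h1, h2, add_zero]) ha
        · exact H₂'.hne a h2
      · exact H₁.hne a h1
    · obtain ⟨a, ha⟩ := H₁.hex
      refine ⟨a, ?_⟩
      have hxa : x a ≠ y a := H₁.hne a ha
      have d1 := H₁.hdir a
      have d2 := H₂'.hdir a
      rcases lt_or_gt_of_ne hxa with hlt | hgt
      · have h1 : u₁ a ≤ 0 := by nlinarith
        have h2 : q₁ / p₂ * u₂ a ≤ 0 := by nlinarith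
        have h3 : u₁ a < 0 := lt_of_le_of_ne h1 ha
        intro hc; nlinarith
      · have h1 : 0 ≤ u₁ a := by nlinarith
        have h2 : 0 ≤ q₁ / p₂ * u₂ a := by nlinarith
        have h3 : 0 < u₁ a := lt_of_le_of_ne h1 (Ne.symm ha)
        intro hc; nlinarith
    · intro k
      have l1 := H₁.hlin k
      have l2 := H₂'.hlin k
      have hladd : lin E γ (fun a => u₁ a + q₁ / p₂ * u₂ a) k
          = lin E γ u₁ k + lin E γ (fun a => q₁ / p₂ * u₂ a) k := lin_add E γ u₁ _ k
      rw [hladd]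
      have hmid : (if k = k₀ then μ k * (q₁ / p₂ * p₂) else 0)
          = (if k = k₀ then μ k * q₁ else 0) := by rw [hθp₂]
      rw [hmid] at l2
      linarith
end Push

section Key

open Relation

variable {V : Type*} [Fintype V] [DecidableEq V]
variable {E : Finset (V × V)} {γ : V × V → ℝ} {b : V → ℝ} {f : V × V → ℝ} {μ : V → ℝ}

lemma rel_arc {y : V × V → ℝ} {i j : V} (h : rel E γ f μ y i j) :
    ∃ a ∈ E, f a ≠ y a := by
  rcases h with ⟨hm, hlt⟩ | ⟨hm, hlt, -⟩
  · exact ⟨_, hm, ne_of_lt hlt⟩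
  · exact ⟨_, hm, (ne_of_lt hlt).symm⟩

lemma no_cycle (hμ : ∀ i, 0 < μ i) (hγpos : ∀ a ∈ E, 0 < γ a)
    (hdual : ∀ a ∈ E, γ a * μ a.1 ≤ μ a.2) (hf0 : ∀ a, 0 ≤ f a)
    {y : V × V → ℝ} (hy0 : ∀ a, 0 ≤ y a) (hysup : ∀ a ∉ E, y a = 0)
    (hmin : ∀ y' : V × V → ℝ, (∀ a, 0 ≤ y' a) → (∀ a ∉ E, y' a = 0) →
      (∀ k, excess E γ b y k ≤ excess E γ b y' k) →
      ¬ ((∑ a ∈ E, |f a / μ a.1 - y' a / μ a.1|)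
          < ∑ a ∈ E, |f a / μ a.1 - y a / μ a.1|)) :
    ∀ s, ¬ Relation.TransGen (rel E γ f μ y) s s := by
  intro s hcyc
  classical
  have hM : (E.filter (fun a => f a ≠ y a)).Nonempty := by
    have : ∃ a ∈ E, f a ≠ y a := by
      cases hcyc with
      | single h => exact rel_arc h
      | tail h1 h2 => exact rel_arc h2
    obtain ⟨a, ha, hne⟩ := this
    exact ⟨a, Finset.mem_filter.mpr ⟨ha, hne⟩⟩
  set m0 := (E.filter (fun a => f a ≠ y a)).inf' hM (fun a => |f a - y a| / μ a.1) with hm0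
  have hm0pos : 0 < m0 := by
    rw [hm0, Finset.lt_inf'_iff]
    intro a ha
    obtain ⟨-, hne⟩ := Finset.mem_filter.mp ha
    exact div_pos (abs_pos.mpr (sub_ne_zero.mpr hne)) (hμ a.1)
  obtain ⟨u, p, q, H⟩ := push_chain hμ hγpos hdual hcyc m0 hm0pos
  have hkey : ∀ a, u a ≠ 0 → a ∈ E ∧ |u a| ≤ |f a - y a| := by
    intro a ha
    have haE : a ∈ E := by
      by_contra h
      exact ha (H.hsupp a h)
    refine ⟨haE, ?_⟩
    have hne := H.hne a ha
    have hmem : a ∈ E.filter (fun a => f a ≠ y a) := Finset.mem_filter.mpr ⟨haE, hne⟩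
    have h1 : m0 ≤ |f a - y a| / μ a.1 := Finset.inf'_le _ hmem
    have h2 := H.hmag a
    have h3 : m0 * μ a.1 ≤ |f a - y a| / μ a.1 * μ a.1 :=
      mul_le_mul_of_nonneg_right h1 (hμ a.1).le
    rw [div_mul_cancel₀ _ (ne_of_gt (hμ a.1))] at h3
    linarith
  -- the modified flow
  refine hmin (fun a => y a + u a) ?_ ?_ ?_ ?_
  · intro a
    show 0 ≤ y a + u a
    by_cases hu : u a = 0
    · rw [hu, add_zero]; exact hy0 a
    · obtain ⟨haE, hmag⟩ := hkey a hu
      have hne := H.hne a hu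
      have hdir := H.hdir a
      rcases lt_or_gt_of_ne hne with hlt | hgt
      · -- f a < y a, so u a ≤ 0 but |u a| ≤ y a - f a
        have h1 : -(y a - f a) ≤ u a := by
          have := (abs_le.mp (le_trans hmag (le_of_eq (abs_of_neg (by linarith))))).1
          linarith [this]
        linarith [hf0 a]
      · have h1 : 0 ≤ u a := by nlinarith
        linarith [hy0 a]
  · intro a ha
    show y a + u a = 0
    rw [H.hsupp a ha, hysup a ha, add_zero]
  · intro k
    rw [excess_add E γ b y u k]
    have h1 := H.hlin k
    by_cases hk : k = s
    · rw [if_pos hk, if_pos hk] at h1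
      nlinarith [hμ k, H.hqp]
    · rw [if_neg hk, if_neg hk] at h1
      linarith
  · -- strict decrease of the ℓ¹ distance
    apply Finset.sum_lt_sum
    · intro a _
      show |f a / μ a.1 - (y a + u a) / μ a.1| ≤ |f a / μ a.1 - y a / μ a.1|
      by_cases hu : u a = 0
      · rw [hu, add_zero]
      · obtain ⟨haE, hmag⟩ := hkey a hu
        have hne := H.hne a hu
        have hdir := H.hdir a
        have hμa := hμ a.1
        have e1 : f a / μ a.1 - (y a + u a) / μ a.1 = (f a - y a - u a) / μ a.1 := by
          ring
        have e2 : f a / μ a.1 - y a / μ a.1 = (f a - y a) / μ a.1 := by ring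
        rw [e1, e2, abs_div, abs_div, abs_of_pos hμa]
        apply div_le_div_of_nonneg_right ?_ hμa.le
        rcases lt_or_gt_of_ne hne with hlt | hgt
        · have h1 : u a ≤ 0 := by nlinarith
          have h2 : -(y a - f a) ≤ u a := by
            have := (abs_le.mp (le_trans hmag (le_of_eq (abs_of_neg (by linarith))))).1
            linarith [this]
          rw [abs_of_neg (by linarith : f a - y a < 0)]
          rw [abs_of_nonpos (by linarith : f a - y a - u a ≤ 0)]
          linarith
        · have h1 : 0 ≤ u a := by nlinarith
          have h2 : u a ≤ f a - y a := by
            have := (abs_le.mp (le_trans hmag (le_of_eq (abs_of_pos (by linarith))))).2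
            linarith [this]
          rw [abs_of_pos (by linarith : 0 < f a - y a)]
          rw [abs_of_nonneg (by linarith : 0 ≤ f a - y a - u a)]
          linarith
    · obtain ⟨a, hu⟩ := H.hex
      obtain ⟨haE, hmag⟩ := hkey a hu
      refine ⟨a, haE, ?_⟩
      show |f a / μ a.1 - (y a + u a) / μ a.1| < |f a / μ a.1 - y a / μ a.1|
      have hne := H.hne a hu
      have hdir := H.hdir a
      have hμa := hμ a.1
      have e1 : f a / μ a.1 - (y a + u a) / μ a.1 = (f a - y a - u a) / μ a.1 := by ring
      have e2 : f a / μ a.1 - y a / μ a.1 = (f a - y a) / μ a.1 := by ring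
      rw [e1, e2, abs_div, abs_div, abs_of_pos hμa]
      apply div_lt_div_of_pos_right ?_ hμa
      rcases lt_or_gt_of_ne hne with hlt | hgt
      · have h1 : u a < 0 := by
          rcases lt_or_eq_of_le (by nlinarith : u a ≤ 0) with h | h
          · exact h
          · exact absurd h hu
        have h2 : -(y a - f a) ≤ u a := by
          have := (abs_le.mp (le_trans hmag (le_of_eq (abs_of_neg (by linarith))))).1
          linarith [this]
        rw [abs_of_neg (by linarith : f a - y a < 0)]
        rw [abs_of_nonpos (by linarith : f a - y a - u a ≤ 0)]
        linarith
      · have h1 : 0 < u a := by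
          rcases lt_or_eq_of_le (by nlinarith : 0 ≤ u a) with h | h
          · exact h
          · exact absurd h.symm hu
        have h2 : u a ≤ f a - y a := by
          have := (abs_le.mp (le_trans hmag (le_of_eq (abs_of_pos (by linarith))))).2
          linarith [this]
        rw [abs_of_pos (by linarith : 0 < f a - y a)]
        rw [abs_of_nonneg (by linarith : 0 ≤ f a - y a - u a)]
        linarith

end Key

section Cut

open Relation Finset

variable {V : Type*} [Fintype V] [DecidableEq V]
variable {E : Finset (V × V)} {γ : V × V → ℝ} {b : V → ℝ} {t : V} {f : V × V → ℝ}
  {μ : V → ℝ} {Δ : ℝ}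

lemma cut_main (hμ : ∀ i, 0 < μ i) (hγpos : ∀ a ∈ E, 0 < γ a)
    (hdual : ∀ a ∈ E, γ a * μ a.1 ≤ μ a.2) (hΔ : 0 ≤ Δ)
    (hfat : ∀ a ∈ E, Δ < f a / μ a.1 → μ a.2 ≤ γ a * μ a.1)
    (hexf0 : ∀ i, i ≠ t → 0 ≤ excess E γ b f i)
    {y : V × V → ℝ} (hy0 : ∀ a, 0 ≤ y a)
    (hyex : ∀ i, i ≠ t → 0 ≤ excess E γ b y i)
    (hyt : excess E γ b f t ≤ excess E γ b y t)
    (hacyc : ∀ s, ¬ Relation.TransGen (rel E γ f μ y) s s)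
    {a₀ : V × V} (ha₀ : a₀ ∈ E) {s : V}
    (hsplit : (f a₀ < y a₀ ∧ s = a₀.1) ∨
      (y a₀ < f a₀ ∧ μ a₀.2 ≤ γ a₀ * μ a₀.1 ∧ s = a₀.2)) :
    |f a₀ - y a₀| / μ a₀.1
      ≤ (∑ i ∈ Finset.univ.erase t, excess E γ b f i / μ i)
        + ((E.filter (fun a => γ a * μ a.1 < μ a.2)).card : ℝ) * Δ := by
  classical
  set D₀ : ℝ := |f a₀ - y a₀| / μ a₀.1 with hD₀
  set A : Finset V := Finset.univ.filter (fun i => Relation.ReflTransGen (rel E γ f μ y) i s)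
    with hA
  have hsA : s ∈ A := Finset.mem_filter.mpr ⟨Finset.mem_univ _, Relation.ReflTransGen.refl⟩
  have hAcl : ∀ i j, rel E γ f μ y i j → j ∈ A → i ∈ A := by
    intro i j hr hj
    exact Finset.mem_filter.mpr ⟨Finset.mem_univ _,
      Relation.ReflTransGen.head hr (Finset.mem_filter.mp hj).2⟩
  have hAnc : ∀ i j, rel E γ f μ y i j → i = s → j ∉ A := by
    intro i j hr hi hj
    subst hi
    exact hacyc i (Relation.TransGen.head' hr (Finset.mem_filter.mp hj).2)
  have heta : ((a₀.1, a₀.2) : V × V) = a₀ := Prod.mk.eta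
  -- per-node excess-difference identity
  have hgi : ∀ i, (excess E γ b f i - excess E γ b y i) / μ i
      = (∑ a ∈ E.filter (fun a => a.1 = i), (y a - f a) / μ a.1)
        - ∑ a ∈ E.filter (fun a => a.2 = i), γ a * (y a - f a) / μ a.2 := by
    intro i
    have e1 : (∑ a ∈ E.filter (fun a => a.1 = i), (y a - f a))
        = (∑ a ∈ E.filter (fun a => a.1 = i), y a)
          - ∑ a ∈ E.filter (fun a => a.1 = i), f a := Finset.sum_sub_distrib _ _
    have e2 : (∑ a ∈ E.filter (fun a => a.2 = i), γ a * (y a - f a))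
        = (∑ a ∈ E.filter (fun a => a.2 = i), γ a * y a)
          - ∑ a ∈ E.filter (fun a => a.2 = i), γ a * f a := by
      rw [← Finset.sum_sub_distrib]
      exact Finset.sum_congr rfl (fun a _ => by ring)
    have h1 : excess E γ b f i - excess E γ b y i
        = (∑ a ∈ E.filter (fun a => a.1 = i), (y a - f a))
          - ∑ a ∈ E.filter (fun a => a.2 = i), γ a * (y a - f a) := by
      unfold excess
      rw [e1, e2]
      ring
    rw [h1, sub_div, Finset.sum_div, Finset.sum_div]
    congr 1
    · exact Finset.sum_congr rfl (fun a ha => by rw [(Finset.mem_filter.mp ha).2])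
    · exact Finset.sum_congr rfl (fun a ha => by rw [(Finset.mem_filter.mp ha).2])
  -- cut identity
  have hcut : ∑ i ∈ A, (excess E γ b f i - excess E γ b y i) / μ i
      = ∑ a ∈ E, ((if a.1 ∈ A then (y a - f a) / μ a.1 else 0)
          - (if a.2 ∈ A then γ a * (y a - f a) / μ a.2 else 0)) := by
    rw [Finset.sum_congr rfl (fun i _ => hgi i), Finset.sum_sub_distrib,
      sum_over_cut E A Prod.fst (fun a => (y a - f a) / μ a.1),
      sum_over_cut E A Prod.snd (fun a => γ a * (y a - f a) / μ a.2),
      Finset.sum_filter, Finset.sum_filter, ← Finset.sum_sub_distrib]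
  -- upper bound by the total relabeled surplus
  have hupper : ∑ i ∈ A, (excess E γ b f i - excess E γ b y i) / μ i
      ≤ ∑ i ∈ Finset.univ.erase t, excess E γ b f i / μ i := by
    have hgle : ∀ i ∈ A.erase t,
        (excess E γ b f i - excess E γ b y i) / μ i ≤ excess E γ b f i / μ i := by
      intro i hi
      have hit : i ≠ t := (Finset.mem_erase.mp hi).1
      have h1 := hyex i hit
      exact div_le_div_of_nonneg_right (by linarith) (hμ i).le
    have hstep2 : ∑ i ∈ A.erase t, excess E γ b f i / μ i
        ≤ ∑ i ∈ Finset.univ.erase t, excess E γ b f i / μ i := by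
      apply Finset.sum_le_sum_of_subset_of_nonneg
        (Finset.erase_subset_erase t (Finset.subset_univ A))
      intro i hi _
      exact div_nonneg (hexf0 i (Finset.mem_erase.mp hi).1) (hμ i).le
    by_cases htA : t ∈ A
    · rw [← Finset.insert_erase htA, Finset.sum_insert (Finset.notMem_erase t A)]
      have hgt : (excess E γ b f t - excess E γ b y t) / μ t ≤ 0 := by
        have h2 : (excess E γ b f t - excess E γ b y t) / μ t ≤ 0 / μ t :=
          div_le_div_of_nonneg_right (by linarith) (hμ t).le
        rwa [zero_div] at h2
      have hsum2 := Finset.sum_le_sum hgle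
      linarith
    · rw [← Finset.erase_eq_of_notMem htA]
      exact le_trans (Finset.sum_le_sum hgle) hstep2
  -- per-arc lower bound on the cut terms
  have hTa : ∀ a ∈ E,
      (if a = a₀ then D₀ else 0) + (if γ a * μ a.1 < μ a.2 then -Δ else 0)
        ≤ (if a.1 ∈ A then (y a - f a) / μ a.1 else 0)
          - (if a.2 ∈ A then γ a * (y a - f a) / μ a.2 else 0) := by
    intro a ha
    have hμ1 := hμ a.1
    have hμ2 := hμ a.2
    have hγa := hγpos a ha
    have hda := hdual a ha
    have hetaa : ((a.1, a.2) : V × V) = a := Prod.mk.eta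
    have hbonus : (if γ a * μ a.1 < μ a.2 then -Δ else 0) ≤ 0 := by
      by_cases hb : γ a * μ a.1 < μ a.2
      · rw [if_pos hb]; linarith
      · rw [if_neg hb]
    rcases lt_trichotomy (f a) (y a) with hwpos | hweq | hwneg
    · -- forward arc
      have hstep : rel E γ f μ y a.1 a.2 :=
        Or.inl ⟨by rw [hetaa]; exact ha, by rw [hetaa]; exact hwpos⟩
      have hane : a ≠ a₀ → (if a = a₀ then D₀ else 0) = 0 := fun h => if_neg h
      by_cases h2 : a.2 ∈ A
      · have h1 : a.1 ∈ A := hAcl _ _ hstep h2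
        have haa₀ : a ≠ a₀ := by
          rintro rfl
          rcases hsplit with ⟨-, hs⟩ | ⟨hgt, -, -⟩
          · exact hAnc _ _ hstep hs.symm h2
          · linarith
        rw [if_pos h1, if_pos h2, if_neg haa₀]
        have hT : γ a * (y a - f a) / μ a.2 ≤ (y a - f a) / μ a.1 := by
          rw [div_le_div_iff₀ hμ2 hμ1]
          nlinarith
        linarith
      · rw [if_neg h2, sub_zero]
        by_cases he : a = a₀
        · rcases hsplit with ⟨hlt, hs⟩ | ⟨hgt, -, -⟩
          · have h1 : a.1 ∈ A := by rw [← he] at hs; rw [hs] at hsA; exact hsA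
            rw [if_pos h1, if_pos he]
            have hD : D₀ = (y a - f a) / μ a.1 := by
              rw [hD₀, ← he, abs_of_neg (by linarith : f a - y a < 0)]
              ring_nf
            rw [hD]
            linarith
          · rw [he] at hwpos; linarith
        · rw [if_neg he, zero_add]
          by_cases h1 : a.1 ∈ A
          · rw [if_pos h1]
            have : 0 ≤ (y a - f a) / μ a.1 := div_nonneg (by linarith) hμ1.le
            linarith
          · rw [if_neg h1]
            linarith
    · -- equal
      have hz : y a - f a = 0 := by linarith
      have hD : (if a = a₀ then D₀ else 0) = 0 := by
        by_cases he : a = a₀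
        · rw [if_pos he, hD₀, ← he, hweq, sub_self, abs_zero, zero_div]
        · rw [if_neg he]
      rw [hD, hz]
      have e1 : (if a.1 ∈ A then (0:ℝ) / μ a.1 else 0) = 0 := by
        by_cases h1 : a.1 ∈ A
        · rw [if_pos h1, zero_div]
        · rw [if_neg h1]
      have e2 : (if a.2 ∈ A then γ a * (0:ℝ) / μ a.2 else 0) = 0 := by
        by_cases h2 : a.2 ∈ A
        · rw [if_pos h2, mul_zero, zero_div]
        · rw [if_neg h2]
      rw [e1, e2]
      linarith
    · -- reverse arc
      by_cases htight : μ a.2 ≤ γ a * μ a.1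
      · -- tight arc
        have hnb : ¬ (γ a * μ a.1 < μ a.2) := not_lt.mpr htight
        rw [if_neg hnb, add_zero]
        have heqg : γ a * μ a.1 = μ a.2 := le_antisymm hda htight
        have heq2 : γ a * (y a - f a) / μ a.2 = (y a - f a) / μ a.1 := by
          rw [← heqg, mul_comm (γ a) (μ a.1)]
          rw [show γ a * (y a - f a) / (μ a.1 * γ a) = γ a * (y a - f a) / (γ a * μ a.1) by
            rw [mul_comm (μ a.1) (γ a)]]
          exact mul_div_mul_left _ _ (ne_of_gt hγa)
        have hstep : rel E γ f μ y a.2 a.1 :=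
          Or.inr ⟨by rw [hetaa]; exact ha, by rw [hetaa]; exact hwneg,
            by rw [hetaa]; exact htight⟩
        by_cases h1 : a.1 ∈ A
        · have h2 : a.2 ∈ A := hAcl _ _ hstep h1
          have haa₀ : a ≠ a₀ := by
            rintro rfl
            rcases hsplit with ⟨hlt, -⟩ | ⟨-, -, hs⟩
            · linarith
            · exact hAnc _ _ hstep hs.symm h1
          rw [if_pos h1, if_pos h2, heq2, sub_self, if_neg haa₀]
        · rw [if_neg h1]
          by_cases h2 : a.2 ∈ A
          · rw [if_pos h2, heq2, zero_sub]
            by_cases he : a = a₀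
            · rw [if_pos he]
              have hD : D₀ = -((y a - f a) / μ a.1) := by
                rw [hD₀, ← he, abs_of_pos (by linarith : 0 < f a - y a)]
                ring_nf
              rw [hD]
            · rw [if_neg he]
              have : (y a - f a) / μ a.1 ≤ 0 :=
                div_nonpos_of_nonpos_of_nonneg (by linarith) hμ1.le
              linarith
          · rw [if_neg h2, sub_zero]
            have haa₀ : a ≠ a₀ := by
              rintro rfl
              rcases hsplit with ⟨hlt, -⟩ | ⟨-, -, hs⟩
              · linarith
              · rw [← hs] at h2; exact h2 hsA
            rw [if_neg haa₀]
      · -- non-tight arc: use the Δ bound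
        have hfhat : f a / μ a.1 ≤ Δ := by
          by_contra h
          push_neg at h
          exact htight (hfat a ha h)
        have haa₀ : a ≠ a₀ := by
          rintro rfl
          rcases hsplit with ⟨hlt, -⟩ | ⟨-, ht2, -⟩
          · linarith
          · exact htight ht2
        have hb : γ a * μ a.1 < μ a.2 := lt_of_not_ge htight
        rw [if_neg haa₀, if_pos hb, zero_add]
        have ht1 : (y a - f a) / μ a.1
            ≤ (if a.1 ∈ A then (y a - f a) / μ a.1 else 0) := by
          by_cases h1 : a.1 ∈ A
          · rw [if_pos h1]
          · rw [if_neg h1]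
            exact div_nonpos_of_nonpos_of_nonneg (by linarith) hμ1.le
        have ht2 : (if a.2 ∈ A then γ a * (y a - f a) / μ a.2 else 0) ≤ 0 := by
          by_cases h2 : a.2 ∈ A
          · rw [if_pos h2]
            exact div_nonpos_of_nonpos_of_nonneg (by nlinarith) hμ2.le
          · rw [if_neg h2]
        have ht3 : -Δ ≤ (y a - f a) / μ a.1 := by
          have hy : 0 ≤ y a / μ a.1 := div_nonneg (hy0 a) hμ1.le
          have : (y a - f a) / μ a.1 = y a / μ a.1 - f a / μ a.1 := by ring
          rw [this]
          linarith
        linarith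
    -- end hTa
  have hlower : D₀ - ((E.filter (fun a => γ a * μ a.1 < μ a.2)).card : ℝ) * Δ
      ≤ ∑ a ∈ E, ((if a.1 ∈ A then (y a - f a) / μ a.1 else 0)
          - (if a.2 ∈ A then γ a * (y a - f a) / μ a.2 else 0)) := by
    have h1 := Finset.sum_le_sum hTa
    have h2 : ∑ a ∈ E, ((if a = a₀ then D₀ else 0)
        + (if γ a * μ a.1 < μ a.2 then -Δ else 0))
        = D₀ - ((E.filter (fun a => γ a * μ a.1 < μ a.2)).card : ℝ) * Δ := by
      rw [Finset.sum_add_distrib]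
      rw [Finset.sum_ite_eq' E a₀ (fun _ => D₀), if_pos ha₀]
      have h3 : ∑ a ∈ E, (if γ a * μ a.1 < μ a.2 then -Δ else 0)
          = ∑ a ∈ E.filter (fun a => γ a * μ a.1 < μ a.2), -Δ := by
        rw [Finset.sum_filter]
      rw [h3, Finset.sum_const, nsmul_eq_mul]
      ring
    linarith
  rw [hcut] at hupper
  linarith

end Cut

section PerArc

open Relation Finset

variable {V : Type*} [Fintype V] [DecidableEq V]
variable {E : Finset (V × V)} {γ : V × V → ℝ} {b : V → ℝ} {t : V} {f : V × V → ℝ}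
  {μ : V → ℝ} {Δ : ℝ}

lemma perarc_bound (hμ : ∀ i, 0 < μ i) (hγpos : ∀ a ∈ E, 0 < γ a)
    (hdual : ∀ a ∈ E, γ a * μ a.1 ≤ μ a.2) (hΔ : 0 ≤ Δ)
    (hf0 : ∀ a, 0 ≤ f a)
    (hfat : ∀ a ∈ E, Δ < f a / μ a.1 → μ a.2 ≤ γ a * μ a.1)
    (hexf0 : ∀ i, i ≠ t → 0 ≤ excess E γ b f i)
    {y : V × V → ℝ} (hy0 : ∀ a, 0 ≤ y a) (hysup : ∀ a ∉ E, y a = 0)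
    (hyex : ∀ i, i ≠ t → 0 ≤ excess E γ b y i)
    (hyt : excess E γ b f t ≤ excess E γ b y t)
    (hmin : ∀ y' : V × V → ℝ, (∀ a, 0 ≤ y' a) → (∀ a ∉ E, y' a = 0) →
      (∀ k, excess E γ b y k ≤ excess E γ b y' k) →
      ¬ ((∑ a ∈ E, |f a / μ a.1 - y' a / μ a.1|)
          < ∑ a ∈ E, |f a / μ a.1 - y a / μ a.1|)) :
    ∀ a₀ ∈ E, |f a₀ / μ a₀.1 - y a₀ / μ a₀.1|
      ≤ (∑ i ∈ Finset.univ.erase t, excess E γ b f i / μ i)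
        + (((E.filter (fun a => γ a * μ a.1 < μ a.2)).card : ℝ) + 1) * Δ := by
  have hacyc := no_cycle hμ hγpos hdual hf0 hy0 hysup hmin
  intro a₀ ha₀
  have hμ1 := hμ a₀.1
  have habs : |f a₀ / μ a₀.1 - y a₀ / μ a₀.1| = |f a₀ - y a₀| / μ a₀.1 := by
    rw [div_sub_div_same, abs_div, abs_of_pos hμ1]
  have hEx0 : 0 ≤ ∑ i ∈ Finset.univ.erase t, excess E γ b f i / μ i := by
    apply Finset.sum_nonneg
    intro i hi
    exact div_nonneg (hexf0 i (Finset.mem_erase.mp hi).1) (hμ i).le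
  have hcard0 : (0:ℝ) ≤ ((E.filter (fun a => γ a * μ a.1 < μ a.2)).card : ℝ) :=
    Nat.cast_nonneg _
  rw [habs]
  rcases lt_trichotomy (f a₀) (y a₀) with hlt | heq | hgt
  · have hcm := cut_main hμ hγpos hdual hΔ hfat hexf0 hy0 hyex hyt hacyc ha₀
      (Or.inl ⟨hlt, rfl⟩)
    linarith
  · rw [heq, sub_self, abs_zero, zero_div]
    nlinarith
  · by_cases htight : μ a₀.2 ≤ γ a₀ * μ a₀.1
    · have hcm := cut_main hμ hγpos hdual hΔ hfat hexf0 hy0 hyex hyt hacyc ha₀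
        (Or.inr ⟨hgt, htight, rfl⟩)
      linarith
    · have hfhat : f a₀ / μ a₀.1 ≤ Δ := by
        by_contra h
        push_neg at h
        exact htight (hfat a₀ ha₀ h)
      have h1 : |f a₀ - y a₀| / μ a₀.1 ≤ f a₀ / μ a₀.1 := by
        rw [abs_of_pos (by linarith : 0 < f a₀ - y a₀)]
        exact div_le_div_of_nonneg_right (by linarith [hy0 a₀]) hμ1.le
      nlinarith

end PerArc

/-- proximity of a Δ-feasible pair to an optimal solution:
there is an optimal f* with ‖f^μ − (f*)^μ‖_∞ ≤ Ex^μ(f) + (|F^μ| + 1)Δ. -/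
theorem proximity_to_optimal {V : Type*} [Fintype V] [DecidableEq V]
    (E : Finset (V × V)) (γ : V × V → ℝ) (b : V → ℝ) (t : V)
    (f : V × V → ℝ) (μ : V → ℝ) (Δ : ℝ) (hΔ : 0 ≤ Δ)
    (hγ : ∀ a ∈ E, 0 < γ a)
    -- every node has an arc to the sink
    (hstar : ∀ i, i ≠ t → (i, t) ∈ E)
    -- the objective is bounded
    (hbdd : ∃ M : ℝ, ∀ g, primalFeas E γ b t g → excess E γ b g t ≤ M)
    -- Δ-feasibility of (f, μ):
    (hf0 : ∀ a, 0 ≤ f a) (hfE : ∀ a ∉ E, f a = 0)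
    (hμt : μ t = 1) (hμpos : ∀ i, i ≠ t → 0 < μ i)
    (hdual : ∀ a ∈ E, γ a * μ a.1 ≤ μ a.2)
    (hfat : ∀ a ∈ E, Δ < f a / μ a.1 → μ a.2 ≤ γ a * μ a.1)
    (hres : ∀ i, i ≠ t → reserve E γ μ f i ≤ excess E γ b f i) :
    ∃ fs : V × V → ℝ,
      (primalFeas E γ b t fs ∧
        ∀ g, primalFeas E γ b t g → excess E γ b g t ≤ excess E γ b fs t) ∧
      ∀ a ∈ E, |f a / μ a.1 - fs a / μ a.1|
          ≤ (∑ i ∈ Finset.univ.erase t, excess E γ b f i / μ i)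
            + (((E.filter (fun a => γ a * μ a.1 < μ a.2)).card : ℝ) + 1) * Δ := by
  classical
  set B₀ : ℝ := (∑ i ∈ Finset.univ.erase t, excess E γ b f i / μ i)
      + (((E.filter (fun a => γ a * μ a.1 < μ a.2)).card : ℝ) + 1) * Δ with hB₀def
  have hμ : ∀ i, 0 < μ i := by
    intro i
    by_cases h : i = t
    · rw [h, hμt]; norm_num
    · exact hμpos i h
  have hexf0 : ∀ i, i ≠ t → 0 ≤ excess E γ b f i := by
    intro i hi
    refine le_trans ?_ (hres i hi)
    unfold reserve
    exact Finset.sum_nonneg fun a ha =>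
      mul_nonneg (hγ a (Finset.mem_filter.mp ha).1).le (hf0 a)
  have hEx0 : 0 ≤ ∑ i ∈ Finset.univ.erase t, excess E γ b f i / μ i :=
    Finset.sum_nonneg fun i hi =>
      div_nonneg (hexf0 i (Finset.mem_erase.mp hi).1) (hμ i).le
  have hcard0 : (0:ℝ) ≤ ((E.filter (fun a => γ a * μ a.1 < μ a.2)).card : ℝ) :=
    Nat.cast_nonneg _
  have hB₀ : 0 ≤ B₀ := by rw [hB₀def]; nlinarith
  -- continuity facts
  have hexc : ∀ i, Continuous fun g : (V × V) → ℝ => excess E γ b g i := by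
    intro i
    unfold excess
    exact ((continuous_finset_sum _ fun a _ => continuous_const.mul (continuous_apply a)).sub
      (continuous_finset_sum _ fun a _ => continuous_apply a)).sub continuous_const
  have hΦc : Continuous fun g : (V × V) → ℝ => ∑ a ∈ E, |f a / μ a.1 - g a / μ a.1| :=
    continuous_finset_sum _ fun a _ =>
      (continuous_const.sub ((continuous_apply a).div_const _)).abs
  -- closedness of the basic pieces
  have hclosed1 : IsClosed {g : (V × V) → ℝ | ∀ a, 0 ≤ g a} := by
    rw [Set.setOf_forall]
    exact isClosed_iInter fun a => isClosed_le continuous_const (continuous_apply a)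
  have hclosed2 : IsClosed {g : (V × V) → ℝ | ∀ a ∉ E, g a = 0} := by
    rw [Set.setOf_forall]
    refine isClosed_iInter fun a => ?_
    by_cases ha : a ∈ E
    · convert isClosed_univ using 1
      ext g; simp [ha]
    · convert isClosed_eq (continuous_apply a)
        (continuous_const : Continuous fun _ : ((V × V) → ℝ) => (0:ℝ)) using 1
      ext g; simp [ha]
  have hclosed3 : IsClosed {g : (V × V) → ℝ | ∀ i, i ≠ t → 0 ≤ excess E γ b g i} := by
    rw [Set.setOf_forall]
    refine isClosed_iInter fun i => ?_
    by_cases hi : i = t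
    · convert isClosed_univ using 1
      ext g; simp [hi]
    · convert isClosed_le
        (continuous_const : Continuous fun _ : ((V × V) → ℝ) => (0:ℝ)) (hexc i) using 1
      ext g; simp [hi]
  have hclosed4 : IsClosed {g : (V × V) → ℝ | ∀ a ∈ E, |f a / μ a.1 - g a / μ a.1| ≤ B₀} := by
    rw [Set.setOf_forall]
    refine isClosed_iInter fun a => ?_
    by_cases ha : a ∈ E
    · convert isClosed_le
        (((continuous_const : Continuous fun _ : ((V × V) → ℝ) => f a / μ a.1).sub
          ((continuous_apply a).div_const (μ a.1))).abs)
        (continuous_const : Continuous fun _ : ((V × V) → ℝ) => B₀) using 1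
      ext g; simp [ha]
    · convert isClosed_univ using 1
      ext g; simp [ha]
  -- a compact box
  have hbox : ∀ R : ℝ, IsCompact (Set.pi Set.univ fun a : V × V =>
      Set.Icc (0:ℝ) ((f a / μ a.1 + R) * μ a.1)) :=
    fun R => isCompact_univ_pi fun a => isCompact_Icc
  have hsubbox : ∀ (R : ℝ) (g : (V × V) → ℝ), 0 ≤ R → (∀ a, 0 ≤ g a) →
      (∀ a ∉ E, g a = 0) → (∀ a ∈ E, |f a / μ a.1 - g a / μ a.1| ≤ R) →
      g ∈ Set.pi Set.univ fun a : V × V => Set.Icc (0:ℝ) ((f a / μ a.1 + R) * μ a.1) := by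
    intro R g hR hg0 hgs hgb a _
    refine ⟨hg0 a, ?_⟩
    by_cases ha : a ∈ E
    · have h1 := (abs_le.mp (hgb a ha)).1
      have h2 : g a / μ a.1 ≤ f a / μ a.1 + R := by linarith
      exact (div_le_iff₀ (hμ a.1)).mp h2
    · rw [hgs a ha]
      have h3 : 0 ≤ f a / μ a.1 := div_nonneg (hf0 a) (hμ a.1).le
      nlinarith [hμ a.1]
  -- the compact candidate set
  set Copt : Set ((V × V) → ℝ) := {g | (∀ a, 0 ≤ g a) ∧ (∀ a ∉ E, g a = 0) ∧
      (∀ i, i ≠ t → 0 ≤ excess E γ b g i) ∧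
      ∀ a ∈ E, |f a / μ a.1 - g a / μ a.1| ≤ B₀} with hCopt
  have hCeq : Copt = {g : (V × V) → ℝ | ∀ a, 0 ≤ g a} ∩ ({g | ∀ a ∉ E, g a = 0} ∩
      ({g | ∀ i, i ≠ t → 0 ≤ excess E γ b g i} ∩
        {g | ∀ a ∈ E, |f a / μ a.1 - g a / μ a.1| ≤ B₀})) := by
    ext g
    simp only [hCopt, Set.mem_setOf_eq, Set.mem_inter_iff]
  have hCclosed : IsClosed Copt := by
    rw [hCeq]
    exact hclosed1.inter (hclosed2.inter (hclosed3.inter hclosed4))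
  have hCcompact : IsCompact Copt :=
    (hbox B₀).of_isClosed_subset hCclosed
      (fun g hg => hsubbox B₀ g hB₀ hg.1 hg.2.1 hg.2.2.2)
  have hCne : Copt.Nonempty := by
    refine ⟨f, hf0, hfE, hexf0, fun a ha => ?_⟩
    rw [sub_self, abs_zero]
    exact hB₀
  obtain ⟨gs, hgsC, hgsmax⟩ := hCcompact.exists_isMaxOn hCne (hexc t).continuousOn
  -- every feasible point is dominated by a member of Copt
  have hdom : ∀ g : (V × V) → ℝ, primalFeas E γ b t g →
      ∃ y ∈ Copt, excess E γ b g t ≤ excess E γ b y t := by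
    intro g hg
    have hgEex : ∀ i, excess E γ b (fun a => if a ∈ E then g a else 0) i
        = excess E γ b g i := by
      intro i
      unfold excess
      have e2 : ∑ a ∈ E.filter (fun a => a.2 = i), γ a * (if a ∈ E then g a else 0)
          = ∑ a ∈ E.filter (fun a => a.2 = i), γ a * g a :=
        Finset.sum_congr rfl fun a ha => by rw [if_pos (Finset.mem_filter.mp ha).1]
      have e1 : ∑ a ∈ E.filter (fun a => a.1 = i), (if a ∈ E then g a else 0)
          = ∑ a ∈ E.filter (fun a => a.1 = i), g a :=
        Finset.sum_congr rfl fun a ha => by rw [if_pos (Finset.mem_filter.mp ha).1]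
      rw [e1, e2]
    set c := max (excess E γ b f t) (excess E γ b g t) with hc
    have hstart : ∃ g₁ : (V × V) → ℝ, (∀ a, 0 ≤ g₁ a) ∧ (∀ a ∉ E, g₁ a = 0) ∧
        (∀ i, i ≠ t → 0 ≤ excess E γ b g₁ i) ∧ c ≤ excess E γ b g₁ t := by
      by_cases hcase : excess E γ b g t ≤ excess E γ b f t
      · exact ⟨f, hf0, hfE, hexf0, max_le (le_refl _) hcase⟩
      · refine ⟨fun a => if a ∈ E then g a else 0, ?_, ?_, ?_, ?_⟩
        · intro a
          show (0:ℝ) ≤ if a ∈ E then g a else 0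
          by_cases ha : a ∈ E
          · rw [if_pos ha]; exact hg.1 a
          · rw [if_neg ha]
        · intro a ha
          show (if a ∈ E then g a else 0) = 0
          rw [if_neg ha]
        · intro i hi
          rw [hgEex]
          exact hg.2 i hi
        · rw [hgEex]
          exact max_le (by linarith) (le_refl _)
    obtain ⟨g₁, hg₁0, hg₁s, hg₁ex, hg₁t⟩ := hstart
    set R := ∑ a ∈ E, |f a / μ a.1 - g₁ a / μ a.1| with hR
    have hR0 : 0 ≤ R := Finset.sum_nonneg fun a _ => abs_nonneg _
    set S : Set ((V × V) → ℝ) := {h | (∀ a, 0 ≤ h a) ∧ (∀ a ∉ E, h a = 0) ∧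
        (∀ i, i ≠ t → 0 ≤ excess E γ b h i) ∧ c ≤ excess E γ b h t ∧
        (∑ a ∈ E, |f a / μ a.1 - h a / μ a.1|) ≤ R} with hS
    have hSeq : S = {g : (V × V) → ℝ | ∀ a, 0 ≤ g a} ∩ ({g | ∀ a ∉ E, g a = 0} ∩
        ({g | ∀ i, i ≠ t → 0 ≤ excess E γ b g i} ∩
          ({g | c ≤ excess E γ b g t} ∩
            {g | (∑ a ∈ E, |f a / μ a.1 - g a / μ a.1|) ≤ R}))) := by
      ext g'
      simp only [hS, Set.mem_setOf_eq, Set.mem_inter_iff]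
    have hSclosed : IsClosed S := by
      rw [hSeq]
      exact hclosed1.inter (hclosed2.inter (hclosed3.inter
        ((isClosed_le continuous_const (hexc t)).inter
          (isClosed_le hΦc continuous_const))))
    have hScompact : IsCompact S := by
      refine (hbox R).of_isClosed_subset hSclosed (fun h hh => ?_)
      refine hsubbox R h hR0 hh.1 hh.2.1 (fun a ha => ?_)
      exact le_trans (Finset.single_le_sum
        (f := fun a => |f a / μ a.1 - h a / μ a.1|) (fun a _ => abs_nonneg _) ha) hh.2.2.2.2
    have hSne : S.Nonempty := ⟨g₁, hg₁0, hg₁s, hg₁ex, hg₁t, le_refl R⟩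
    obtain ⟨y, hyS, hymin⟩ := hScompact.exists_isMinOn hSne hΦc.continuousOn
    obtain ⟨hy0, hysup, hyex, hyt, hyΦ⟩ := hyS
    have hmin : ∀ y' : V × V → ℝ, (∀ a, 0 ≤ y' a) → (∀ a ∉ E, y' a = 0) →
        (∀ k, excess E γ b y k ≤ excess E γ b y' k) →
        ¬ ((∑ a ∈ E, |f a / μ a.1 - y' a / μ a.1|)
            < ∑ a ∈ E, |f a / μ a.1 - y a / μ a.1|) := by
      intro y' h0 hs hdomk hΦlt
      have hy'S : y' ∈ S := by
        refine ⟨h0, hs, fun i hi => le_trans (hyex i hi) (hdomk i),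
          le_trans hyt (hdomk t), ?_⟩
        linarith
      exact absurd hΦlt (not_lt.mpr (isMinOn_iff.mp hymin y' hy'S))
    have hyft : excess E γ b f t ≤ excess E γ b y t :=
      le_trans (le_max_left _ _) hyt
    have hbound := perarc_bound hμ hγ hdual hΔ hf0 hfat hexf0 hy0 hysup hyex hyft hmin
    exact ⟨y, ⟨hy0, hysup, hyex, hbound⟩, le_trans (le_max_right _ _) hyt⟩
  refine ⟨gs, ⟨⟨hgsC.1, hgsC.2.2.1⟩, ?_⟩, hgsC.2.2.2⟩
  intro g hg
  obtain ⟨y, hyC, hgy⟩ := hdom g hg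
  exact le_trans hgy (isMaxOn_iff.mp hgsmax y hyC)
end

section
/- Let pq ∈ E with p ≠ t be an arc such that γ_{pq} μ*_p = μ*_q in every optimal solution μ* of the dual (D). Contract pq to obtain instance (V', E', t, b', γ') with V' = V ∖ {p}, gain γ'_{iq} = γ_{ip} γ_{pq} for former arcs ip, γ'_{qi} = γ_{pi}/γ_{pq} for former arcs pi, and b'_q = b_q + γ_{pq} b_p. If μ' is an optimal dual solution of the contracted instance, then the extension μ given by μ_i = μ'_i for i ≠ p and μ_p = μ'_q / γ_{pq} is an optimal dual solution of the original instance. -/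
/-- Dual feasibility for the original instance. -/
def dualFeas {V : Type*} (E : Finset (V × V)) (γ : V × V → ℝ) (t : V)
    (ν : V → ℝ) : Prop :=
  ν t = 1 ∧ (∀ i, i ≠ t → 0 < ν i) ∧ ∀ a ∈ E, γ a * ν a.1 ≤ ν a.2

/-- Dual objective for the original instance. -/
noncomputable def dualObj {V : Type*} [Fintype V] (b : V → ℝ) (ν : V → ℝ) : ℝ :=
  ∑ i, b i / ν i

/-- Dual feasibility for the contracted instance (node `p` deleted). -/
def dualFeasC {V : Type*} (E' : Finset (V × V)) (γ' : V × V → ℝ) (t p : V)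
    (ν : V → ℝ) : Prop :=
  ν t = 1 ∧ (∀ i, i ≠ t → i ≠ p → 0 < ν i) ∧ ∀ a ∈ E', γ' a * ν a.1 ≤ ν a.2

/-- Dual objective for the contracted instance. -/
noncomputable def dualObjC {V : Type*} [Fintype V] [DecidableEq V] (b' : V → ℝ)
    (p : V) (ν : V → ℝ) : ℝ :=
  ∑ i ∈ Finset.univ.erase p, b' i / ν i

/-- contracting an arc pq (p ≠ t) that is tight in every optimal
dual solution, and extending an optimal dual solution μ' of the contracted
instance by μ_p = μ'_q / γ_{pq}, yields an optimal dual solution of the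
original instance. -/
theorem contracted_dual_extends {V : Type*} [Fintype V] [DecidableEq V]
    (E E' : Finset (V × V)) (γ γ' : V × V → ℝ) (b b' : V → ℝ) (t p q : V)
    (hγ : ∀ a ∈ E, 0 < γ a)
    (hpq : (p, q) ∈ E) (hpt : p ≠ t) (hqp : q ≠ p)
    -- description of the contracted instance:
    (hE' : ∀ i j : V, ((i, j) ∈ E' ↔ (i ≠ p ∧ j ≠ p ∧ ¬(i = q ∧ j = q) ∧
        ((i, j) ∈ E ∨ (j = q ∧ (i, p) ∈ E) ∨ (i = q ∧ (p, j) ∈ E)))))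
    (hub1 : ∀ i j : V, (i, j) ∈ E' → (i, j) ∈ E → γ (i, j) ≤ γ' (i, j))
    (hub2 : ∀ i j : V, (i, j) ∈ E' → j = q → (i, p) ∈ E →
        γ (i, p) * γ (p, q) ≤ γ' (i, j))
    (hub3 : ∀ i j : V, (i, j) ∈ E' → i = q → (p, j) ∈ E →
        γ (p, j) / γ (p, q) ≤ γ' (i, j))
    (hattain : ∀ i j : V, (i, j) ∈ E' →
        ((i, j) ∈ E ∧ γ' (i, j) = γ (i, j)) ∨
        (j = q ∧ (i, p) ∈ E ∧ γ' (i, j) = γ (i, p) * γ (p, q)) ∨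
        (i = q ∧ (p, j) ∈ E ∧ γ' (i, j) = γ (p, j) / γ (p, q)))
    (hb' : ∀ i, i ≠ p → b' i = if i = q then b q + γ (p, q) * b p else b i)
    -- pq is tight in every optimal dual solution of the original instance
    (htight : ∀ ν : V → ℝ, dualFeas E γ t ν →
        (∀ ν', dualFeas E γ t ν' → dualObj b ν' ≤ dualObj b ν) →
        γ (p, q) * ν p = ν q)
    -- the original dual has an optimal solution
    (hexists : ∃ ν : V → ℝ, dualFeas E γ t ν ∧
        ∀ ν', dualFeas E γ t ν' → dualObj b ν' ≤ dualObj b ν)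
    -- μ' is an optimal dual solution of the contracted instance
    (μ' : V → ℝ)
    (hμ'feas : dualFeasC E' γ' t p μ')
    (hμ'opt : ∀ ν', dualFeasC E' γ' t p ν' → dualObjC b' p ν' ≤ dualObjC b' p μ')
    -- the extension μ
    (μ : V → ℝ)
    (hμdef : ∀ i, μ i = if i = p then μ' q / γ (p, q) else μ' i) :
    dualFeas E γ t μ ∧ ∀ ν, dualFeas E γ t ν → dualObj b ν ≤ dualObj b μ := by
  classical
  obtain ⟨ν₀, hν₀feas, hν₀opt⟩ := hexists
  have hγpq : 0 < γ (p, q) := hγ _ hpq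
  have htp : t ≠ p := fun h => hpt h.symm
  obtain ⟨hμ't, hμ'pos, hμ'arc⟩ := hμ'feas
  have hμ'qpos : 0 < μ' q := by
    rcases eq_or_ne q t with h | h
    · rw [h, hμ't]; norm_num
    · exact hμ'pos q h hqp
  have hμ'ipos : ∀ i, i ≠ p → 0 < μ' i := by
    intro i hip
    rcases eq_or_ne i t with h | h
    · rw [h, hμ't]; norm_num
    · exact hμ'pos i h hip
  have hν₀pos : ∀ i, 0 < ν₀ i := by
    intro i
    rcases eq_or_ne i t with h | h
    · rw [h, hν₀feas.1]; norm_num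
    · exact hν₀feas.2.1 i h
  have hν₀arc := hν₀feas.2.2
  have hν₀tight : γ (p, q) * ν₀ p = ν₀ q := htight ν₀ hν₀feas hν₀opt
  -- loop facts
  have hloop_qq : (q, q) ∈ E → γ (q, q) ≤ 1 := by
    intro h
    have h1 : γ (q, q) * ν₀ q ≤ ν₀ q := hν₀arc _ h
    have h2 := hν₀pos q
    nlinarith
  have hloop_pp : (p, p) ∈ E → γ (p, p) ≤ 1 := by
    intro h
    have h1 : γ (p, p) * ν₀ p ≤ ν₀ p := hν₀arc _ h
    have h2 := hν₀pos p
    nlinarith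
  have hloop_qp : (q, p) ∈ E → γ (q, p) * γ (p, q) ≤ 1 := by
    intro h
    have h1 : γ (q, p) * ν₀ q ≤ ν₀ p := hν₀arc _ h
    have h2 := hν₀pos p
    rw [← hν₀tight] at h1
    nlinarith
  have hμp : μ p = μ' q / γ (p, q) := by rw [hμdef]; simp
  have hμne : ∀ i, i ≠ p → μ i = μ' i := by
    intro i hip; rw [hμdef, if_neg hip]
  have hμppos : 0 < μ p := by rw [hμp]; positivity
  -- feasibility of μ
  have hμfeas : dualFeas E γ t μ := by
    refine ⟨by rw [hμne t htp]; exact hμ't, ?_, ?_⟩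
    · intro i hit
      rcases eq_or_ne i p with h | h
      · rw [h]; exact hμppos
      · rw [hμne i h]; exact hμ'ipos i h
    · rintro ⟨i, j⟩ ha
      show γ (i, j) * μ i ≤ μ j
      by_cases hip : i = p
      · rw [hip] at ha ⊢
        by_cases hjp : j = p
        · rw [hjp] at ha ⊢
          have := hloop_pp ha
          nlinarith [hμppos]
        · rw [hμne j hjp, hμp]
          by_cases hjq : j = q
          · rw [hjq] at ha ⊢
            exact le_of_eq (by field_simp)
          · have hmem : (q, j) ∈ E' := by
              rw [hE']
              exact ⟨hqp, hjp, by simp [hjq], Or.inr (Or.inr ⟨rfl, ha⟩)⟩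
            have h1 := hub3 q j hmem rfl ha
            have h2 : γ' (q, j) * μ' q ≤ μ' j := hμ'arc _ hmem
            have h3 : γ (p, j) / γ (p, q) * μ' q ≤ μ' j := le_trans
              (mul_le_mul_of_nonneg_right h1 hμ'qpos.le) h2
            calc γ (p, j) * (μ' q / γ (p, q)) = γ (p, j) / γ (p, q) * μ' q := by ring
              _ ≤ μ' j := h3
      · by_cases hjp : j = p
        · rw [hjp] at ha ⊢
          rw [hμne i hip, hμp, le_div_iff₀ hγpq]
          by_cases hiq : i = q
          · rw [hiq] at ha ⊢
            have := hloop_qp ha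
            nlinarith [hμ'qpos]
          · have hmem : (i, q) ∈ E' := by
              rw [hE']
              exact ⟨hip, hqp, by simp [hiq], Or.inr (Or.inl ⟨rfl, ha⟩)⟩
            have h1 := hub2 i q hmem rfl ha
            have h2 : γ' (i, q) * μ' i ≤ μ' q := hμ'arc _ hmem
            have hi := hμ'ipos i hip
            nlinarith
        · rw [hμne i hip, hμne j hjp]
          by_cases hqq : i = q ∧ j = q
          · obtain ⟨h1, h2⟩ := hqq
            rw [h1, h2] at ha ⊢
            have := hloop_qq ha
            nlinarith [hμ'qpos]
          · have hmem : (i, j) ∈ E' := by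
              rw [hE']
              exact ⟨hip, hjp, hqq, Or.inl ha⟩
            have h1 := hub1 i j hmem ha
            have h2 : γ' (i, j) * μ' i ≤ μ' j := hμ'arc _ hmem
            have hi := hμ'ipos i hip
            nlinarith
  refine ⟨hμfeas, ?_⟩
  -- objective equality for tight feasible solutions
  have key : ∀ ν : V → ℝ, (∀ i, 0 < ν i) → γ (p, q) * ν p = ν q →
      dualObj b ν = dualObjC b' p ν := by
    intro ν hpos htt
    have hνp : 0 < ν p := hpos p
    have hνq : 0 < ν q := hpos q
    have hqmem : q ∈ Finset.univ.erase p := Finset.mem_erase.mpr ⟨hqp, Finset.mem_univ q⟩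
    have h1 : dualObj b ν =
        b p / ν p + (b q / ν q + ∑ i ∈ (Finset.univ.erase p).erase q, b i / ν i) := by
      rw [dualObj, ← Finset.add_sum_erase _ _ (Finset.mem_univ p),
        ← Finset.add_sum_erase _ _ hqmem]
    have h2 : dualObjC b' p ν =
        (b q + γ (p, q) * b p) / ν q + ∑ i ∈ (Finset.univ.erase p).erase q, b i / ν i := by
      rw [dualObjC, ← Finset.add_sum_erase _ _ hqmem, hb' q hqp, if_pos rfl]
      congr 1
      refine Finset.sum_congr rfl fun i hi => ?_
      have hiq := (Finset.mem_erase.mp hi).1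
      have hip := (Finset.mem_erase.mp (Finset.mem_erase.mp hi).2).1
      rw [hb' i hip, if_neg hiq]
    rw [h1, h2]
    have hbp : b p / ν p = γ (p, q) * b p / ν q := by
      rw [← htt]
      field_simp
    rw [hbp]
    ring
  -- ν₀ restricted is feasible for the contracted instance
  have hν₀C : dualFeasC E' γ' t p ν₀ := by
    refine ⟨hν₀feas.1, fun i h _ => hν₀feas.2.1 i h, ?_⟩
    rintro ⟨i, j⟩ ha
    show γ' (i, j) * ν₀ i ≤ ν₀ j
    rcases hattain i j ha with ⟨hmem, hg⟩ | ⟨hj, hmem, hg⟩ | ⟨hi, hmem, hg⟩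
    · rw [hg]; exact hν₀arc _ hmem
    · rw [hg, hj]
      have h1 : γ (i, p) * ν₀ i ≤ ν₀ p := hν₀arc _ hmem
      nlinarith [hν₀tight, hν₀pos i, hγpq]
    · rw [hg, hi, ← hν₀tight]
      have h1 : γ (p, j) * ν₀ p ≤ ν₀ j := hν₀arc _ hmem
      have heq : γ (p, j) / γ (p, q) * (γ (p, q) * ν₀ p) = γ (p, j) * ν₀ p := by
        field_simp
      rw [heq]
      exact h1
  -- objective of μ equals that of μ'
  have hobjμ : dualObjC b' p μ = dualObjC b' p μ' := by
    refine Finset.sum_congr rfl fun i hi => ?_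
    rw [hμne i (Finset.mem_erase.mp hi).1]
  have hμtight : γ (p, q) * μ p = μ q := by
    rw [hμp, hμne q hqp, mul_div_cancel₀ _ (ne_of_gt hγpq)]
  have hμpos : ∀ i, 0 < μ i := by
    intro i
    rcases eq_or_ne i t with h | h
    · rw [h, hμfeas.1]; norm_num
    · exact hμfeas.2.1 i h
  intro ν hν
  calc dualObj b ν ≤ dualObj b ν₀ := hν₀opt ν hν
    _ = dualObjC b' p ν₀ := key ν₀ hν₀pos hν₀tight
    _ ≤ dualObjC b' p μ' := hμ'opt ν₀ hν₀C
    _ = dualObjC b' p μ := hobjμ.symm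
    _ = dualObj b μ := (key μ hμpos hμtight).symm
end

section
/- In the Elementary Step subroutine applied to a Δ-feasible pair (f, μ) and a set T ⊆ V − t satisfying: e^μ_i < (4d_i + 8)Δ for i ∈ (V∖T) − t, e^μ_i ≥ (d_i + 1)Δ for i ∈ T, γ^μ_{ij} < 1 for all ij ∈ E[T, V∖T], and f^μ_{ij} ≤ Δ for all ij ∈ E[V∖T, T], the step multiplier α (the minimum of the values δ_i over i ∈ (V∖T) − t and of 1/γ^μ_{ij} over arcs ij leaving T) satisfies α > 1. -/
/-- Number of arcs incident to `i`. -/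
def deg {V : Type*} [DecidableEq V] (E : Finset (V × V)) (i : V) : ℕ :=
  (E.filter (fun a => a.1 = i ∨ a.2 = i)).card

/-- `r₁(i)`: flow incoming on non-tight arcs within `V ∖ T`. -/
noncomputable def r1 {V : Type*} [DecidableEq V] (E : Finset (V × V))
    (γ : V × V → ℝ) (μ : V → ℝ) (f : V × V → ℝ) (T : Finset V) (i : V) : ℝ :=
  ∑ a ∈ E.filter (fun a => a.2 = i ∧ a.1 ∉ T ∧ γ a * μ a.1 < μ a.2), γ a * f a

/-- `r₂(i)`: flow incoming on the remaining arcs. -/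
noncomputable def r2 {V : Type*} [DecidableEq V] (E : Finset (V × V))
    (γ : V × V → ℝ) (μ : V → ℝ) (f : V × V → ℝ) (T : Finset V) (i : V) : ℝ :=
  ∑ a ∈ E.filter (fun a => a.2 = i ∧ ¬(a.1 ∉ T ∧ γ a * μ a.1 < μ a.2)), γ a * f a

/-- `r₃(i)`: flow outgoing on non-tight arcs within `V ∖ T` or on arcs entering `T`. -/
noncomputable def r3 {V : Type*} [DecidableEq V] (E : Finset (V × V))
    (γ : V × V → ℝ) (μ : V → ℝ) (f : V × V → ℝ) (T : Finset V) (i : V) : ℝ :=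
  ∑ a ∈ E.filter (fun a => a.1 = i ∧ ((a.2 ∉ T ∧ γ a * μ a.1 < μ a.2) ∨ a.2 ∈ T)), f a

/-- `r₄(i)`: flow outgoing on the remaining arcs. -/
noncomputable def r4 {V : Type*} [DecidableEq V] (E : Finset (V × V))
    (γ : V × V → ℝ) (μ : V → ℝ) (f : V × V → ℝ) (T : Finset V) (i : V) : ℝ :=
  ∑ a ∈ E.filter (fun a => a.1 = i ∧ ¬((a.2 ∉ T ∧ γ a * μ a.1 < μ a.2) ∨ a.2 ∈ T)), f a

/-- The threshold `δ_i` of the Elementary Step. -/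
noncomputable def delta {V : Type*} [DecidableEq V] (E : Finset (V × V))
    (γ : V × V → ℝ) (μ : V → ℝ) (f : V × V → ℝ) (T : Finset V) (b : V → ℝ)
    (Δ : ℝ) (i : V) : ℝ :=
  ((4 * (deg E i : ℝ) + 8) * Δ * μ i + r3 E γ μ f T i - r1 E γ μ f T i)
    / (r2 E γ μ f T i - r4 E γ μ f T i - b i)

/-- under the hypotheses of the Elementary Step, the multiplier
α — the minimum of the finite values δ_i over i ∈ (V∖T) − t and of 1/γ^μ_{ij}
over arcs ij leaving T — satisfies α > 1, i.e. each of these quantities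
exceeds 1. -/
theorem elementary_step_alpha_gt_one {V : Type*} [Fintype V] [DecidableEq V]
    (E : Finset (V × V)) (γ : V × V → ℝ) (b : V → ℝ) (t : V)
    (f : V × V → ℝ) (μ : V → ℝ) (Δ : ℝ) (T : Finset V)
    (hΔ : 0 < Δ)
    (hγ : ∀ a ∈ E, 0 < γ a)
    (hf0 : ∀ a, 0 ≤ f a)
    -- Δ-feasibility of (f, μ):
    (hμt : μ t = 1) (hμpos : ∀ i, i ≠ t → 0 < μ i)
    (hdual : ∀ a ∈ E, γ a * μ a.1 ≤ μ a.2)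
    (hfat : ∀ a ∈ E, Δ < f a / μ a.1 → μ a.2 ≤ γ a * μ a.1)
    (hres : ∀ i, i ≠ t → reserve E γ μ f i ≤ excess E γ b f i)
    -- the hypotheses on T:
    (htT : t ∉ T)
    (hout : ∀ i, i ≠ t → i ∉ T →
        excess E γ b f i / μ i < (4 * (deg E i : ℝ) + 8) * Δ)
    (hin : ∀ i ∈ T, ((deg E i : ℝ) + 1) * Δ ≤ excess E γ b f i / μ i)
    (hcrossnt : ∀ a ∈ E, a.1 ∈ T → a.2 ∉ T → γ a * μ a.1 < μ a.2)
    (hcrossflow : ∀ a ∈ E, a.1 ∉ T → a.2 ∈ T → f a / μ a.1 ≤ Δ) :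
    (∀ i, i ≠ t → i ∉ T → r2 E γ μ f T i - r4 E γ μ f T i - b i ≠ 0 →
        1 < delta E γ μ f T b Δ i) ∧
    (∀ a ∈ E, a.1 ∈ T → a.2 ∉ T → 1 < μ a.2 / (γ a * μ a.1)) := by

  classical
  refine ⟨?_, ?_⟩
  · intro i hit hiT hD
    have hμi : 0 < μ i := hμpos i hit
    -- split incoming sum
    have hsplitin :
        (∑ a ∈ E.filter (fun a => a.2 = i), γ a * f a)
          = r1 E γ μ f T i + r2 E γ μ f T i := by
      rw [r1, r2,
        ← Finset.sum_filter_add_sum_filter_not (E.filter (fun a => a.2 = i))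
          (fun a => a.1 ∉ T ∧ γ a * μ a.1 < μ a.2)]
      congr 1
      · congr 1; ext a; simp [and_assoc]
      · congr 1; ext a; simp [and_assoc]
    have hsplitout :
        (∑ a ∈ E.filter (fun a => a.1 = i), f a)
          = r3 E γ μ f T i + r4 E γ μ f T i := by
      rw [r3, r4,
        ← Finset.sum_filter_add_sum_filter_not (E.filter (fun a => a.1 = i))
          (fun a => (a.2 ∉ T ∧ γ a * μ a.1 < μ a.2) ∨ a.2 ∈ T)]
      congr 1
      · congr 1; ext a; simp [and_assoc]
      · congr 1; ext a; simp [and_assoc]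
    have hex : excess E γ b f i
        = r1 E γ μ f T i + r2 E γ μ f T i
          - (r3 E γ μ f T i + r4 E γ μ f T i) - b i := by
      rw [excess, hsplitin, hsplitout]
    have hr1 : r1 E γ μ f T i ≤ reserve E γ μ f i := by
      rw [r1, reserve]
      apply Finset.sum_le_sum_of_subset_of_nonneg
      · intro a ha
        simp only [Finset.mem_filter] at ha ⊢
        exact ⟨ha.1, ha.2.1, ha.2.2.2⟩
      · intro a ha _
        simp only [Finset.mem_filter] at ha
        exact mul_nonneg (le_of_lt (hγ a ha.1)) (hf0 a)
    have hr3 : 0 ≤ r3 E γ μ f T i := by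
      rw [r3]
      exact Finset.sum_nonneg fun a _ => hf0 a
    have hDeq : r2 E γ μ f T i - r4 E γ μ f T i - b i
        = excess E γ b f i - r1 E γ μ f T i + r3 E γ μ f T i := by
      rw [hex]; ring
    have hDnn : 0 ≤ r2 E γ μ f T i - r4 E γ μ f T i - b i := by
      rw [hDeq]
      have := hres i hit
      linarith
    have hDpos : 0 < r2 E γ μ f T i - r4 E γ μ f T i - b i :=
      lt_of_le_of_ne hDnn (Ne.symm hD)
    have hexlt : excess E γ b f i < (4 * (deg E i : ℝ) + 8) * Δ * μ i := by
      have := hout i hit hiT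
      calc excess E γ b f i = excess E γ b f i / μ i * μ i := by
            field_simp
        _ < (4 * (deg E i : ℝ) + 8) * Δ * μ i := by
            exact mul_lt_mul_of_pos_right this hμi
    rw [delta, lt_div_iff₀ hDpos]
    rw [hDeq]
    linarith
  · intro a ha h1 h2
    have hnt := hcrossnt a ha h1 h2
    have ht1 : a.1 ≠ t := fun h => htT (h ▸ h1)
    have hpos : 0 < γ a * μ a.1 := mul_pos (hγ a ha) (hμpos a.1 ht1)
    exact (one_lt_div hpos).mpr hnt
end

section
/- Let β_i = e_i/(Δ μ_i) before an Elementary Step with multiplier α ≥ 1 (which divides Δ by α, multiplies μ_i by α for i ∈ T, and divides the flow by α on non-tight arcs within V∖T and on arcs entering T), and let β'_i be the value afterwards. Then for every node i ≠ t: β'_i ≤ α² max{β_i, d_i}. -/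
/-- after an Elementary Step with multiplier α (divide Δ by α,
multiply μ on T by α, divide the flow by α on non-tight arcs within V∖T and on
arcs entering T), the quantity β_i = e_i/(Δμ_i) satisfies
β'_i ≤ α² max{β_i, d_i} at every node i ≠ t. -/
theorem beta_growth_bound {V : Type*} [Fintype V] [DecidableEq V]
    (E : Finset (V × V)) (γ : V × V → ℝ) (b : V → ℝ) (t : V)
    (T : Finset V) (f f' : V × V → ℝ) (μ μ' : V → ℝ) (Δ Δ' α : ℝ)
    (hγ : ∀ a ∈ E, 0 < γ a)
    (hf0 : ∀ a, 0 ≤ f a)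
    (hμpos : ∀ i, 0 < μ i)
    (hΔ : 0 < Δ) (hα : 1 ≤ α)
    -- flow bounds guaranteed by Δ-feasibility and the Elementary Step hypotheses
    (hnt : ∀ a ∈ E, γ a * μ a.1 < μ a.2 → f a ≤ Δ * μ a.1)
    (hent : ∀ a ∈ E, a.1 ∉ T → a.2 ∈ T → f a ≤ Δ * μ a.1)
    -- the updates performed by the Elementary Step
    (hΔ' : Δ' = Δ / α)
    (hμ' : ∀ i, μ' i = if i ∈ T then α * μ i else μ i)
    (hf' : ∀ a : V × V, f' a =
        if (a.1 ∉ T ∧ a.2 ∉ T ∧ γ a * μ a.1 < μ a.2) ∨ (a.1 ∉ T ∧ a.2 ∈ T)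
        then f a / α else f a) :
    ∀ i, i ≠ t →
      excess E γ b f' i / (Δ' * μ' i)
        ≤ α ^ 2 * max (excess E γ b f i / (Δ * μ i)) ((deg E i : ℝ)) := by

  intro i _
  have hα0 : (0:ℝ) < α := lt_of_lt_of_le one_pos hα
  have hαne : α ≠ 0 := ne_of_gt hα0
  have hμi : 0 < μ i := hμpos i
  have hDμ : 0 < Δ * μ i := mul_pos hΔ hμi
  have h1α : 0 ≤ 1 - 1/α := by
    rw [sub_nonneg, div_le_one hα0]; exact hα
  have hf'le : ∀ a, f' a ≤ f a := by
    intro a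
    rw [hf' a]
    split
    · exact div_le_self (hf0 a) hα
    · exact le_rfl
  have hin : (∑ a ∈ E.filter (fun a => a.2 = i), γ a * f' a)
      ≤ ∑ a ∈ E.filter (fun a => a.2 = i), γ a * f a := by
    apply Finset.sum_le_sum
    intro a ha
    exact mul_le_mul_of_nonneg_left (hf'le a) (le_of_lt (hγ a (Finset.mem_filter.mp ha).1))
  have hM0 : (0:ℝ) ≤ max (excess E γ b f i / (Δ * μ i)) ((deg E i : ℝ)) :=
    le_trans (Nat.cast_nonneg _) (le_max_right _ _)
  have hα2 : (1:ℝ) ≤ α ^ 2 := by nlinarith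
  by_cases hiT : i ∈ T
  · -- i ∈ T : denominator unchanged, excess decreases
    have hout : (∑ a ∈ E.filter (fun a => a.1 = i), f' a)
        = ∑ a ∈ E.filter (fun a => a.1 = i), f a := by
      apply Finset.sum_congr rfl
      intro a ha
      have ha1 : a.1 = i := (Finset.mem_filter.mp ha).2
      rw [hf' a, if_neg]
      rintro (⟨h1, _, _⟩ | ⟨h1, _⟩) <;> exact h1 (ha1 ▸ hiT)
    have he : excess E γ b f' i ≤ excess E γ b f i := by
      unfold excess; rw [hout]; linarith
    have hden : Δ' * μ' i = Δ * μ i := by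
      rw [hΔ', hμ' i, if_pos hiT]; field_simp
    rw [hden]
    calc excess E γ b f' i / (Δ * μ i) ≤ excess E γ b f i / (Δ * μ i) := by
          gcongr
      _ ≤ max (excess E γ b f i / (Δ * μ i)) ((deg E i : ℝ)) := le_max_left _ _
      _ ≤ α ^ 2 * max (excess E γ b f i / (Δ * μ i)) ((deg E i : ℝ)) :=
          le_mul_of_one_le_left hM0 hα2
  · -- i ∉ T
    have hout : ∀ a ∈ E.filter (fun a => a.1 = i),
        f a - f' a ≤ (1 - 1/α) * (Δ * μ i) := by
      intro a ha
      have haE : a ∈ E := (Finset.mem_filter.mp ha).1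
      have ha1 : a.1 = i := (Finset.mem_filter.mp ha).2
      rw [hf' a]
      split_ifs with h
      · have hfb : f a ≤ Δ * μ i := by
          rcases h with ⟨_, _, hnt'⟩ | ⟨h1, h2⟩
          · have := hnt a haE hnt'; rwa [ha1] at this
          · have := hent a haE h1 h2; rwa [ha1] at this
        have : f a - f a / α = (1 - 1/α) * f a := by field_simp
        rw [this]
        exact mul_le_mul_of_nonneg_left hfb h1α
      · simpa using mul_nonneg h1α (le_of_lt hDμ)
    have hcard : ((E.filter (fun a => a.1 = i)).card : ℝ) ≤ (deg E i : ℝ) := by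
      have : (E.filter (fun a => a.1 = i)) ⊆ E.filter (fun a => a.1 = i ∨ a.2 = i) := by
        intro a ha
        simp only [Finset.mem_filter] at *
        exact ⟨ha.1, Or.inl ha.2⟩
      exact_mod_cast Finset.card_le_card this
    have hsum : (∑ a ∈ E.filter (fun a => a.1 = i), f a)
        - (∑ a ∈ E.filter (fun a => a.1 = i), f' a)
        ≤ (deg E i : ℝ) * ((1 - 1/α) * (Δ * μ i)) := by
      rw [← Finset.sum_sub_distrib]
      calc (∑ a ∈ E.filter (fun a => a.1 = i), (f a - f' a))
          ≤ ∑ _a ∈ E.filter (fun a => a.1 = i), (1 - 1/α) * (Δ * μ i) :=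
            Finset.sum_le_sum hout
        _ = ((E.filter (fun a => a.1 = i)).card : ℝ) * ((1 - 1/α) * (Δ * μ i)) := by
            rw [Finset.sum_const, nsmul_eq_mul]
        _ ≤ (deg E i : ℝ) * ((1 - 1/α) * (Δ * μ i)) :=
            mul_le_mul_of_nonneg_right hcard (mul_nonneg h1α (le_of_lt hDμ))
    have he : excess E γ b f' i
        ≤ excess E γ b f i + (deg E i : ℝ) * ((1 - 1/α) * (Δ * μ i)) := by
      unfold excess; linarith
    have hden : Δ' * μ' i = Δ / α * μ i := by
      rw [hΔ', hμ' i, if_neg hiT]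
    rw [hden]
    set M := max (excess E γ b f i / (Δ * μ i)) ((deg E i : ℝ)) with hMdef
    have hβ : excess E γ b f i ≤ M * (Δ * μ i) :=
      (div_le_iff₀ hDμ).mp (le_max_left _ _)
    have hd : (deg E i : ℝ) ≤ M := le_max_right _ _
    rw [div_le_iff₀ (by positivity)]
    have hexp : α ^ 2 * M * (Δ / α * μ i) = α * M * (Δ * μ i) := by
      field_simp
    rw [hexp]
    have key : (deg E i : ℝ) * ((1 - 1/α) * (Δ * μ i)) ≤ M * ((α - 1) * (Δ * μ i)) := by
      have h2 : (1 - 1/α) ≤ α - 1 := by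
        have hc : 1/α * α = 1 := one_div_mul_cancel hαne
        nlinarith [sq_nonneg (α - 1)]
      calc (deg E i : ℝ) * ((1 - 1/α) * (Δ * μ i))
          ≤ M * ((1 - 1/α) * (Δ * μ i)) :=
            mul_le_mul_of_nonneg_right hd (mul_nonneg h1α (le_of_lt hDμ))
        _ ≤ M * ((α - 1) * (Δ * μ i)) := by
            apply mul_le_mul_of_nonneg_left _ hM0
            exact mul_le_mul_of_nonneg_right h2 (le_of_lt hDμ)
    nlinarith [mul_le_mul_of_nonneg_left hβ (le_of_lt hα0), mul_pos hΔ hμi,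
      mul_nonneg hM0 (le_of_lt hDμ)]
end

section
/- Suppose a solution y of the Farkas system for infeasibility of the equality system (LP2M) exists: y_i − γ_{ij} y_j ≥ 0 for every arc ij ∈ E and Σ_i b_i y_i > 0. Define y⁺ = max(y, 0) and y⁻ = min(y, 0) componentwise. Then y⁺ and y⁻ each satisfy y^±_i − γ_{ij} y^±_j ≥ 0 for every arc ij ∈ E, and at least one of Σ_i b_i y⁺_i > 0 or Σ_i b_i y⁻_i > 0 holds. Consequently, if the inequality systems (LP2M_≥) and (LP2M_≤) are both feasible, then (LP2M) is feasible. -/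
/-- Net inflow minus demand at node `i` (the quantity required to be `= b_i`,
`≥ b_i`, or `≤ b_i` in (LP2M), (LP2M_≥), (LP2M_≤), here shifted by `b`). -/
def netFlow {V : Type*} [Fintype V] [DecidableEq V] (E : Finset (V × V))
    (γ : V × V → ℝ) (b : V → ℝ) (f : V × V → ℝ) (i : V) : ℝ :=
  (∑ a ∈ E.filter (fun a => a.2 = i), γ a * f a)
    - (∑ a ∈ E.filter (fun a => a.1 = i), f a) - b i

/-- Expand the pairing of a potential `z` with the net flow. -/
lemma netFlow_pairing {V : Type*} [Fintype V] [DecidableEq V] (E : Finset (V × V))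
    (γ : V × V → ℝ) (b : V → ℝ) (f : V × V → ℝ) (z : V → ℝ) :
    ∑ i, z i * netFlow E γ b f i
      = (∑ a ∈ E, (γ a * z a.2 - z a.1) * f a) - ∑ i, b i * z i := by
  have h1 : ∑ i, z i * ∑ a ∈ E.filter (fun a => a.2 = i), γ a * f a
      = ∑ a ∈ E, γ a * z a.2 * f a := by
    rw [← Finset.sum_fiberwise E (fun a => a.2) (fun a => γ a * z a.2 * f a)]
    refine Finset.sum_congr rfl fun i _ => ?_
    rw [Finset.mul_sum]
    refine Finset.sum_congr rfl fun a ha => ?_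
    have : a.2 = i := (Finset.mem_filter.1 ha).2
    rw [this]; ring
  have h2 : ∑ i, z i * ∑ a ∈ E.filter (fun a => a.1 = i), f a
      = ∑ a ∈ E, z a.1 * f a := by
    rw [← Finset.sum_fiberwise E (fun a => a.1) (fun a => z a.1 * f a)]
    refine Finset.sum_congr rfl fun i _ => ?_
    rw [Finset.mul_sum]
    refine Finset.sum_congr rfl fun a ha => ?_
    have : a.1 = i := (Finset.mem_filter.1 ha).2
    rw [this]
  simp only [netFlow, mul_sub]
  rw [Finset.sum_sub_distrib, Finset.sum_sub_distrib, h1, h2, ← Finset.sum_sub_distrib]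
  have : ∑ a ∈ E, (γ a * z a.2 * f a - z a.1 * f a)
      = ∑ a ∈ E, (γ a * z a.2 - z a.1) * f a := by
    refine Finset.sum_congr rfl fun a _ => by ring
  rw [this]
  congr 1
  refine Finset.sum_congr rfl fun i _ => by ring

/-- Farkas certificate truncation. If y certifies infeasibility of
the equality system (LP2M), then its positive part y⁺ and negative part y⁻ both
satisfy the arc inequalities, and at least one of them has positive objective;
consequently, if (LP2M_≥) and (LP2M_≤) are both feasible, then (LP2M) is
feasible. -/
theorem farkas_truncation {V : Type*} [Fintype V] [DecidableEq V]
    (E : Finset (V × V)) (γ : V × V → ℝ) (b : V → ℝ)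
    (hγ : ∀ a ∈ E, 0 < γ a)
    (y : V → ℝ)
    (hy : ∀ a ∈ E, 0 ≤ y a.1 - γ a * y a.2)
    (hobj : 0 < ∑ i, b i * y i) :
    (∀ a ∈ E, 0 ≤ max (y a.1) 0 - γ a * max (y a.2) 0) ∧
    (∀ a ∈ E, 0 ≤ min (y a.1) 0 - γ a * min (y a.2) 0) ∧
    ((0 < ∑ i, b i * max (y i) 0) ∨ (0 < ∑ i, b i * min (y i) 0)) ∧
    (((∃ f : V × V → ℝ, (∀ a, 0 ≤ f a) ∧ ∀ i, 0 ≤ netFlow E γ b f i) ∧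
      (∃ g : V × V → ℝ, (∀ a, 0 ≤ g a) ∧ ∀ i, netFlow E γ b g i ≤ 0)) →
      ∃ h : V × V → ℝ, (∀ a, 0 ≤ h a) ∧ ∀ i, netFlow E γ b h i = 0) := by
  have hpos : ∀ a ∈ E, 0 ≤ max (y a.1) 0 - γ a * max (y a.2) 0 := by
    intro a ha
    rcases le_or_gt (y a.2) 0 with h2 | h2
    · rw [max_eq_right h2, mul_zero, sub_zero]
      exact le_max_right _ _
    · have hg := hγ a ha
      have h1 : γ a * y a.2 ≤ y a.1 := by linarith [hy a ha]
      have h1' : 0 < y a.1 := lt_of_lt_of_le (by positivity) h1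
      rw [max_eq_left h2.le, max_eq_left h1'.le]
      linarith
  have hneg : ∀ a ∈ E, 0 ≤ min (y a.1) 0 - γ a * min (y a.2) 0 := by
    intro a ha
    have hg := hγ a ha
    rcases le_or_gt 0 (y a.1) with h1 | h1
    · rw [min_eq_right h1]
      have : min (y a.2) 0 ≤ 0 := min_le_right _ _
      nlinarith
    · have h2 : γ a * y a.2 ≤ y a.1 := by linarith [hy a ha]
      have h2' : y a.2 < 0 := by nlinarith
      rw [min_eq_left h1.le, min_eq_left h2'.le]
      linarith
  have hsplit : (0 < ∑ i, b i * max (y i) 0) ∨ (0 < ∑ i, b i * min (y i) 0) := by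
    by_contra hc
    push_neg at hc
    have : ∑ i, b i * y i = (∑ i, b i * max (y i) 0) + ∑ i, b i * min (y i) 0 := by
      rw [← Finset.sum_add_distrib]
      refine Finset.sum_congr rfl fun i _ => ?_
      rw [← mul_add]
      congr 1
      rcases le_or_gt (y i) 0 with h | h
      · rw [max_eq_right h, min_eq_left h]; ring
      · rw [max_eq_left h.le, min_eq_right h.le]; ring
    linarith [hc.1, hc.2]
  refine ⟨hpos, hneg, hsplit, ?_⟩
  rintro ⟨⟨f, hf0, hfF⟩, ⟨g, hg0, hgF⟩⟩
  exfalso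
  rcases hsplit with hp | hn
  · -- use y⁺ against f
    have hle : ∑ i, max (y i) 0 * netFlow E γ b f i
        ≤ (0 : ℝ) - ∑ i, b i * max (y i) 0 := by
      rw [netFlow_pairing]
      gcongr
      refine Finset.sum_nonpos fun a ha => ?_
      exact mul_nonpos_of_nonpos_of_nonneg (by linarith [hpos a ha]) (hf0 a)
    have hge : 0 ≤ ∑ i, max (y i) 0 * netFlow E γ b f i :=
      Finset.sum_nonneg fun i _ => mul_nonneg (le_max_right _ _) (hfF i)
    linarith
  · -- use y⁻ against g
    have hle : ∑ i, min (y i) 0 * netFlow E γ b g i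
        ≤ (0 : ℝ) - ∑ i, b i * min (y i) 0 := by
      rw [netFlow_pairing]
      gcongr
      refine Finset.sum_nonpos fun a ha => ?_
      exact mul_nonpos_of_nonpos_of_nonneg (by linarith [hneg a ha]) (hg0 a)
    have hge : 0 ≤ ∑ i, min (y i) 0 * netFlow E γ b g i :=
      Finset.sum_nonneg fun i _ =>
        by nlinarith [min_le_right (y i) (0:ℝ), hgF i]
    linarith
end

section
/- In the uncapacitated generalized flow problem, suppose at some iteration the pair (f, μ) is Δ-feasible, f has no abundant arcs (f^μ_e < 17mΔ for every arc e incident to node i), and e^μ_i ≤ (4d_i + 8)Δ. Then |b^μ_i| < 32mnΔ, where b^μ_i = b_i/μ_i and d_i ≤ n − 1 is the degree of i. -/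
/-- if (f, μ) is Δ-feasible, node i has no abundant incident arc
(all incident arcs have relabeled flow < 17mΔ) and e^μ_i ≤ (4 d_i + 8)Δ, then
|b^μ_i| < 32 m n Δ. -/
theorem no_abundant_arc_small_demand {V : Type*} [Fintype V] [DecidableEq V]
    (E : Finset (V × V)) (γ : V × V → ℝ) (b : V → ℝ) (t : V)
    (f : V × V → ℝ) (μ : V → ℝ) (Δ : ℝ) (i : V)
    (hΔ : 0 < Δ)
    (hγ : ∀ a ∈ E, 0 < γ a)
    (hf0 : ∀ a, 0 ≤ f a)
    (hnm : Fintype.card V ≤ E.card)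
    (hd : (deg E i : ℝ) ≤ (Fintype.card V : ℝ) - 1)
    -- components of Δ-feasibility used:
    (hμt : μ t = 1) (hμpos : ∀ j, j ≠ t → 0 < μ j)
    (hdual : ∀ a ∈ E, γ a * μ a.1 ≤ μ a.2)
    (hex0 : 0 ≤ excess E γ b f i)
    -- no abundant arc incident to i:
    (habsent : ∀ a ∈ E, (a.1 = i ∨ a.2 = i) → f a / μ a.1 < 17 * (E.card : ℝ) * Δ)
    -- bound on the relabeled excess of i:
    (hupper : excess E γ b f i / μ i ≤ (4 * (deg E i : ℝ) + 8) * Δ) :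
    |b i / μ i| < 32 * (E.card : ℝ) * (Fintype.card V : ℝ) * Δ := by

  have hμ : ∀ j, 0 < μ j := fun j => by
    rcases eq_or_ne j t with h | h
    · rw [h, hμt]; norm_num
    · exact hμpos j h
  have hμi := hμ i
  set m : ℝ := (E.card : ℝ) with hm
  set n : ℝ := (Fintype.card V : ℝ) with hn
  set d : ℝ := (deg E i : ℝ) with hdd
  have hn1 : (1:ℝ) ≤ n := by
    have : 1 ≤ Fintype.card V := Fintype.card_pos_iff.mpr ⟨i⟩
    rw [hn]; exact_mod_cast this
  have hmn : n ≤ m := by rw [hn, hm]; exact_mod_cast hnm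
  have hm1 : (1:ℝ) ≤ m := le_trans hn1 hmn
  have hcin : ((E.filter (fun a => a.2 = i)).card : ℝ) ≤ d := by
    have hsub : (E.filter (fun a => a.2 = i)) ⊆ E.filter (fun a => a.1 = i ∨ a.2 = i) := by
      intro a ha
      simp only [Finset.mem_filter] at *
      exact ⟨ha.1, Or.inr ha.2⟩
    rw [hdd]; unfold deg; exact_mod_cast Finset.card_le_card hsub
  have hcout : ((E.filter (fun a => a.1 = i)).card : ℝ) ≤ d := by
    have hsub : (E.filter (fun a => a.1 = i)) ⊆ E.filter (fun a => a.1 = i ∨ a.2 = i) := by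
      intro a ha
      simp only [Finset.mem_filter] at *
      exact ⟨ha.1, Or.inl ha.2⟩
    rw [hdd]; unfold deg; exact_mod_cast Finset.card_le_card hsub
  -- bounds on the incoming sum
  have hin : ∑ a ∈ E.filter (fun a => a.2 = i), γ a * f a
      ≤ ((E.filter (fun a => a.2 = i)).card : ℝ) * (17 * m * Δ * μ i) := by
    rw [← nsmul_eq_mul]
    apply Finset.sum_le_card_nsmul
    intro a ha
    simp only [Finset.mem_filter] at ha
    obtain ⟨haE, hai⟩ := ha
    have h1 : γ a * μ a.1 ≤ μ i := by rw [← hai]; exact hdual a haE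
    have h2 : f a / μ a.1 < 17 * m * Δ := habsent a haE (Or.inr hai)
    have hμa := hμ a.1
    have hx : f a / μ a.1 * μ a.1 = f a := div_mul_cancel₀ _ (ne_of_gt hμa)
    nlinarith [hf0 a, (hγ a haE).le, div_nonneg (hf0 a) hμa.le, hμi,
      mul_le_mul_of_nonneg_right h1 (div_nonneg (hf0 a) hμa.le),
      mul_le_mul_of_nonneg_left h2.le hμi.le]
  have hin0 : 0 ≤ ∑ a ∈ E.filter (fun a => a.2 = i), γ a * f a :=
    Finset.sum_nonneg fun a ha => by
      simp only [Finset.mem_filter] at ha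
      exact mul_nonneg (hγ a ha.1).le (hf0 a)
  -- bounds on the outgoing sum
  have hout : ∑ a ∈ E.filter (fun a => a.1 = i), f a
      ≤ ((E.filter (fun a => a.1 = i)).card : ℝ) * (17 * m * Δ * μ i) := by
    rw [← nsmul_eq_mul]
    apply Finset.sum_le_card_nsmul
    intro a ha
    simp only [Finset.mem_filter] at ha
    obtain ⟨haE, hai⟩ := ha
    have h2 : f a / μ a.1 < 17 * m * Δ := habsent a haE (Or.inl hai)
    rw [hai] at h2
    have := (div_lt_iff₀ hμi).mp h2
    linarith
  have hout0 : 0 ≤ ∑ a ∈ E.filter (fun a => a.1 = i), f a :=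
    Finset.sum_nonneg fun a _ => hf0 a
  have hK0 : 0 ≤ 17 * m * Δ * μ i := by positivity
  have hin' : ∑ a ∈ E.filter (fun a => a.2 = i), γ a * f a ≤ d * (17 * m * Δ * μ i) :=
    le_trans hin (mul_le_mul_of_nonneg_right hcin hK0)
  have hout' : ∑ a ∈ E.filter (fun a => a.1 = i), f a ≤ d * (17 * m * Δ * μ i) :=
    le_trans hout (mul_le_mul_of_nonneg_right hcout hK0)
  have hex : 0 ≤ (∑ a ∈ E.filter (fun a => a.2 = i), γ a * f a)
      - (∑ a ∈ E.filter (fun a => a.1 = i), f a) - b i := hex0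
  have hexu : (∑ a ∈ E.filter (fun a => a.2 = i), γ a * f a)
      - (∑ a ∈ E.filter (fun a => a.1 = i), f a) - b i ≤ (4 * d + 8) * Δ * μ i := by
    have := (div_le_iff₀ hμi).mp hupper
    unfold excess at this
    linarith
  have hd0 : (0:ℝ) ≤ d := Nat.cast_nonneg _
  rw [abs_div, abs_of_pos hμi, div_lt_iff₀ hμi, abs_lt]
  constructor
  · nlinarith [mul_pos hΔ hμi, mul_nonneg (mul_nonneg hd0 hΔ.le) hμi.le,
      mul_le_mul_of_nonneg_right hd (mul_pos (mul_pos (by norm_num : (0:ℝ)<17) (lt_of_lt_of_le one_pos hm1)) (mul_pos hΔ hμi)).le,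
      mul_le_mul_of_nonneg_right hmn (mul_pos hΔ hμi).le]
  · nlinarith [mul_pos hΔ hμi, mul_nonneg (mul_nonneg hd0 hΔ.le) hμi.le,
      mul_le_mul_of_nonneg_right hd (mul_pos (mul_pos (by norm_num : (0:ℝ)<17) (lt_of_lt_of_le one_pos hm1)) (mul_pos hΔ hμi)).le,
      mul_le_mul_of_nonneg_right hmn (mul_pos hΔ hμi).le]
end

section
/- Let μ be a feasible labeling on a node set S containing t, and let x be a maximum s–t flow in the auxiliary network on S ∪ {s} consisting of the tight arcs {ij ∈ E[S] : γ^μ_{ij} = 1} with capacities [0, ∞), plus arcs si for each i ∈ S − t with capacities (−∞, −b^μ_i]. Define f'_{ij} = x_{ij} μ_i on tight arcs and 0 otherwise. If the flow problem is feasible, then f' is a feasible generalized flow on S (e_i(f') ≥ 0 for i ∈ S − t) and e^μ_i(f') ≤ n · max_{j ∈ S − t} |b^μ_j| for every i ∈ S. -/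
open Finset

private lemma path_flow {V : Type*} [Fintype V] [DecidableEq V]
    (Et : Finset (V × V)) (x : V × V → ℝ) (t : V)
    {u : V}
    (h : Relation.ReflTransGen
      (fun u v => (u,v) ∈ Et ∨ ((v,u) ∈ Et ∧ 0 < x (v,u))) u t) :
    ∃ (g : V × V → ℝ) (K : ℕ), 1 ≤ K ∧
      (∀ a, a ∉ Et → g a = 0) ∧ (∀ a, |g a| ≤ (K:ℝ)) ∧
      (∀ a, g a < 0 → 0 < x a) ∧
      (∀ i, i ≠ t →
        (∑ a ∈ Et.filter (fun a => a.1 = i), g a)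
          - (∑ a ∈ Et.filter (fun a => a.2 = i), g a)
        = if i = u then 1 else 0) := by
  induction h using Relation.ReflTransGen.head_induction_on with
  | refl =>
      refine ⟨fun _ => 0, 1, le_refl _, fun a _ => rfl, fun a => by norm_num,
        fun a h => absurd h (by norm_num), fun i hi => ?_⟩
      simp [hi]
  | @head u v hstep hpath ih =>
      obtain ⟨g', K', hK', hsupp', hbd', hneg', hdiv'⟩ := ih
      rcases hstep with hf | ⟨hbk, hxpos⟩
      · -- forward step along arc (u,v) ∈ Et
        refine ⟨fun a => (if a = (u,v) then (1:ℝ) else 0) + g' a, K' + 1, le_add_self, ?_, ?_, ?_, ?_⟩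
        · intro a ha
          have : a ≠ (u,v) := fun h => ha (h ▸ hf)
          simp [this, hsupp' a ha]
        · intro a
          calc |(if a = (u,v) then (1:ℝ) else 0) + g' a|
              ≤ |(if a = (u,v) then (1:ℝ) else 0)| + |g' a| := abs_add_le _ _
            _ ≤ 1 + K' := by
                gcongr
                · split_ifs <;> norm_num
                · exact hbd' a
            _ = ((K' + 1 : ℕ) : ℝ) := by push_cast; ring
        · intro a ha
          replace ha : (if a = (u,v) then (1:ℝ) else 0) + g' a < 0 := ha
          have h1 : (0:ℝ) ≤ if a = (u,v) then (1:ℝ) else 0 := by split_ifs <;> norm_num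
          by_cases hg : g' a < 0
          · exact hneg' a hg
          · push_neg at hg; linarith
        · intro i hi
          rw [Finset.sum_add_distrib, Finset.sum_add_distrib,
            Finset.sum_ite_eq' _ ((u,v) : V × V) (fun _ => (1:ℝ)),
            Finset.sum_ite_eq' _ ((u,v) : V × V) (fun _ => (1:ℝ))]
          have h' := hdiv' i hi
          have hmem1 : ((u,v) ∈ Et.filter (fun a => a.1 = i)) ↔ i = u := by
            simp [Finset.mem_filter, hf, eq_comm]
          have hmem2 : ((u,v) ∈ Et.filter (fun a => a.2 = i)) ↔ i = v := by
            simp [Finset.mem_filter, hf, eq_comm]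
          rw [if_congr hmem1 rfl rfl, if_congr hmem2 rfl rfl]
          linarith
      · -- backward step along arc (v,u) ∈ Et with positive flow
        refine ⟨fun a => (if a = (v,u) then (-1:ℝ) else 0) + g' a, K' + 1, le_add_self, ?_, ?_, ?_, ?_⟩
        · intro a ha
          have : a ≠ (v,u) := fun h => ha (h ▸ hbk)
          simp [this, hsupp' a ha]
        · intro a
          calc |(if a = (v,u) then (-1:ℝ) else 0) + g' a|
              ≤ |(if a = (v,u) then (-1:ℝ) else 0)| + |g' a| := abs_add_le _ _
            _ ≤ 1 + K' := by
                gcongr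
                · split_ifs <;> norm_num
                · exact hbd' a
            _ = ((K' + 1 : ℕ) : ℝ) := by push_cast; ring
        · intro a ha
          replace ha : (if a = (v,u) then (-1:ℝ) else 0) + g' a < 0 := ha
          by_cases hg : g' a < 0
          · exact hneg' a hg
          · push_neg at hg
            have h1 : (if a = (v,u) then (-1:ℝ) else 0) < 0 := by linarith
            have h2 : a = (v,u) := by by_contra h; simp [h] at h1
            exact h2 ▸ hxpos
        · intro i hi
          rw [Finset.sum_add_distrib, Finset.sum_add_distrib,
            Finset.sum_ite_eq' _ ((v,u) : V × V) (fun _ => (-1:ℝ)),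
            Finset.sum_ite_eq' _ ((v,u) : V × V) (fun _ => (-1:ℝ))]
          have h' := hdiv' i hi
          have hmem1 : ((v,u) ∈ Et.filter (fun a => a.1 = i)) ↔ i = v := by
            simp [Finset.mem_filter, hbk, eq_comm]
          have hmem2 : ((v,u) ∈ Et.filter (fun a => a.2 = i)) ↔ i = u := by
            simp [Finset.mem_filter, hbk, eq_comm]
          rw [if_congr hmem1 rfl rfl, if_congr hmem2 rfl rfl]
          have e1 : (if i = v then (-1:ℝ) else 0) = -(if i = v then (1:ℝ) else 0) := by
            split_ifs <;> ring
          have e2 : (if i = u then (-1:ℝ) else 0) = -(if i = u then (1:ℝ) else 0) := by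
            split_ifs <;> ring
          rw [e1, e2]
          linarith

private lemma no_reach {V : Type*} [Fintype V] [DecidableEq V]
    (Et : Finset (V × V)) (b : V → ℝ) (t : V) (S : Finset V) (μ : V → ℝ)
    (x : V × V → ℝ) (xs : V → ℝ)
    (hx0 : ∀ a ∈ Et, 0 ≤ x a) (hxsupp : ∀ a ∉ Et, x a = 0)
    (hxs : ∀ i ∈ S, i ≠ t → xs i ≤ -(b i / μ i))
    (hconv : ∀ i ∈ S, i ≠ t →
        xs i + (∑ a ∈ Et.filter (fun a => a.2 = i), x a)
          = ∑ a ∈ Et.filter (fun a => a.1 = i), x a)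
    (hmax : ∀ (x' : V × V → ℝ) (xs' : V → ℝ),
        (∀ a ∈ Et, 0 ≤ x' a) → (∀ a ∉ Et, x' a = 0) →
        (∀ i ∈ S, i ≠ t → xs' i ≤ -(b i / μ i)) →
        (∀ i ∈ S, i ≠ t →
          xs' i + (∑ a ∈ Et.filter (fun a => a.2 = i), x' a)
            = ∑ a ∈ Et.filter (fun a => a.1 = i), x' a) →
        (∑ i ∈ S.erase t, xs' i) ≤ ∑ i ∈ S.erase t, xs i)
    (r : V) (hrS : r ∈ S) (hrt : r ≠ t) (hslack : xs r < -(b r / μ r)) :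
    ¬ Relation.ReflTransGen
        (fun u v => (u,v) ∈ Et ∨ ((v,u) ∈ Et ∧ 0 < x (v,u))) r t := by
  intro hreach
  obtain ⟨g, K, hK1, hsupp, hbd, hneg, hdiv⟩ := path_flow Et x t hreach
  set ε₀ : ℝ := -(b r / μ r) - xs r with hε₀def
  have hε₀pos : 0 < ε₀ := by simp only [hε₀def]; linarith
  classical
  set Q : Finset ℝ := insert ε₀ ((Et.filter (fun a => 0 < x a)).image x) with hQdef
  have hQne : Q.Nonempty := ⟨ε₀, Finset.mem_insert_self _ _⟩
  set m : ℝ := Q.min' hQne with hmdef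
  have hQpos : ∀ q ∈ Q, 0 < q := by
    intro q hq
    rcases Finset.mem_insert.mp hq with h | h
    · exact h ▸ hε₀pos
    · obtain ⟨a, ha, rfl⟩ := Finset.mem_image.mp h
      exact (Finset.mem_filter.mp ha).2
  have hmpos : 0 < m := hQpos _ (Q.min'_mem hQne)
  have hKpos : (0:ℝ) < K := by exact_mod_cast hK1
  set δ : ℝ := m / K with hδdef
  have hδpos : 0 < δ := div_pos hmpos hKpos
  have hδK : δ * K = m := div_mul_cancel₀ m (ne_of_gt hKpos)
  have hδε₀ : δ ≤ ε₀ := by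
    have h1 : m ≤ ε₀ := Finset.min'_le _ _ (Finset.mem_insert_self _ _)
    have h2 : δ ≤ m := div_le_self hmpos.le (by exact_mod_cast hK1)
    linarith
  set x' : V × V → ℝ := fun a => x a + δ * g a with hx'def
  set xs' : V → ℝ := fun i => if i = r then xs i + δ else xs i with hxs'def
  have key := hmax x' xs' ?_ ?_ ?_ ?_
  · -- the sums differ by δ > 0, contradiction
    have hsum : (∑ i ∈ S.erase t, xs' i) = (∑ i ∈ S.erase t, xs i) + δ := by
      have : ∀ i, xs' i = xs i + (if i = r then δ else 0) := by
        intro i; simp only [hxs'def]; split_ifs <;> ring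
      rw [Finset.sum_congr rfl fun i _ => this i, Finset.sum_add_distrib,
        Finset.sum_ite_eq' _ r (fun _ => δ), if_pos (Finset.mem_erase.mpr ⟨hrt, hrS⟩)]
    rw [hsum] at key
    linarith
  · -- nonnegativity on Et
    intro a ha
    rcases lt_or_ge (g a) 0 with hg | hg
    · have hxa : 0 < x a := hneg a hg
      have hmem : x a ∈ Q := Finset.mem_insert_of_mem
        (Finset.mem_image_of_mem x (Finset.mem_filter.mpr ⟨ha, hxa⟩))
      have hmx : m ≤ x a := Finset.min'_le _ _ hmem
      have hgK : -(K:ℝ) ≤ g a := neg_le_of_abs_le (hbd a)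
      have : δ * g a ≥ δ * (-(K:ℝ)) := by
        apply mul_le_mul_of_nonneg_left hgK hδpos.le
      simp only [hx'def]
      nlinarith
    · simp only [hx'def]
      exact add_nonneg (hx0 a ha) (mul_nonneg hδpos.le hg)
  · -- support
    intro a ha
    simp only [hx'def, hxsupp a ha, hsupp a ha, mul_zero, add_zero]
  · -- capacity at source
    intro i hiS hit
    simp only [hxs'def]
    split_ifs with h
    · subst h; simp only [hε₀def] at hδε₀; linarith
    · exact hxs i hiS hit
  · -- conservation
    intro i hiS hit
    have hc := hconv i hiS hit
    have hd := hdiv i hit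
    have e1 : (∑ a ∈ Et.filter (fun a => a.2 = i), x' a)
        = (∑ a ∈ Et.filter (fun a => a.2 = i), x a)
          + δ * (∑ a ∈ Et.filter (fun a => a.2 = i), g a) := by
      simp only [hx'def]
      rw [Finset.sum_add_distrib, Finset.mul_sum]
    have e2 : (∑ a ∈ Et.filter (fun a => a.1 = i), x' a)
        = (∑ a ∈ Et.filter (fun a => a.1 = i), x a)
          + δ * (∑ a ∈ Et.filter (fun a => a.1 = i), g a) := by
      simp only [hx'def]
      rw [Finset.sum_add_distrib, Finset.mul_sum]
    rw [e1, e2]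
    have hmul : δ * (∑ a ∈ Et.filter (fun a => a.1 = i), g a)
        - δ * (∑ a ∈ Et.filter (fun a => a.2 = i), g a)
        = δ * (if i = r then 1 else 0) := by
      rw [← mul_sub, hd]
    simp only [hxs'def]
    split_ifs with h
    · rw [if_pos h, mul_one] at hmul; linarith
    · rw [if_neg h, mul_zero] at hmul; linarith

/-- the Tight-Flow subroutine. Given a feasible labeling μ on a
node set S containing t and a maximum flow x (with source values xs on the
auxiliary arcs s→i of capacity −b^μ_i) on the network of tight arcs, the flow
f' defined by f'_{ij} = x_{ij} μ_i is a feasible generalized flow on S and its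
relabeled excesses are bounded by n · max_{j ∈ S−t} |b^μ_j|. -/
theorem tight_flow_properties {V : Type*} [Fintype V] [DecidableEq V]
    (E : Finset (V × V)) (γ : V × V → ℝ) (b : V → ℝ) (t : V) (S : Finset V)
    (hγ : ∀ a ∈ E, 0 < γ a) (htS : t ∈ S) (hbt : b t = 0)
    (μ : V → ℝ) (hμt : μ t = 1) (hμpos : ∀ i ∈ S, 0 < μ i)
    (hμfeas : ∀ a ∈ E, a.1 ∈ S → a.2 ∈ S → γ a * μ a.1 ≤ μ a.2)
    -- the set of tight arcs spanned by S
    (Et : Finset (V × V))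
    (hEt : Et = E.filter (fun a => a.1 ∈ S ∧ a.2 ∈ S ∧ γ a * μ a.1 = μ a.2))
    -- x, xs is a feasible flow in the auxiliary network
    (x : V × V → ℝ) (xs : V → ℝ)
    (hx0 : ∀ a ∈ Et, 0 ≤ x a) (hxsupp : ∀ a ∉ Et, x a = 0)
    (hxs : ∀ i ∈ S, i ≠ t → xs i ≤ -(b i / μ i))
    (hconv : ∀ i ∈ S, i ≠ t →
        xs i + (∑ a ∈ Et.filter (fun a => a.2 = i), x a)
          = ∑ a ∈ Et.filter (fun a => a.1 = i), x a)
    -- x, xs is a maximum flow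
    (hmax : ∀ (x' : V × V → ℝ) (xs' : V → ℝ),
        (∀ a ∈ Et, 0 ≤ x' a) → (∀ a ∉ Et, x' a = 0) →
        (∀ i ∈ S, i ≠ t → xs' i ≤ -(b i / μ i)) →
        (∀ i ∈ S, i ≠ t →
          xs' i + (∑ a ∈ Et.filter (fun a => a.2 = i), x' a)
            = ∑ a ∈ Et.filter (fun a => a.1 = i), x' a) →
        (∑ i ∈ S.erase t, xs' i) ≤ ∑ i ∈ S.erase t, xs i)
    -- the returned generalized flow
    (f' : V × V → ℝ)
    (hf' : ∀ a : V × V, f' a = if a ∈ Et then x a * μ a.1 else 0) :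
    (∀ i ∈ S, i ≠ t → 0 ≤ excess E γ b f' i) ∧
    (∀ M : ℝ, 0 ≤ M → (∀ j ∈ S, j ≠ t → |b j / μ j| ≤ M) →
        ∀ i ∈ S, excess E γ b f' i / μ i ≤ (Fintype.card V : ℝ) * M) := by
  classical
  have hEtE : Et ⊆ E := by rw [hEt]; exact Finset.filter_subset _ _
  have hEtprop : ∀ a ∈ Et, a.1 ∈ S ∧ a.2 ∈ S ∧ γ a * μ a.1 = μ a.2 := by
    intro a ha; rw [hEt] at ha; exact (Finset.mem_filter.mp ha).2
  -- the excess of f' in terms of x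
  have hExc : ∀ i ∈ S, excess E γ b f' i
      = μ i * ((∑ a ∈ Et.filter (fun a => a.2 = i), x a)
          - (∑ a ∈ Et.filter (fun a => a.1 = i), x a)) - b i := by
    intro i hiS
    unfold excess
    have h1 : (∑ a ∈ E.filter (fun a => a.2 = i), γ a * f' a)
        = (∑ a ∈ Et.filter (fun a => a.2 = i), x a) * μ i := by
      have step : ∀ a ∈ E.filter (fun a => a.2 = i),
          γ a * f' a = if a ∈ Et then x a * μ i else 0 := by
        intro a ha
        rw [hf' a]
        split_ifs with hEta
        · obtain ⟨_, _, h3⟩ := hEtprop a hEta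
          have ha2 : a.2 = i := (Finset.mem_filter.mp ha).2
          calc γ a * (x a * μ a.1) = x a * (γ a * μ a.1) := by ring
            _ = x a * μ a.2 := by rw [h3]
            _ = x a * μ i := by rw [ha2]
        · ring
      rw [Finset.sum_congr rfl step, ← Finset.sum_filter]
      have hset : (E.filter (fun a => a.2 = i)).filter (fun a => a ∈ Et)
          = Et.filter (fun a => a.2 = i) := by
        ext a
        simp only [Finset.mem_filter]
        constructor
        · rintro ⟨⟨_, h2⟩, hEta⟩; exact ⟨hEta, h2⟩
        · rintro ⟨hEta, h2⟩; exact ⟨⟨hEtE hEta, h2⟩, hEta⟩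
      rw [hset, ← Finset.sum_mul]
    have h2 : (∑ a ∈ E.filter (fun a => a.1 = i), f' a)
        = (∑ a ∈ Et.filter (fun a => a.1 = i), x a) * μ i := by
      have step : ∀ a ∈ E.filter (fun a => a.1 = i),
          f' a = if a ∈ Et then x a * μ i else 0 := by
        intro a ha
        rw [hf' a]
        split_ifs with hEta
        · have ha1 : a.1 = i := (Finset.mem_filter.mp ha).2
          rw [ha1]
        · rfl
      rw [Finset.sum_congr rfl step, ← Finset.sum_filter]
      have hset : (E.filter (fun a => a.1 = i)).filter (fun a => a ∈ Et)
          = Et.filter (fun a => a.1 = i) := by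
        ext a
        simp only [Finset.mem_filter]
        constructor
        · rintro ⟨⟨_, h2⟩, hEta⟩; exact ⟨hEta, h2⟩
        · rintro ⟨hEta, h2⟩; exact ⟨⟨hEtE hEta, h2⟩, hEta⟩
      rw [hset, ← Finset.sum_mul]
    rw [h1, h2]; ring
  constructor
  · -- Part 1: nonnegative excess
    intro i hiS hit
    rw [hExc i hiS]
    have hc := hconv i hiS hit
    have hμ := hμpos i hiS
    have hxsi := hxs i hiS hit
    have hio : (∑ a ∈ Et.filter (fun a => a.2 = i), x a)
        - (∑ a ∈ Et.filter (fun a => a.1 = i), x a) = -xs i := by linarith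
    rw [hio]
    have hdb : b i / μ i ≤ -xs i := by linarith
    have hble : b i ≤ -xs i * μ i := (div_le_iff₀ hμ).mp hdb
    have hcomm : μ i * (-xs i) = -xs i * μ i := mul_comm _ _
    linarith
  · -- Part 2: bound on relabeled excesses
    intro M hM hMb i hiS
    have hxsM : ∀ j ∈ S.erase t, xs j ≤ M := by
      intro j hj
      obtain ⟨hjt, hjS⟩ := Finset.mem_erase.mp hj
      have h1 := hxs j hjS hjt
      have h2 := hMb j hjS hjt
      have h3 := neg_le_abs (b j / μ j)
      linarith
    by_cases hit : i = t
    · -- bound at the sink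
      subst hit
      rw [hExc i htS, hμt, hbt]
      simp only [one_mul, sub_zero, div_one]
      have hsum : (∑ j ∈ S.erase i, xs j)
          = (∑ a ∈ Et.filter (fun a => a.2 = i), x a)
            - (∑ a ∈ Et.filter (fun a => a.1 = i), x a) := by
        have h1 : ∀ j ∈ S.erase i, xs j
            = (∑ a ∈ Et.filter (fun a => a.1 = j), x a)
              - (∑ a ∈ Et.filter (fun a => a.2 = j), x a) := by
          intro j hj
          obtain ⟨hjt, hjS⟩ := Finset.mem_erase.mp hj
          have := hconv j hjS hjt
          linarith
        rw [Finset.sum_congr rfl h1, Finset.sum_sub_distrib,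
          Finset.sum_fiberwise_eq_sum_filter, Finset.sum_fiberwise_eq_sum_filter]
        have hL : Et.filter (fun a => a.1 ∈ S.erase i)
            = Et.filter (fun a => ¬ a.1 = i) := by
          ext a
          simp only [Finset.mem_filter, Finset.mem_erase]
          constructor
          · rintro ⟨ha, hne, _⟩; exact ⟨ha, hne⟩
          · rintro ⟨ha, hne⟩; exact ⟨ha, hne, (hEtprop a ha).1⟩
        have hR : Et.filter (fun a => a.2 ∈ S.erase i)
            = Et.filter (fun a => ¬ a.2 = i) := by
          ext a
          simp only [Finset.mem_filter, Finset.mem_erase]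
          constructor
          · rintro ⟨ha, hne, _⟩; exact ⟨ha, hne⟩
          · rintro ⟨ha, hne⟩; exact ⟨ha, hne, (hEtprop a ha).2.1⟩
        rw [hL, hR]
        have h2 := Finset.sum_filter_add_sum_filter_not Et (fun a => a.1 = i) x
        have h3 := Finset.sum_filter_add_sum_filter_not Et (fun a => a.2 = i) x
        linarith
      rw [← hsum]
      calc (∑ j ∈ S.erase i, xs j) ≤ ∑ j ∈ S.erase i, M :=
            Finset.sum_le_sum (fun j hj => hxsM j hj)
        _ = ((S.erase i).card : ℝ) * M := by rw [Finset.sum_const, nsmul_eq_mul]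
        _ ≤ (Fintype.card V : ℝ) * M := by
            apply mul_le_mul_of_nonneg_right _ hM
            exact_mod_cast Finset.card_le_univ _
    · -- bound at other nodes
      have hμ := hμpos i hiS
      have hc := hconv i hiS hit
      rw [hExc i hiS]
      have hio : (∑ a ∈ Et.filter (fun a => a.2 = i), x a)
          - (∑ a ∈ Et.filter (fun a => a.1 = i), x a) = -xs i := by linarith
      rw [hio]
      have hform : (μ i * (-xs i) - b i) / μ i = -xs i - b i / μ i := by
        field_simp
      rw [hform]
      have hb : -(b i / μ i) ≤ M := by
        have h2 := hMb i hiS hit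
        have h3 := neg_abs_le (b i / μ i)
        linarith
      by_cases hsl : xs i < -(b i / μ i)
      · -- strict slack: use the cut argument
        set rel : V → V → Prop :=
          fun u v => (u,v) ∈ Et ∨ ((v,u) ∈ Et ∧ 0 < x (v,u)) with hreldef
        have hnotreach : ¬ Relation.ReflTransGen rel i t :=
          no_reach Et b t S μ x xs hx0 hxsupp hxs hconv hmax i hiS hit hsl
        set Z : Finset V :=
          Finset.univ.filter (fun v => Relation.ReflTransGen rel i v) with hZdef
        have hiZ : i ∈ Z := by
          rw [hZdef, Finset.mem_filter]
          exact ⟨Finset.mem_univ _, Relation.ReflTransGen.refl⟩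
        have hZmem : ∀ v, v ∈ Z ↔ Relation.ReflTransGen rel i v := by
          intro v
          rw [hZdef, Finset.mem_filter]
          exact ⟨fun h => h.2, fun h => ⟨Finset.mem_univ _, h⟩⟩
        have hZclosed : ∀ u v, u ∈ Z → rel u v → v ∈ Z := by
          intro u v hu hrel
          rw [hZmem] at hu ⊢
          exact hu.tail hrel
        have htZ : t ∉ Z := fun h => hnotreach ((hZmem t).mp h)
        have hZS : ∀ v ∈ Z, v ∈ S := by
          intro v hv
          rw [hZmem] at hv
          induction hv with
          | refl => exact hiS
          | tail _ hstep ih =>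
              rcases hstep with h | ⟨h, _⟩
              · exact (hEtprop _ h).2.1
              · exact (hEtprop _ h).1
        have hZerase : ∀ v ∈ Z, v ∈ S.erase t := by
          intro v hv
          exact Finset.mem_erase.mpr ⟨fun h => htZ (h ▸ hv), hZS v hv⟩
        -- the total source flow into Z vanishes
        have hsumZ : (∑ j ∈ Z, xs j)
            = (∑ a ∈ Et.filter (fun a => a.1 ∈ Z), x a)
              - (∑ a ∈ Et.filter (fun a => a.2 ∈ Z), x a) := by
          have h1 : ∀ j ∈ Z, xs j
              = (∑ a ∈ Et.filter (fun a => a.1 = j), x a)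
                - (∑ a ∈ Et.filter (fun a => a.2 = j), x a) := by
            intro j hj
            obtain ⟨hjt, hjS⟩ := Finset.mem_erase.mp (hZerase j hj)
            have := hconv j hjS hjt
            linarith
          rw [Finset.sum_congr rfl h1, Finset.sum_sub_distrib,
            Finset.sum_fiberwise_eq_sum_filter, Finset.sum_fiberwise_eq_sum_filter]
        have hzero : (∑ j ∈ Z, xs j) = 0 := by
          rw [hsumZ]
          have hsub : Et.filter (fun a => a.1 ∈ Z) ⊆ Et.filter (fun a => a.2 ∈ Z) := by
            intro a ha
            rw [Finset.mem_filter] at ha ⊢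
            refine ⟨ha.1, hZclosed a.1 a.2 ha.2 (Or.inl ?_)⟩
            rw [Prod.mk.eta]
            exact ha.1
          have hvanish : ∀ a ∈ Et.filter (fun a => a.2 ∈ Z),
              a ∉ Et.filter (fun a => a.1 ∈ Z) → x a = 0 := by
            intro a ha hna
            rw [Finset.mem_filter] at ha hna
            by_contra hx
            have hxpos : 0 < x a := lt_of_le_of_ne (hx0 a ha.1) (Ne.symm hx)
            have h1Z : a.1 ∈ Z := by
              apply hZclosed a.2 a.1 ha.2
              right
              rw [Prod.mk.eta]
              exact ⟨ha.1, hxpos⟩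
            exact (hna ⟨ha.1, h1Z⟩).elim
          have heq := Finset.sum_subset hsub hvanish
          linarith
        have herase := Finset.add_sum_erase Z xs hiZ
        have hbound : (∑ j ∈ Z.erase i, xs j) ≤ ((Z.erase i).card : ℝ) * M := by
          calc (∑ j ∈ Z.erase i, xs j) ≤ ∑ j ∈ Z.erase i, M :=
                Finset.sum_le_sum (fun j hj =>
                  hxsM j (hZerase j (Finset.mem_of_mem_erase hj)))
            _ = ((Z.erase i).card : ℝ) * M := by rw [Finset.sum_const, nsmul_eq_mul]
        have hcard : ((Z.erase i).card : ℝ) + 1 ≤ (Fintype.card V : ℝ) := by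
          have h1 : (Z.erase i).card + 1 = Z.card := Finset.card_erase_add_one hiZ
          have h2 : Z.card ≤ Fintype.card V := Finset.card_le_univ _
          exact_mod_cast h1 ▸ h2
        have h5 : ((Z.erase i).card : ℝ) * M + M ≤ (Fintype.card V : ℝ) * M := by
          nlinarith
        linarith
      · -- no slack: the relabeled excess is zero
        push_neg at hsl
        have hx := hxs i hiS hit
        have h0 : 0 ≤ (Fintype.card V : ℝ) * M :=
          mul_nonneg (Nat.cast_nonneg _) hM
        linarith
end
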